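/- arXiv:2007.08387 — 4 statements merged into one kernel-verified Lean document; each statement's English description precedes it below -/
import Mathlib

section
/- In every finite parity game, for every node v exactly one of the two players has a winning strategy from v (this player is the winner b(v) of the game started at v); moreover, the winning player has a memoryless winning strategy from v. -/
/-!
A (finite) parity game: a finite nonempty node set `V`, an edge relation
`E : V → V → Prop` in which every node has a successor, an owner function
`a : V → ℤ` with values in `{-1, +1}`, and a priority function `p : V → ℕ`.
-/

/-- `f : ℕ → V` is a play from `v`: it starts at `v` and follows edges. -/
def IsPlay {V : Type*} (E : V → V → Prop) (v : V) (f : ℕ → V) : Prop :=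
  f 0 = v ∧ ∀ t, E (f t) (f (t + 1))

/-- A strategy for player `i`: given the past history and the current node owned
by `i`, it prescribes a successor of the current node. -/
def IsStrategy {V : Type*} (E : V → V → Prop) (a : V → ℤ) (i : ℤ)
    (σ : List V → V → V) : Prop :=
  ∀ h w, a w = i → E w (σ h w)

/-- A play is consistent with the strategy `σ` of player `i` if every move out of
a node owned by `i` is the one prescribed by `σ` (applied to the strict past
history and the current node). -/
def ConsistentPlay {V : Type*} (a : V → ℤ) (i : ℤ) (σ : List V → V → V)
    (f : ℕ → V) : Prop :=
  ∀ t, a (f t) = i → f (t + 1) = σ (List.ofFn fun j : Fin t => f j) (f t)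

/-- The `limsup` as `t → ∞` of the priorities seen along a play. -/
noncomputable def playLimsup {V : Type*} (p : V → ℕ) (f : ℕ → V) : ℕ :=
  Filter.atTop.limsup fun t => p (f t)

/-- Player `+1` wins a play if the limsup of the priorities is odd;
player `-1` wins otherwise (i.e. if it is even). -/
def WinsPlay {V : Type*} (p : V → ℕ) (i : ℤ) (f : ℕ → V) : Prop :=
  if i = 1 then Odd (playLimsup p f) else Even (playLimsup p f)

/-- Player `i` has a winning strategy from `v`: some strategy of `i` wins every
play from `v` consistent with it. -/
def WinningFrom {V : Type*} (E : V → V → Prop) (a : V → ℤ) (p : V → ℕ)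
    (i : ℤ) (v : V) : Prop :=
  ∃ σ : List V → V → V, IsStrategy E a i σ ∧
    ∀ f : ℕ → V, IsPlay E v f → ConsistentPlay a i σ f → WinsPlay p i f

/-- Player `i` has a memoryless winning strategy from `v`: a function `σ : V → V`
choosing a successor at every node owned by `i`, winning every play from `v` in
which every move from a node owned by `i` follows `σ`. -/
def MemorylessWinningFrom {V : Type*} (E : V → V → Prop) (a : V → ℤ) (p : V → ℕ)
    (i : ℤ) (v : V) : Prop :=
  ∃ σ : V → V, (∀ w, a w = i → E w (σ w)) ∧
    ∀ f : ℕ → V, IsPlay E v f → (∀ t, a (f t) = i → f (t + 1) = σ (f t)) →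
      WinsPlay p i f


lemma natLimsup_shift (g : ℕ → ℕ) (k : ℕ) :
    Filter.atTop.limsup (fun t => g (t + k)) = Filter.atTop.limsup g := by
  rw [Filter.limsup_eq, Filter.limsup_eq]
  congr 1
  ext x
  simp only [Set.mem_setOf_eq, Filter.eventually_atTop]
  constructor
  · rintro ⟨T, hT⟩
    refine ⟨T + k, fun n hn => ?_⟩
    have := hT (n - k) (by omega)
    rwa [Nat.sub_add_cancel (by omega : k ≤ n)] at this
  · rintro ⟨T, hT⟩
    exact ⟨T, fun n hn => hT (n + k) (by omega)⟩

lemma natLimsup_eq_of (g : ℕ → ℕ) (d : ℕ) (hub : ∀ t, g t ≤ d)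
    (hfreq : ∀ T, ∃ t, T ≤ t ∧ g t = d) :
    Filter.atTop.limsup g = d := by
  have hb : Filter.IsBoundedUnder (· ≤ ·) Filter.atTop g :=
    ⟨d, Filter.eventually_map.mpr (by filter_upwards with t using hub t)⟩
  apply le_antisymm
  · exact Filter.limsup_le_of_le (by isBoundedDefault) (by filter_upwards with t using hub t)
  · apply Filter.le_limsup_of_frequently_le ?_ hb
    rw [Filter.frequently_atTop]
    intro T
    obtain ⟨t, ht, hgt⟩ := hfreq T
    exact ⟨t, ht, hgt.ge⟩

lemma winsPlay_shift {V : Type*} (p : V → ℕ) (i : ℤ) (f : ℕ → V) (k : ℕ) :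
    WinsPlay p i (fun t => f (t + k)) ↔ WinsPlay p i f := by
  unfold WinsPlay playLimsup
  rw [natLimsup_shift (fun t => p (f t)) k]



section Attractor

variable {V : Type*} (E : V → V → Prop) (a : V → ℤ) (S : Finset V) (i : ℤ) (N : Finset V)

open Classical in
/-- Iterated attractor construction for player `i` towards target `N` inside arena `S`. -/
noncomputable def attrN : ℕ → Finset V
  | 0 => ∅
  | n + 1 =>
      attrN n ∪ S.filter (fun v => v ∈ N ∨
        (a v = i ∧ ∃ w ∈ attrN n, E v w) ∨
        (a v ≠ i ∧ ∀ w ∈ S, E v w → w ∈ attrN n))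

/-- Membership in the attractor. -/
def InAttr (v : V) : Prop := ∃ n, v ∈ attrN E a S i N n

lemma attrN_subset : ∀ n, attrN E a S i N n ⊆ S
  | 0 => by simp [attrN]
  | n + 1 => by
      classical
      simp only [attrN]
      exact Finset.union_subset (attrN_subset n) (Finset.filter_subset _ _)

lemma attrN_succ_subset (n : ℕ) : attrN E a S i N n ⊆ attrN E a S i N (n + 1) := by
  classical
  simp only [attrN]
  exact Finset.subset_union_left

lemma attrN_mono : ∀ {n m : ℕ}, n ≤ m → attrN E a S i N n ⊆ attrN E a S i N m := by
  intro n m h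
  induction h with
  | refl => exact Finset.Subset.refl _
  | step h ih => exact ih.trans (attrN_succ_subset E a S i N _)

lemma InAttr.mem_arena {v : V} (h : InAttr E a S i N v) : v ∈ S := by
  obtain ⟨n, hn⟩ := h
  exact attrN_subset E a S i N n hn

lemma inAttr_of_mem_target (hNS : N ⊆ S) {v : V} (hv : v ∈ N) : InAttr E a S i N v := by
  classical
  exact ⟨1, by simp [attrN, Finset.mem_filter, hNS hv, hv]⟩

lemma inAttr_own {v w : V} (hv : v ∈ S) (hav : a v = i) (hvw : E v w)
    (hw : InAttr E a S i N w) : InAttr E a S i N v := by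
  classical
  obtain ⟨n, hn⟩ := hw
  exact ⟨n + 1, by
    simp only [attrN, Finset.mem_union, Finset.mem_filter]
    exact Or.inr ⟨hv, Or.inr (Or.inl ⟨hav, w, hn, hvw⟩)⟩⟩

lemma inAttr_opp {v : V} (hv : v ∈ S) (hav : a v ≠ i)
    (h : ∀ w ∈ S, E v w → InAttr E a S i N w) : InAttr E a S i N v := by
  classical
  set T := S.filter (fun w => E v w) with hT
  have hTA : ∀ w ∈ T, ∃ n, w ∈ attrN E a S i N n := by
    intro w hw
    rw [hT, Finset.mem_filter] at hw
    exact h w hw.1 hw.2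
  set n := T.sup (fun w => if hw : InAttr E a S i N w then Nat.find hw else 0) with hn
  have hTn : ∀ w ∈ T, w ∈ attrN E a S i N n := by
    intro w hw
    have hIA : InAttr E a S i N w := hTA w hw
    refine attrN_mono E a S i N ?_ (Nat.find_spec hIA)
    have hle := Finset.le_sup (s := T)
      (f := fun w => if hw : InAttr E a S i N w then Nat.find hw else 0) hw
    simp only [dif_pos hIA] at hle
    exact hn ▸ hle
  refine ⟨n + 1, ?_⟩
  simp only [attrN, Finset.mem_union, Finset.mem_filter]
  refine Or.inr ⟨hv, Or.inr (Or.inr ⟨hav, fun w hw hvw => hTn w ?_⟩)⟩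
  rw [hT, Finset.mem_filter]; exact ⟨hw, hvw⟩

open Classical in
/-- Rank of a node in the attractor. -/
noncomputable def attrRk (v : V) : ℕ :=
  if h : InAttr E a S i N v then Nat.find h else 0

lemma attrRk_spec {v : V} (h : InAttr E a S i N v) :
    v ∈ attrN E a S i N (attrRk E a S i N v) := by
  classical
  rw [attrRk, dif_pos h]
  exact Nat.find_spec h

lemma attrRk_le {v : V} {n : ℕ} (h : v ∈ attrN E a S i N n) : attrRk E a S i N v ≤ n := by
  classical
  have hIA : InAttr E a S i N v := ⟨n, h⟩
  rw [attrRk, dif_pos hIA]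
  exact Nat.find_le h

lemma attrRk_pos {v : V} (h : InAttr E a S i N v) : 1 ≤ attrRk E a S i N v := by
  by_contra hn
  have h0 : attrRk E a S i N v = 0 := by omega
  have := attrRk_spec E a S i N h
  rw [h0] at this
  simp [attrN] at this

lemma attrN_step {v : V} {n : ℕ} (h : v ∈ attrN E a S i N (n + 1))
    (hn : v ∉ attrN E a S i N n) (hN : v ∉ N) :
    (a v = i → ∃ w ∈ attrN E a S i N n, E v w) ∧
    (a v ≠ i → ∀ w ∈ S, E v w → w ∈ attrN E a S i N n) := by
  classical
  simp only [attrN, Finset.mem_union, Finset.mem_filter] at h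
  rcases h with h | ⟨hvS, h⟩
  · exact absurd h hn
  rcases h with h | ⟨hav, w, hw, hvw⟩ | ⟨hav, hall⟩
  · exact absurd h hN
  · exact ⟨fun _ => ⟨w, hw, hvw⟩, fun h' => absurd hav h'⟩
  · exact ⟨fun h' => absurd h' hav, fun _ => hall⟩

open Classical in
/-- Attractor strategy. -/
noncomputable def attrStrat : V → V := fun v =>
  if h : ∃ w, E v w ∧ InAttr E a S i N w ∧ attrRk E a S i N w < attrRk E a S i N v
  then h.choose else v

lemma attrStrat_spec {v : V} (hv : InAttr E a S i N v) (hvN : v ∉ N) (hav : a v = i) :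
    E v (attrStrat E a S i N v) ∧ InAttr E a S i N (attrStrat E a S i N v) ∧
      attrRk E a S i N (attrStrat E a S i N v) < attrRk E a S i N v := by
  classical
  have h1 : 1 ≤ attrRk E a S i N v := attrRk_pos E a S i N hv
  have hspec := attrRk_spec E a S i N hv
  obtain ⟨m, hm⟩ : ∃ m, attrRk E a S i N v = m + 1 := ⟨attrRk E a S i N v - 1, by omega⟩
  rw [hm] at hspec
  have hnm : v ∉ attrN E a S i N m := by
    intro hmem
    have := attrRk_le E a S i N hmem
    omega
  obtain ⟨w, hw, hvw⟩ := (attrN_step E a S i N hspec hnm hvN).1 hav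
  have hcond : ∃ w, E v w ∧ InAttr E a S i N w ∧ attrRk E a S i N w < attrRk E a S i N v := by
    refine ⟨w, hvw, ⟨m, hw⟩, ?_⟩
    have := attrRk_le E a S i N hw
    omega
  rw [attrStrat, dif_pos hcond]
  exact hcond.choose_spec

/-- Key attractor lemma: a play starting in the attractor, staying in `S`, and
following the attractor strategy at attractor nodes owned by `i`, reaches `N`. -/
lemma attr_reach (f : ℕ → V) (hfS : ∀ t, f t ∈ S) (hfE : ∀ t, E (f t) (f (t + 1)))
    (hfC : ∀ t, InAttr E a S i N (f t) → f t ∉ N → a (f t) = i →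
      f (t + 1) = attrStrat E a S i N (f t))
    (h0 : InAttr E a S i N (f 0)) : ∃ t, f t ∈ N := by
  suffices H : ∀ m (f : ℕ → V), attrRk E a S i N (f 0) ≤ m → (∀ t, f t ∈ S) →
      (∀ t, E (f t) (f (t + 1))) →
      (∀ t, InAttr E a S i N (f t) → f t ∉ N → a (f t) = i →
        f (t + 1) = attrStrat E a S i N (f t)) →
      InAttr E a S i N (f 0) → ∃ t, f t ∈ N by
    exact H (attrRk E a S i N (f 0)) f le_rfl hfS hfE hfC h0
  intro m
  induction m with
  | zero =>
      intro f hrk hfS hfE hfC h0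
      by_cases hN : f 0 ∈ N
      · exact ⟨0, hN⟩
      · have := attrRk_pos E a S i N h0
        omega
  | succ m ih =>
      intro f hrk hfS hfE hfC h0
      by_cases hN : f 0 ∈ N
      · exact ⟨0, hN⟩
      have hstep : InAttr E a S i N (f 1) ∧ attrRk E a S i N (f 1) ≤ m := by
        have h1 : 1 ≤ attrRk E a S i N (f 0) := attrRk_pos E a S i N h0
        have hspec := attrRk_spec E a S i N h0
        obtain ⟨k, hk⟩ : ∃ k, attrRk E a S i N (f 0) = k + 1 :=
          ⟨attrRk E a S i N (f 0) - 1, by omega⟩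
        rw [hk] at hspec
        have hnk : f 0 ∉ attrN E a S i N k := by
          intro hmem; have := attrRk_le E a S i N hmem; omega
        by_cases hai : a (f 0) = i
        · have h1' := hfC 0 h0 hN hai
          simp only [Nat.zero_add] at h1'
          have := attrStrat_spec E a S i N h0 hN hai
          rw [← h1'] at this
          exact ⟨this.2.1, by omega⟩
        · have hall := (attrN_step E a S i N hspec hnk hN).2 hai
          have hf1 : f 1 ∈ attrN E a S i N k := hall (f 1) (hfS 1) (hfE 0)
          have := attrRk_le E a S i N hf1
          exact ⟨⟨k, hf1⟩, by omega⟩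
      obtain ⟨t, ht⟩ := ih (fun s => f (s + 1)) hstep.2 (fun t => hfS (t + 1))
        (fun t => hfE (t + 1)) (fun t => hfC (t + 1)) hstep.1
      exact ⟨t + 1, ht⟩

end Attractor

section Game

variable {V : Type*} (E : V → V → Prop) (a : V → ℤ) (p : V → ℕ)

/-- A play confined to the arena `S`. -/
def PlayIn (S : Finset V) (f : ℕ → V) : Prop :=
  (∀ t, f t ∈ S) ∧ ∀ t, E (f t) (f (t + 1))

/-- Positional consistency. -/
def PCons (i : ℤ) (σ : V → V) (f : ℕ → V) : Prop :=
  ∀ t, a (f t) = i → f (t + 1) = σ (f t)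

/-- A positional strategy valid on `S` for player `i`. -/
def PValid (S : Finset V) (i : ℤ) (σ : V → V) : Prop :=
  ∀ w ∈ S, a w = i → E w (σ w) ∧ σ w ∈ S

/-- The positional strategy `σ` wins for `i` all plays from `v` confined to `S`. -/
def PWins (S : Finset V) (i : ℤ) (σ : V → V) (v : V) : Prop :=
  ∀ f, f 0 = v → PlayIn E S f → PCons a i σ f → WinsPlay p i f

lemma PWins.step {S : Finset V} {i : ℤ} {σ : V → V} {u w : V}
    (hu : PWins E a p S i σ u) (huS : u ∈ S) (hw : E u w) (hwS : w ∈ S)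
    (hcons : a u = i → w = σ u) : PWins E a p S i σ w := by
  intro g hg0 hgS hgC
  set f : ℕ → V := fun t => Nat.rec u (fun s _ => g s) t with hf
  have hf0 : f 0 = u := rfl
  have hfs : ∀ t, f (t + 1) = g t := fun t => rfl
  have hfplay : PlayIn E S f := by
    constructor
    · intro t
      cases t with
      | zero => exact huS
      | succ s => rw [hfs]; exact hgS.1 s
    · intro t
      cases t with
      | zero => rw [hf0, hfs, hg0]; exact hw
      | succ s => rw [hfs, hfs]; exact hgS.2 s
  have hfcons : PCons a i σ f := by
    intro t hat
    cases t with
    | zero => rw [hfs, hg0, hf0]; rw [hf0] at hat; exact hcons hat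
    | succ s => rw [hfs, hfs]; exact hgC s (by rwa [hfs] at hat)
  have hwin : WinsPlay p i f := hu f hf0 hfplay hfcons
  have : g = fun t => f (t + 1) := rfl
  rw [this]
  exact (winsPlay_shift p i f 1).mpr hwin

end Game

section Zielonka

variable {V : Type*} [Fintype V] [DecidableEq V]

lemma pack (E : V → V → Prop) (a : V → ℤ) (p : V → ℕ) (S : Finset V) (i : ℤ)
    (hi : i = 1 ∨ i = -1) (Wi Wo : Finset V) (σi σo : V → V) (hU : Wi ∪ Wo = S)
    (h1 : PValid E a S i σi ∧ ∀ v ∈ Wi, PWins E a p S i σi v)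
    (h2 : PValid E a S (-i) σo ∧ ∀ v ∈ Wo, PWins E a p S (-i) σo v) :
    ∃ (W : ℤ → Finset V) (σ : ℤ → V → V), W 1 ∪ W (-1) = S ∧
      ∀ j, (j = 1 ∨ j = -1) →
        PValid E a S j (σ j) ∧ ∀ v ∈ W j, PWins E a p S j (σ j) v := by
  classical
  refine ⟨fun j => if j = i then Wi else Wo, fun j => if j = i then σi else σo, ?_, ?_⟩
  · rcases hi with rfl | rfl
    · show (if (1 : ℤ) = 1 then Wi else Wo) ∪ (if (-1 : ℤ) = 1 then Wi else Wo) = S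
      rw [if_pos rfl, if_neg (by decide : ¬ (-1 : ℤ) = 1)]; exact hU
    · show (if (1 : ℤ) = -1 then Wi else Wo) ∪ (if (-1 : ℤ) = -1 then Wi else Wo) = S
      rw [if_neg (by decide : ¬ (1 : ℤ) = -1), if_pos rfl, Finset.union_comm]; exact hU
  · intro j hj
    by_cases hji : j = i
    · subst hji; simp only [if_pos rfl]; exact h1
    · have hjo : j = -i := by rcases hi with rfl | rfl <;> rcases hj with rfl | rfl <;> omega
      subst hjo
      simp only [if_neg hji]
      exact h2

theorem zielonka (E : V → V → Prop) (a : V → ℤ) (p : V → ℕ)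
    (hE : ∀ v, ∃ w, E v w) (ha : ∀ v, a v = 1 ∨ a v = -1) :
    ∀ (n : ℕ) (S : Finset V), S.card ≤ n → (∀ v ∈ S, ∃ w ∈ S, E v w) →
    ∃ (W : ℤ → Finset V) (σ : ℤ → V → V), W 1 ∪ W (-1) = S ∧
      ∀ j, (j = 1 ∨ j = -1) →
        PValid E a S j (σ j) ∧ ∀ v ∈ W j, PWins E a p S j (σ j) v := by
  classical
  intro n
  induction n with
  | zero =>
      intro S hcard hSub
      have hS : S = ∅ := Finset.card_eq_zero.mp (Nat.le_zero.mp hcard)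
      subst hS
      exact ⟨fun _ => ∅, fun _ => id, by simp, fun j _ => ⟨fun w hw => by simp at hw,
        fun v hv => by simp at hv⟩⟩
  | succ n IH =>
      intro S hcard hSub
      rcases S.eq_empty_or_nonempty with rfl | hSne
      · exact ⟨fun _ => ∅, fun _ => id, by simp, fun j _ => ⟨fun w hw => by simp at hw,
          fun v hv => by simp at hv⟩⟩
      -- default strategy
      set df : V → V := fun v => if h : ∃ w, w ∈ S ∧ E v w then h.choose else (hE v).choose
        with hdfdef
      have hdf : ∀ v ∈ S, E v (df v) ∧ df v ∈ S := by
        intro v hv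
        obtain ⟨w, hwS, hvw⟩ := hSub v hv
        have hex : ∃ w, w ∈ S ∧ E v w := ⟨w, hwS, hvw⟩
        simp only [hdfdef, dif_pos hex]
        exact ⟨hex.choose_spec.2, hex.choose_spec.1⟩
      -- top priority
      set d := S.sup' hSne p with hd
      obtain ⟨n₀, hn₀S, hn₀d⟩ := S.exists_mem_eq_sup' hSne p
      set i := if Odd d then (1 : ℤ) else -1 with hidef
      have hi : i = 1 ∨ i = -1 := by by_cases h : Odd d <;> simp [hidef, h]
      have hiodd : i = 1 ↔ Odd d := by
        by_cases h : Odd d <;> simp [hidef, h]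
      have hoppi : -i = 1 ∨ -i = -1 := by rcases hi with h | h <;> omega
      have hne : i ≠ -i := by rcases hi with h | h <;> omega
      have haio : ∀ v, a v ≠ i → a v = -i := by
        intro v hv; rcases hi with h | h <;> rcases ha v with h2 | h2 <;> omega
      have haoi : ∀ v, a v ≠ -i → a v = i := by
        intro v hv; rcases hi with h | h <;> rcases ha v with h2 | h2 <;> omega
      -- target set
      set N := S.filter (fun v => p v = d) with hNdef
      have hNS : N ⊆ S := Finset.filter_subset _ _
      have hn₀N : n₀ ∈ N := Finset.mem_filter.mpr ⟨hn₀S, hn₀d.symm⟩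
      have hpled : ∀ v ∈ S, p v ≤ d := fun v hv => Finset.le_sup' p hv
      have hNd : ∀ v ∈ N, p v = d := fun v hv => (Finset.mem_filter.mp hv).2
      have hNA : ∀ v ∈ N, InAttr E a S i N v := fun v hv =>
        inAttr_of_mem_target E a S i N hNS hv
      -- subarena S'
      set S' := S.filter (fun v => ¬ InAttr E a S i N v) with hS'def
      have hS'mem : ∀ v, v ∈ S' ↔ v ∈ S ∧ ¬ InAttr E a S i N v := by
        intro v; rw [hS'def, Finset.mem_filter]
      have hS'S : S' ⊆ S := Finset.filter_subset _ _
      have hS'card : S'.card ≤ n := by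
        have hssub : S' ⊂ S := by
          refine ⟨hS'S, fun hsub => ?_⟩
          exact ((hS'mem n₀).mp (hsub hn₀S)).2 (hNA n₀ hn₀N)
        have := Finset.card_lt_card hssub
        omega
      have htrapS' : ∀ u ∈ S', a u = i → ∀ w ∈ S, E u w → w ∈ S' := by
        intro u hu hau w hwS huw
        obtain ⟨huS, huA⟩ := (hS'mem u).mp hu
        exact (hS'mem w).mpr ⟨hwS, fun hw => huA (inAttr_own E a S i N huS hau huw hw)⟩
      have hSubS' : ∀ v ∈ S', ∃ w ∈ S', E v w := by
        intro v hv
        obtain ⟨hvS, hvA⟩ := (hS'mem v).mp hv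
        by_cases hav : a v = i
        · obtain ⟨w, hwS, hvw⟩ := hSub v hvS
          exact ⟨w, htrapS' v hv hav w hwS hvw, hvw⟩
        · by_contra hcon
          push_neg at hcon
          refine hvA (inAttr_opp E a S i N hvS hav ?_)
          intro w hwS hvw
          by_contra hw
          exact hcon w ((hS'mem w).mpr ⟨hwS, hw⟩) hvw
      obtain ⟨W', σ', hW'U, hW'⟩ := IH S' hS'card hSubS'
      obtain ⟨hval'i, hwin'i⟩ := hW' i hi
      obtain ⟨hval'o, hwin'o⟩ := hW' (-i) hoppi
      -- the set where σ' (-i) wins in S'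
      set Win := S'.filter (fun v => PWins E a p S' (-i) (σ' (-i)) v) with hWindef
      have hWinmem : ∀ v, v ∈ Win ↔ v ∈ S' ∧ PWins E a p S' (-i) (σ' (-i)) v := by
        intro v; rw [hWindef, Finset.mem_filter]
      have hWinS' : Win ⊆ S' := Finset.filter_subset _ _
      have hWinS : Win ⊆ S := hWinS'.trans hS'S
      have hW'oWin : W' (-i) ⊆ Win := by
        intro v hv
        have hvS' : v ∈ S' := by
          rw [← hW'U]
          rcases hi with h | h
          · rw [h] at hv; exact Finset.mem_union_right _ hv
          · rw [h, neg_neg] at hv; exact Finset.mem_union_left _ hv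
        exact (hWinmem v).mpr ⟨hvS', hwin'o v hv⟩
      have hWinStep : ∀ u ∈ Win, ∀ w, E u w → w ∈ S' → (a u = -i → w = σ' (-i) u) →
          w ∈ Win := by
        intro u hu w huw hwS' hc
        obtain ⟨huS', hup⟩ := (hWinmem u).mp hu
        exact (hWinmem w).mpr ⟨hwS', PWins.step E a p hup huS' huw hwS' hc⟩
      by_cases hWinE : Win = ∅
      · -- CASE A : player i wins everywhere on S
        have hS'Wi : ∀ v ∈ S', v ∈ W' i := by
          intro v hv
          have hv2 : v ∈ W' 1 ∪ W' (-1) := by rw [hW'U]; exact hv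
          rcases hi with h1 | h1
          · rcases Finset.mem_union.mp hv2 with h | h
            · rwa [h1]
            · exfalso
              have : v ∈ Win := hW'oWin (by rw [h1]; exact h)
              rw [hWinE] at this
              simp at this
          · rcases Finset.mem_union.mp hv2 with h | h
            · exfalso
              have : v ∈ Win := hW'oWin (by rw [h1]; norm_num; exact h)
              rw [hWinE] at this
              simp at this
            · rwa [h1]
        set σi : V → V := fun v => if v ∈ N then df v
          else if InAttr E a S i N v then attrStrat E a S i N v else σ' i v with hσidef
        have hvalσi : PValid E a S i σi := by
          intro w hwS haw
          by_cases h1 : w ∈ N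
          · simp only [hσidef, if_pos h1]
            exact hdf w hwS
          by_cases h2 : InAttr E a S i N w
          · simp only [hσidef, if_neg h1, if_pos h2]
            obtain ⟨he, hA, _⟩ := attrStrat_spec E a S i N h2 h1 haw
            exact ⟨he, hA.mem_arena⟩
          · simp only [hσidef, if_neg h1, if_neg h2]
            have hwS' : w ∈ S' := (hS'mem w).mpr ⟨hwS, h2⟩
            obtain ⟨h3, h4⟩ := hval'i w hwS' haw
            exact ⟨h3, hS'S h4⟩
        have hwinσi : ∀ v ∈ S, PWins E a p S i σi v := by
          intro v hvS f hf0 hfP hfC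
          obtain ⟨hfS, hfE⟩ := hfP
          by_cases hA : ∀ T, ∃ t, T ≤ t ∧ InAttr E a S i N (f t)
          · -- attractor visited infinitely often : limsup = d
            have hNfreq : ∀ T, ∃ t, T ≤ t ∧ f t ∈ N := by
              intro T
              obtain ⟨t, hTt, hIA⟩ := hA T
              have hreach := attr_reach E a S i N (fun s => f (s + t))
                (fun s => hfS (s + t))
                (fun s => by
                  have h := hfE (s + t)
                  rwa [show s + t + 1 = s + 1 + t by omega] at h)
                (fun s hIA2 hN2 ha2 => by
                  have hc := hfC (s + t) ha2
                  show f (s + 1 + t) = _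
                  rw [show s + 1 + t = s + t + 1 by omega, hc]
                  simp only [hσidef, if_neg hN2, if_pos hIA2])
                (by simpa using hIA)
              obtain ⟨s, hs⟩ := hreach
              exact ⟨s + t, by omega, hs⟩
            have hlim : playLimsup p f = d := by
              apply natLimsup_eq_of _ d (fun t => hpled _ (hfS t))
              intro T
              obtain ⟨t, h1, h2⟩ := hNfreq T
              exact ⟨t, h1, hNd _ h2⟩
            unfold WinsPlay
            rw [hlim]
            by_cases hodd : Odd d
            · rw [if_pos (hiodd.mpr hodd)]; exact hodd
            · rw [if_neg (fun h => hodd (hiodd.mp h))]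
              exact Nat.not_odd_iff_even.mp hodd
          · -- eventually outside the attractor : tail stays in S'
            push_neg at hA
            obtain ⟨T, hT⟩ := hA
            have htail : ∀ s, f (s + T) ∈ S' :=
              fun s => (hS'mem _).mpr ⟨hfS _, hT _ (by omega)⟩
            have hnN : ∀ s, f (s + T) ∉ N :=
              fun s hmem => ((hS'mem _).mp (htail s)).2 (hNA _ hmem)
            have hwT : f T ∈ W' i := hS'Wi _ (by simpa using htail 0)
            have hwstail : WinsPlay p i (fun s => f (s + T)) := by
              apply hwin'i (f T) hwT _ (by simp)
              · exact ⟨htail, fun s => by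
                  have h := hfE (s + T)
                  rwa [show s + T + 1 = s + 1 + T by omega] at h⟩
              · intro s has
                have hc := hfC (s + T) has
                show f (s + 1 + T) = _
                rw [show s + 1 + T = s + T + 1 by omega, hc]
                have h2 : ¬ InAttr E a S i N (f (s + T)) := ((hS'mem _).mp (htail s)).2
                simp only [hσidef, if_neg (hnN s), if_neg h2]
            exact (winsPlay_shift p i f T).mp hwstail
        refine pack E a p S i hi S ∅ σi df (by simp) ⟨hvalσi, hwinσi⟩ ?_
        refine ⟨fun w hwS _ => hdf w hwS, fun v hv => by simp at hv⟩
      · -- CASE B : Win nonempty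
        obtain ⟨w₀, hw₀⟩ := Finset.nonempty_iff_ne_empty.mpr hWinE
        have hWinB : ∀ v ∈ Win, InAttr E a S (-i) Win v :=
          fun v hv => inAttr_of_mem_target E a S (-i) Win hWinS hv
        set B := S.filter (fun v => InAttr E a S (-i) Win v) with hBdef
        have hBmem : ∀ v, v ∈ B ↔ v ∈ S ∧ InAttr E a S (-i) Win v := by
          intro v; rw [hBdef, Finset.mem_filter]
        set S'' := S.filter (fun v => ¬ InAttr E a S (-i) Win v) with hS''def
        have hS''mem : ∀ v, v ∈ S'' ↔ v ∈ S ∧ ¬ InAttr E a S (-i) Win v := by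
          intro v; rw [hS''def, Finset.mem_filter]
        have hS''S : S'' ⊆ S := Finset.filter_subset _ _
        have hS''card : S''.card ≤ n := by
          have hssub : S'' ⊂ S := by
            refine ⟨hS''S, fun hsub => ?_⟩
            exact ((hS''mem w₀).mp (hsub (hWinS hw₀))).2 (hWinB w₀ hw₀)
          have := Finset.card_lt_card hssub
          omega
        have htrapS'' : ∀ u ∈ S'', a u = -i → ∀ w ∈ S, E u w → w ∈ S'' := by
          intro u hu hau w hwS huw
          obtain ⟨huS, huA⟩ := (hS''mem u).mp hu
          exact (hS''mem w).mpr ⟨hwS,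
            fun hw => huA (inAttr_own E a S (-i) Win huS hau huw hw)⟩
        have hSubS'' : ∀ v ∈ S'', ∃ w ∈ S'', E v w := by
          intro v hv
          obtain ⟨hvS, hvA⟩ := (hS''mem v).mp hv
          by_cases hav : a v = -i
          · obtain ⟨w, hwS, hvw⟩ := hSub v hvS
            exact ⟨w, htrapS'' v hv hav w hwS hvw, hvw⟩
          · by_contra hcon
            push_neg at hcon
            refine hvA (inAttr_opp E a S (-i) Win hvS hav ?_)
            intro w hwS hvw
            by_contra hw
            exact hcon w ((hS''mem w).mpr ⟨hwS, hw⟩) hvw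
        obtain ⟨W'', σ'', hW''U, hW''⟩ := IH S'' hS''card hSubS''
        obtain ⟨hval''i, hwin''i⟩ := hW'' i hi
        obtain ⟨hval''o, hwin''o⟩ := hW'' (-i) hoppi
        have hW''iS'' : W'' i ⊆ S'' := by
          rw [← hW''U]
          rcases hi with h | h
          · rw [h]; exact Finset.subset_union_left
          · rw [h]; exact Finset.subset_union_right
        have hW''oS'' : W'' (-i) ⊆ S'' := by
          rw [← hW''U]
          rcases hi with h | h
          · rw [h]; exact Finset.subset_union_right
          · rw [h, neg_neg]; exact Finset.subset_union_left
        set σi : V → V := fun v => if v ∈ S'' then σ'' i v else df v with hσidef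
        set σo : V → V := fun v => if v ∈ Win then σ' (-i) v
          else if InAttr E a S (-i) Win v then attrStrat E a S (-i) Win v
          else if v ∈ S'' then σ'' (-i) v else df v with hσodef
        have hvalσi : PValid E a S i σi := by
          intro w hwS haw
          by_cases h1 : w ∈ S''
          · simp only [hσidef, if_pos h1]
            obtain ⟨h2, h3⟩ := hval''i w h1 haw
            exact ⟨h2, hS''S h3⟩
          · simp only [hσidef, if_neg h1]
            exact hdf w hwS
        have hvalσo : PValid E a S (-i) σo := by
          intro w hwS haw
          by_cases h1 : w ∈ Win
          · simp only [hσodef, if_pos h1]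
            obtain ⟨h2, h3⟩ := hval'o w (hWinS' h1) haw
            exact ⟨h2, hS'S h3⟩
          by_cases h2 : InAttr E a S (-i) Win w
          · simp only [hσodef, if_neg h1, if_pos h2]
            obtain ⟨he, hA, _⟩ := attrStrat_spec E a S (-i) Win h2 h1 haw
            exact ⟨he, hA.mem_arena⟩
          by_cases h3 : w ∈ S''
          · simp only [hσodef, if_neg h1, if_neg h2, if_pos h3]
            obtain ⟨h4, h5⟩ := hval''o w h3 haw
            exact ⟨h4, hS''S h5⟩
          · simp only [hσodef, if_neg h1, if_neg h2, if_neg h3]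
            exact hdf w hwS
        have hwinσi : ∀ v ∈ W'' i, PWins E a p S i σi v := by
          intro v hv f hf0 hfP hfC
          obtain ⟨hfS, hfE⟩ := hfP
          have hstay : ∀ t, f t ∈ S'' := by
            intro t
            induction t with
            | zero => rw [hf0]; exact hW''iS'' hv
            | succ s ihs =>
                by_cases has : a (f s) = i
                · rw [hfC s has]
                  simp only [hσidef, if_pos ihs]
                  exact (hval''i (f s) ihs has).2
                · exact htrapS'' (f s) ihs (haio _ has) (f (s + 1)) (hfS (s + 1)) (hfE s)
          apply hwin''i v hv f hf0 ⟨hstay, hfE⟩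
          intro t hat
          rw [hfC t hat]
          simp only [hσidef, if_pos (hstay t)]
        have hwinσo : ∀ v ∈ B ∪ W'' (-i), PWins E a p S (-i) σo v := by
          intro v hv f hf0 hfP hfC
          obtain ⟨hfS, hfE⟩ := hfP
          by_cases hB1 : ∃ t, InAttr E a S (-i) Win (f t)
          · obtain ⟨t₁, ht₁⟩ := hB1
            have hreach := attr_reach E a S (-i) Win (fun s => f (s + t₁))
              (fun s => hfS (s + t₁))
              (fun s => by
                have h := hfE (s + t₁)
                rwa [show s + t₁ + 1 = s + 1 + t₁ by omega] at h)
              (fun s hIA2 hnW hao => by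
                have hc := hfC (s + t₁) hao
                show f (s + 1 + t₁) = _
                rw [show s + 1 + t₁ = s + t₁ + 1 by omega, hc]
                simp only [hσodef, if_neg hnW, if_pos hIA2])
              (by simpa using ht₁)
            obtain ⟨s₁, hs₁⟩ := hreach
            set t₀ := s₁ + t₁ with ht₀
            have hstay : ∀ s, f (s + t₀) ∈ Win := by
              intro s
              induction s with
              | zero => simpa using hs₁
              | succ s ihs =>
                  have huS' : f (s + t₀) ∈ S' := hWinS' ihs
                  rw [show s + 1 + t₀ = (s + t₀) + 1 by omega]
                  by_cases hao : a (f (s + t₀)) = -i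
                  · have hc := hfC (s + t₀) hao
                    have hσ : σo (f (s + t₀)) = σ' (-i) (f (s + t₀)) := by
                      simp only [hσodef, if_pos ihs]
                    obtain ⟨he, hwS'⟩ := hval'o _ huS' hao
                    rw [hc, hσ]
                    exact hWinStep _ ihs _ he hwS' (fun _ => rfl)
                  · have hai2 : a (f (s + t₀)) = i := haoi _ hao
                    have hwS' : f ((s + t₀) + 1) ∈ S' :=
                      htrapS' _ huS' hai2 _ (hfS _) (hfE (s + t₀))
                    exact hWinStep _ ihs _ (hfE (s + t₀)) hwS'
                      (fun hcontra => absurd hcontra hao)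
            have h0Win : f t₀ ∈ Win := by simpa using hstay 0
            obtain ⟨h0S', h0P⟩ := (hWinmem _).mp h0Win
            have hwt : WinsPlay p (-i) (fun s => f (s + t₀)) := by
              apply h0P _ (by simp)
              · refine ⟨fun s => hWinS' (hstay s), fun s => ?_⟩
                have h := hfE (s + t₀)
                rwa [show s + t₀ + 1 = s + 1 + t₀ by omega] at h
              · intro s hao
                have hc := hfC (s + t₀) hao
                show f (s + 1 + t₀) = _
                rw [show s + 1 + t₀ = s + t₀ + 1 by omega, hc]
                simp only [hσodef, if_pos (hstay s)]
            exact (winsPlay_shift p (-i) f t₀).mp hwt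
          · push_neg at hB1
            have hfS'' : ∀ t, f t ∈ S'' := fun t => (hS''mem _).mpr ⟨hfS t, hB1 t⟩
            have hv0 : f 0 ∈ W'' (-i) := by
              rw [hf0]
              rcases Finset.mem_union.mp hv with h | h
              · exfalso
                have := ((hBmem v).mp h).2
                rw [← hf0] at this
                exact hB1 0 this
              · exact h
            apply hwin''o (f 0) hv0 f rfl ⟨hfS'', hfE⟩
            intro t hat
            rw [hfC t hat]
            have h1 : f t ∉ Win := fun h => hB1 t (hWinB _ h)
            simp only [hσodef, if_neg h1, if_neg (hB1 t), if_pos (hfS'' t)]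
        refine pack E a p S i hi (W'' i) (B ∪ W'' (-i)) σi σo ?_ ⟨hvalσi, hwinσi⟩
          ⟨hvalσo, hwinσo⟩
        -- union equals S
        rw [Finset.union_left_comm]
        have h1 : W'' i ∪ W'' (-i) = S'' := by
          rw [← hW''U]
          rcases hi with h | h
          · rw [h]
          · rw [h]; norm_num [Finset.union_comm]
        rw [h1]
        ext x
        simp only [Finset.mem_union, hBmem, hS''mem]
        constructor
        · rintro (⟨h, _⟩ | ⟨h, _⟩) <;> exact h
        · intro hx
          by_cases h : InAttr E a S (-i) Win x
          · exact Or.inl ⟨hx, h⟩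
          · exact Or.inr ⟨hx, h⟩

end Zielonka

section Final

variable {V : Type*}

lemma not_winning_opp (E : V → V → Prop) (a : V → ℤ) (p : V → ℕ)
    (ha : ∀ v, a v = 1 ∨ a v = -1) (i : ℤ) (hi : i = 1 ∨ i = -1) (v : V)
    (σ : V → V) (hσ : ∀ w, a w = i → E w (σ w))
    (hwin : ∀ f, IsPlay E v f → (∀ t, a (f t) = i → f (t + 1) = σ (f t)) →
      WinsPlay p i f) :
    ¬ WinningFrom E a p (-i) v := by
  rintro ⟨τ, hτ, hτwin⟩
  classical
  set F : ℕ → V × List V := fun t => Nat.rec (v, [])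
    (fun _ q => (if a q.1 = i then σ q.1 else τ q.2 q.1, q.2 ++ [q.1])) t with hF
  set f : ℕ → V := fun t => (F t).1 with hfdef
  have hf0 : f 0 = v := rfl
  have hhist : ∀ t, (F t).2 = List.ofFn (fun j : Fin t => f j) := by
    intro t
    induction t with
    | zero => simp [hF]
    | succ s ih =>
        show (F s).2 ++ [f s] = _
        rw [ih, List.ofFn_succ']
        simp [List.concat_eq_append]
  have hedge : ∀ t, E (f t) (f (t + 1)) := by
    intro t
    show E (f t) (if a (f t) = i then σ (f t) else τ (F t).2 (f t))
    by_cases h : a (f t) = i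
    · rw [if_pos h]; exact hσ _ h
    · rw [if_neg h]
      have hao : a (f t) = -i := by
        rcases hi with h1 | h1 <;> rcases ha (f t) with h2 | h2 <;> omega
      exact hτ _ _ hao
  have hplay : IsPlay E v f := ⟨hf0, hedge⟩
  have hconsσ : ∀ t, a (f t) = i → f (t + 1) = σ (f t) := by
    intro t h
    show (if a (f t) = i then σ (f t) else τ (F t).2 (f t)) = _
    rw [if_pos h]
  have hconsτ : ConsistentPlay a (-i) τ f := by
    intro t h
    have hne : a (f t) ≠ i := by rcases hi with h1 | h1 <;> omega
    show (if a (f t) = i then σ (f t) else τ (F t).2 (f t)) = _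
    rw [if_neg hne, hhist t]
  have h1 := hwin f hplay hconsσ
  have h2 := hτwin f hplay hconsτ
  unfold WinsPlay at h1 h2
  rcases hi with rfl | rfl
  · rw [if_pos rfl] at h1
    rw [if_neg (by decide : ¬ (-1 : ℤ) = 1)] at h2
    exact (Nat.not_odd_iff_even.mpr h2) h1
  · rw [if_neg (by decide : ¬ (-1 : ℤ) = 1)] at h1
    rw [if_pos (by decide : (-(-1) : ℤ) = 1)] at h2
    exact (Nat.not_odd_iff_even.mpr h1) h2

theorem parityGame_determinacy' [Fintype V] [Nonempty V]
    (E : V → V → Prop) (a : V → ℤ) (p : V → ℕ)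
    (hE : ∀ v, ∃ w, E v w) (ha : ∀ v, a v = 1 ∨ a v = -1) (v : V) :
    ∃ i : ℤ, (i = 1 ∨ i = -1) ∧
      WinningFrom E a p i v ∧ ¬ WinningFrom E a p (-i) v ∧
      MemorylessWinningFrom E a p i v := by
  classical
  obtain ⟨W, σW, hWU, hW⟩ := zielonka E a p hE ha (Fintype.card V) Finset.univ
    (by rw [Finset.card_univ]) (fun w _ => by
      obtain ⟨u, hu⟩ := hE w
      exact ⟨u, Finset.mem_univ u, hu⟩)
  have hv : v ∈ W 1 ∪ W (-1) := by rw [hWU]; exact Finset.mem_univ v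
  obtain ⟨i, hi, hmem⟩ : ∃ i : ℤ, (i = 1 ∨ i = -1) ∧ v ∈ W i := by
    rcases Finset.mem_union.mp hv with h | h
    · exact ⟨1, Or.inl rfl, h⟩
    · exact ⟨-1, Or.inr rfl, h⟩
  obtain ⟨hval, hwin⟩ := hW i hi
  have hσ : ∀ w, a w = i → E w (σW i w) := fun w hw => (hval w (Finset.mem_univ w) hw).1
  have hmw : ∀ f, IsPlay E v f → (∀ t, a (f t) = i → f (t + 1) = σW i (f t)) →
      WinsPlay p i f := by
    intro f hf hc
    exact hwin v hmem f hf.1 ⟨fun t => Finset.mem_univ _, hf.2⟩ hc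
  refine ⟨i, hi, ?_, ?_, ⟨σW i, hσ, hmw⟩⟩
  · exact ⟨fun _ w => σW i w, fun h w hw => hσ w hw,
      fun f hf hc => hmw f hf (fun t ht => hc t ht)⟩
  · exact not_winning_opp E a p ha i hi v (σW i) hσ hmw

end Final

/-- In every finite parity game, for every node `v` exactly one
of the two players has a winning strategy from `v`, and this winner moreover has
a memoryless winning strategy from `v`. -/
theorem parityGame_determinacy {V : Type*} [Fintype V] [Nonempty V]
    (E : V → V → Prop) (a : V → ℤ) (p : V → ℕ)
    (hE : ∀ v, ∃ w, E v w) (ha : ∀ v, a v = 1 ∨ a v = -1) (v : V) :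
    ∃ i : ℤ, (i = 1 ∨ i = -1) ∧
      WinningFrom E a p i v ∧ ¬ WinningFrom E a p (-i) v ∧
      MemorylessWinningFrom E a p i v :=
  parityGame_determinacy' E a p hE ha v
end

section
/- Let N, K, d be natural numbers with 1 ≤ d ≤ K ≤ N. Then the hypergeometric distribution with parameters (N, K, d) stochastically dominates (in the strong stochastic order) the binomial distribution with parameters (d, (K-d)/N): for every z ∈ ℕ, ∑_{j=0}^{z} C(K,j)·C(N-K,d-j)/C(N,d) ≤ ∑_{j=0}^{z} C(d,j)·((K-d)/N)^j·(1-(K-d)/N)^{d-j}. -/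
open Finset

noncomputable def Fb (d : ℕ) (p : ℝ) (z : ℕ) : ℝ :=
  ∑ j ∈ Finset.range z, (d.choose j : ℝ) * p ^ j * (1 - p) ^ (d - j)

def Sh (N K d z : ℕ) : ℕ := ∑ j ∈ Finset.range z, K.choose j * (N - K).choose (d - j)

lemma Fb_nonneg {p : ℝ} (hp0 : 0 ≤ p) (hp1 : p ≤ 1) (d z : ℕ) : 0 ≤ Fb d p z := by
  apply Finset.sum_nonneg
  intro j _
  have : (0:ℝ) ≤ 1 - p := by linarith
  positivity

lemma Fb_mono_z {p : ℝ} (hp0 : 0 ≤ p) (hp1 : p ≤ 1) (d : ℕ) {z z' : ℕ} (h : z ≤ z') :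
    Fb d p z ≤ Fb d p z' := by
  apply Finset.sum_le_sum_of_subset_of_nonneg (Finset.range_subset_range.2 h)
  intro j _ _
  have : (0:ℝ) ≤ 1 - p := by linarith
  positivity

lemma Fb_eq_one (p : ℝ) {d z : ℕ} (h : d < z) : Fb d p z = 1 := by
  have h1 : Fb d p z = Fb d p (d+1) := by
    unfold Fb
    rw [← Finset.sum_subset (Finset.range_subset_range.2 h)]
    intro j _ hj
    simp only [Finset.mem_range, not_lt] at hj
    rw [Nat.choose_eq_zero_of_lt (by omega)]
    simp
  rw [h1]
  unfold Fb
  have := add_pow p (1-p) d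
  simp only [add_sub_cancel, one_pow] at this
  have h2 : ∑ j ∈ Finset.range (d+1), (d.choose j : ℝ) * p ^ j * (1 - p) ^ (d - j)
      = ∑ m ∈ Finset.range (d+1), p ^ m * (1 - p) ^ (d - m) * (d.choose m : ℝ) := by
    apply Finset.sum_congr rfl; intro j _; ring
  rw [h2, ← this]

lemma Fb_rec (p : ℝ) {d w : ℕ} (hw : w ≤ d) :
    Fb (d+1) p (w+1) = p * Fb d p w + (1-p) * Fb d p (w+1) := by
  unfold Fb
  rw [Finset.sum_range_succ' (fun j => ((d+1).choose j : ℝ) * p ^ j * (1 - p) ^ (d + 1 - j))]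
  have hsplit : ∀ i ∈ Finset.range w,
      (((d+1).choose (i+1) : ℝ)) * p ^ (i+1) * (1 - p) ^ (d + 1 - (i+1))
      = p * ((d.choose i : ℝ) * p ^ i * (1 - p) ^ (d - i))
        + (1-p) * ((d.choose (i+1) : ℝ) * p ^ (i+1) * (1 - p) ^ (d - (i+1))) := by
    intro i hi
    simp only [Finset.mem_range] at hi
    have h1 : (d+1).choose (i+1) = d.choose i + d.choose (i+1) := Nat.choose_succ_succ d i
    have h2 : d + 1 - (i+1) = d - i := by omega
    have h3 : d - i = (d - (i+1)) + 1 := by omega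
    rw [h1, h2, h3]
    push_cast
    ring
  rw [Finset.sum_congr rfl hsplit, Finset.sum_add_distrib]
  rw [Finset.sum_range_succ' (fun j => ((d.choose j : ℝ) * p ^ j * (1 - p) ^ (d - j))) w]
  simp only [Nat.choose_zero_right, Nat.cast_one, pow_zero, Nat.sub_zero, Nat.add_sub_cancel,
    one_mul, mul_one, mul_add, Finset.mul_sum]
  ring

lemma Fb_anti_p : ∀ (d z : ℕ) {p q : ℝ}, 0 ≤ p → p ≤ q → q ≤ 1 → Fb d q z ≤ Fb d p z := by
  intro d
  induction d with
  | zero =>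
    intro z p q hp hpq hq
    match z with
    | 0 => simp [Fb]
    | (w+1) => rw [Fb_eq_one p (by omega), Fb_eq_one q (by omega)]
  | succ d ih =>
    intro z p q hp hpq hq
    match z with
    | 0 => simp [Fb]
    | (w+1) =>
      by_cases hwd : w ≤ d
      · rw [Fb_rec p hwd, Fb_rec q hwd]
        have hq0 : 0 ≤ q := le_trans hp hpq
        have hp1 : p ≤ 1 := le_trans hpq hq
        have h1 : Fb d q w ≤ Fb d p w := ih w hp hpq hq
        have h2 : Fb d q (w+1) ≤ Fb d p (w+1) := ih (w+1) hp hpq hq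
        have h3 : Fb d p w ≤ Fb d p (w+1) := Fb_mono_z hp hp1 d (Nat.le_succ w)
        have h4 : 0 ≤ Fb d q w := Fb_nonneg hq0 hq d w
        nlinarith
      · rw [Fb_eq_one p (by omega), Fb_eq_one q (by omega)]

lemma Sh_rec {N K d w : ℕ} (hK : d + 1 ≤ K) (hN : K ≤ N) (hw : w ≤ d) :
    (d+1) * Sh N K (d+1) (w+1) = K * Sh (N-1) (K-1) d w + (N-K) * Sh (N-1) K d (w+1) := by
  unfold Sh
  have e1 : N - 1 - (K - 1) = N - K := by omega
  have e2 : N - 1 - K = N - K - 1 := by omega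
  rw [e1, e2]
  rw [Finset.sum_range_succ' (fun j => K.choose j * (N - K).choose (d + 1 - j)) w]
  rw [Finset.sum_range_succ' (fun j => K.choose j * (N - K - 1).choose (d - j)) w]
  simp only [Nat.choose_zero_right, one_mul, Nat.sub_zero, Nat.add_sub_cancel]
  rw [Nat.mul_add, Nat.mul_add, Finset.mul_sum, Finset.mul_sum, Finset.mul_sum]
  have hA : (d+1) * (N - K).choose (d+1) = (N - K) * (N - K - 1).choose d := by
    rcases Nat.eq_or_lt_of_le hN with h | h
    · subst h; simp [Nat.choose_eq_zero_of_lt (by omega : (0:ℕ) < d+1) ]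
    · have hNK : 1 ≤ N - K := by omega
      have := Nat.add_one_mul_choose_eq (N - K - 1) d
      have hs : N - K - 1 + 1 = N - K := by omega
      rw [hs] at this
      try simp only [Nat.succ_eq_add_one] at this
      rw [this]; ring
  have hB : ∀ i ∈ Finset.range w,
      (d+1) * (K.choose (i+1) * (N - K).choose (d + 1 - (i+1)))
      = K * ((K - 1).choose i * (N - K).choose (d - i))
        + (N - K) * (K.choose (i+1) * (N - K - 1).choose (d - (i+1))) := by
    intro i hi
    simp only [Finset.mem_range] at hi
    have hiw : i < w := hi
    have hd1 : d + 1 - (i+1) = d - i := by omega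
    rw [hd1]
    have hb1 : (i+1) * K.choose (i+1) = K * (K - 1).choose i := by
      have := Nat.add_one_mul_choose_eq (K - 1) i
      have hs : K - 1 + 1 = K := by omega
      rw [hs] at this
      try simp only [Nat.succ_eq_add_one] at this
      rw [this]; ring
    have hb2 : (d - i) * (N - K).choose (d - i) = (N - K) * (N - K - 1).choose (d - (i+1)) := by
      have hdi : 1 ≤ d - i := by omega
      rcases Nat.eq_or_lt_of_le hN with h | h
      · subst h; simp [Nat.choose_eq_zero_of_lt (by omega : (0:ℕ) < d - i)]
      · have := Nat.add_one_mul_choose_eq (N - K - 1) (d - (i+1))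
        have hs : N - K - 1 + 1 = N - K := by omega
        have hs2 : d - (i+1) + 1 = d - i := by omega
        rw [hs, hs2] at this
        try simp only [Nat.succ_eq_add_one] at this
        rw [this]; ring
    have hsum : d + 1 = (i+1) + (d - i) := by omega
    calc (d+1) * (K.choose (i+1) * (N - K).choose (d - i))
        = ((i+1) * K.choose (i+1)) * (N - K).choose (d - i)
          + K.choose (i+1) * ((d - i) * (N - K).choose (d - i)) := by rw [hsum]; ring
      _ = K * ((K - 1).choose i * (N - K).choose (d - i))
          + (N - K) * (K.choose (i+1) * (N - K - 1).choose (d - (i+1))) := by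
          rw [hb1, hb2]; ring
  rw [Finset.sum_congr rfl hB, Finset.sum_add_distrib, hA]
  ring

lemma Fh_rec {N K d w : ℕ} (hK : d + 1 ≤ K) (hN : K ≤ N) (hw : w ≤ d) :
    (Sh N K (d+1) (w+1) : ℝ) / (N.choose (d+1) : ℝ)
      = ((K:ℝ)/N) * ((Sh (N-1) (K-1) d w : ℝ) / ((N-1).choose d : ℝ))
        + (((N:ℝ)-K)/N) * ((Sh (N-1) K d (w+1) : ℝ) / ((N-1).choose d : ℝ)) := by
  have hN1 : 1 ≤ N := by omega
  have hScast : ((d:ℝ)+1) * (Sh N K (d+1) (w+1) : ℝ)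
      = (K:ℝ) * (Sh (N-1) (K-1) d w : ℝ) + ((N:ℝ)-(K:ℝ)) * (Sh (N-1) K d (w+1) : ℝ) := by
    have := Sh_rec hK hN hw
    have h2 : ((((d+1) * Sh N K (d+1) (w+1)) : ℕ) : ℝ)
        = ((K * Sh (N-1) (K-1) d w + (N-K) * Sh (N-1) K d (w+1) : ℕ) : ℝ) :=
      congrArg (fun n : ℕ => (n : ℝ)) this
    push_cast [Nat.cast_sub hN] at h2
    linarith
  have hden : (N:ℝ) * ((N-1).choose d : ℝ) = ((d:ℝ)+1) * (N.choose (d+1) : ℝ) := by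
    have := Nat.add_one_mul_choose_eq (N-1) d
    have hs : N - 1 + 1 = N := by omega
    rw [hs] at this
    have : ((N * (N-1).choose d : ℕ) : ℝ) = ((N.choose (d+1) * (d+1) : ℕ) : ℝ) := by
      rw [this]
    push_cast at this
    linarith
  have hc1 : (0:ℝ) < (N.choose (d+1) : ℝ) := by
    exact_mod_cast Nat.choose_pos (by omega : d+1 ≤ N)
  have hc2 : (0:ℝ) < ((N-1).choose d : ℝ) := by
    exact_mod_cast Nat.choose_pos (by omega : d ≤ N-1)
  have hNpos : (0:ℝ) < (N:ℝ) := by exact_mod_cast hN1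
  field_simp
  nlinarith [mul_pos hc1 hc2, hScast, hden]

lemma Sh_full {N K d : ℕ} (hN : K ≤ N) : Sh N K d (d+1) = N.choose d := by
  unfold Sh
  have h := Nat.add_choose_eq K (N - K) d
  rw [Finset.Nat.sum_antidiagonal_eq_sum_range_succ_mk] at h
  have hKN : K + (N - K) = N := by omega
  rw [hKN] at h
  exact h.symm

lemma key : ∀ (d N K z : ℕ), d ≤ K → K ≤ N → z ≤ d + 1 →
    (Sh N K d z : ℝ) / (N.choose d : ℝ) ≤ Fb d (((K:ℝ) - d) / N) z := by
  intro d
  induction d with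
  | zero =>
    intro N K z _ _ hz
    interval_cases z <;> simp [Sh, Fb]
  | succ d ih =>
    intro N K z hK hN hz
    simp only [Nat.cast_add, Nat.cast_one]
    match z with
    | 0 => simp [Sh, Fb]
    | (w+1) =>
      set p : ℝ := ((K:ℝ) - ((d:ℝ)+1)) / N with hp_def
      have hN1 : 1 ≤ N := by omega
      have hNpos : (0:ℝ) < N := by exact_mod_cast hN1
      have hKd : ((d:ℝ)+1) ≤ (K:ℝ) := by exact_mod_cast hK
      have hKN : (K:ℝ) ≤ (N:ℝ) := by exact_mod_cast hN
      have hp0 : 0 ≤ p := by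
        apply div_nonneg _ (le_of_lt hNpos); linarith
      have hp1 : p ≤ 1 := by
        rw [hp_def, div_le_one hNpos]; linarith
      rcases Nat.lt_or_ge w (d+1) with hw' | hw'
      · -- main case : w ≤ d
        have hw : w ≤ d := by omega
        rw [Fh_rec hK hN hw]
        -- branch A : first ball black
        have hA : (Sh (N-1) (K-1) d w : ℝ) / ((N-1).choose d : ℝ) ≤ Fb d p w := by
          have h1 := ih (N-1) (K-1) w (by omega) (by omega) (by omega)
          set p1 : ℝ := (((K-1:ℕ):ℝ) - d) / ((N-1:ℕ):ℝ) with hp1_def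
          have hc1 : ((K-1:ℕ):ℝ) = (K:ℝ) - 1 := by
            push_cast [Nat.cast_sub (by omega : 1 ≤ K)]; ring
          have hc2 : ((N-1:ℕ):ℝ) = (N:ℝ) - 1 := by
            push_cast [Nat.cast_sub hN1]; ring
          have h2 : Fb d p1 w ≤ Fb d p w := by
            apply Fb_anti_p d w hp0
            · -- p ≤ p1
              rw [hp1_def, hp_def, hc1, hc2]
              rcases Nat.eq_or_lt_of_le hN1 with h | h
              · have hK1 : K = 1 := by omega
                have hd0 : d = 0 := by omega
                simp [← h, hK1, hd0]
              · have hN2 : (2:ℝ) ≤ (N:ℝ) := by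
                  have : 2 ≤ N := h
                  exact_mod_cast this
                rw [show (K:ℝ) - 1 - (d:ℝ) = (K:ℝ) - ((d:ℝ)+1) by ring]
                gcongr <;> linarith
            · -- p1 ≤ 1
              rw [hp1_def, hc1, hc2]
              rcases Nat.eq_or_lt_of_le hN1 with h | h
              · have hK1 : K = 1 := by omega
                have hd0 : d = 0 := by omega
                rw [← h] at *
                norm_num [hK1, hd0]
              · have hN2 : (2:ℝ) ≤ (N:ℝ) := by
                  have : 2 ≤ N := h
                  exact_mod_cast this
                rw [div_le_one (by linarith)]
                have hd0 : (0:ℝ) ≤ d := Nat.cast_nonneg d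
                linarith
          exact le_trans h1 h2
        -- branch B : first ball red (with coefficient)
        have hB : (((N:ℝ) - K)/N) * ((Sh (N-1) K d (w+1) : ℝ) / ((N-1).choose d : ℝ))
            ≤ (((N:ℝ) - K)/N) * Fb d p (w+1) := by
          rcases eq_or_lt_of_le hKN with h | h
          · rw [h]; simp
          · have hcoef0 : (0:ℝ) ≤ ((N:ℝ) - K)/N := div_nonneg (by linarith) (le_of_lt hNpos)
            apply mul_le_mul_of_nonneg_left _ hcoef0
            have hKN' : K < N := by exact_mod_cast h
            have h1 := ih (N-1) K (w+1) (by omega) (by omega) (by omega)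
            set p2 : ℝ := ((K:ℝ) - d) / ((N-1:ℕ):ℝ) with hp2_def
            have hc2 : ((N-1:ℕ):ℝ) = (N:ℝ) - 1 := by
              push_cast [Nat.cast_sub hN1]; ring
            have hN2 : (2:ℝ) ≤ (N:ℝ) := by
              have : 2 ≤ N := by omega
              exact_mod_cast this
            have hK1N : (K:ℝ) + 1 ≤ (N:ℝ) := by
              have : K + 1 ≤ N := by omega
              exact_mod_cast this
            have h2 : Fb d p2 (w+1) ≤ Fb d p (w+1) := by
              apply Fb_anti_p d (w+1) hp0
              · rw [hp2_def, hp_def, hc2]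
                apply div_le_div₀ (by linarith) (by linarith) (by linarith) (by linarith)
              · rw [hp2_def, hc2, div_le_one (by linarith)]
                have hd0 : (0:ℝ) ≤ d := Nat.cast_nonneg d
                linarith
            exact le_trans h1 h2
        -- combine
        have hFbz : Fb d p w ≤ Fb d p (w+1) := Fb_mono_z hp0 hp1 d (Nat.le_succ w)
        have hcoef : p ≤ (K:ℝ)/N := by
          rw [hp_def, div_le_div_iff₀ hNpos hNpos]
          nlinarith
        have hKNcoef : ((K:ℝ)/N) + (((N:ℝ)-K)/N) = 1 := by field_simp; ring
        have hKcoef1 : (K:ℝ)/N ≤ 1 := by rw [div_le_one hNpos]; linarith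
        have step1 : ((K:ℝ)/N) * ((Sh (N-1) (K-1) d w : ℝ) / ((N-1).choose d : ℝ))
            ≤ ((K:ℝ)/N) * Fb d p w :=
          mul_le_mul_of_nonneg_left hA (by positivity)
        have step2 : ((K:ℝ)/N) * Fb d p w + (((N:ℝ)-K)/N) * Fb d p (w+1)
            ≤ p * Fb d p w + (1-p) * Fb d p (w+1) := by
          have hrw : ((N:ℝ)-K)/N = 1 - (K:ℝ)/N := by
            rw [sub_div, div_self (ne_of_gt hNpos)]
          rw [hrw]
          nlinarith [mul_nonneg (sub_nonneg.2 hcoef) (sub_nonneg.2 hFbz)]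
        rw [Fb_rec p hw]
        calc ((K:ℝ)/N) * ((Sh (N-1) (K-1) d w : ℝ) / ((N-1).choose d : ℝ))
              + (((N:ℝ)-K)/N) * ((Sh (N-1) K d (w+1) : ℝ) / ((N-1).choose d : ℝ))
            ≤ ((K:ℝ)/N) * Fb d p w + (((N:ℝ)-K)/N) * Fb d p (w+1) := add_le_add step1 hB
          _ ≤ p * Fb d p w + (1-p) * Fb d p (w+1) := step2
      · -- w = d + 1, i.e. z = d + 2 : both sides equal 1
        have hw : w = d + 1 := by omega
        subst hw
        rw [Fb_eq_one p (by omega), Sh_full hN]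
        have hpos : (0:ℝ) < (N.choose (d+1) : ℝ) := by
          exact_mod_cast Nat.choose_pos (by omega : d+1 ≤ N)
        rw [div_self (ne_of_gt hpos)]

/-- For `1 ≤ d ≤ K ≤ N`, the Hypergeometric`(N, K, d)`
distribution stochastically dominates the Binomial`(d, (K-d)/N)` distribution in
the strong stochastic order: for every `z : ℕ`, the CDF of the hypergeometric at
`z` is at most the CDF of the binomial at `z`. (The hypergeometric mass at `j`
is `C(K,j)·C(N-K,d-j)/C(N,d)`, understood to be `0` for `j > d`.) -/
theorem hypergeometric_dominates_binomial (N K d : ℕ)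
    (hd : 1 ≤ d) (hK : d ≤ K) (hN : K ≤ N) (z : ℕ) :
    ∑ j ∈ Finset.range (z + 1),
        (if j ≤ d then
          ((K.choose j : ℝ) * ((N - K).choose (d - j) : ℝ)) / (N.choose d : ℝ)
         else 0)
      ≤ ∑ j ∈ Finset.range (z + 1),
          (d.choose j : ℝ) * (((K : ℝ) - d) / N) ^ j *
            (1 - ((K : ℝ) - d) / N) ^ (d - j) := by
  have hrhs : ∑ j ∈ Finset.range (z + 1),
      (d.choose j : ℝ) * (((K : ℝ) - d) / N) ^ j * (1 - ((K : ℝ) - d) / N) ^ (d - j)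
      = Fb d (((K:ℝ) - d) / N) (z+1) := rfl
  rw [hrhs]
  rcases le_or_gt z d with hzd | hzd
  · have hL : (∑ j ∈ Finset.range (z + 1),
        (if j ≤ d then ((K.choose j : ℝ) * ((N - K).choose (d - j) : ℝ)) / (N.choose d : ℝ) else 0))
        = (Sh N K d (z+1) : ℝ) / (N.choose d : ℝ) := by
      unfold Sh
      push_cast
      rw [Finset.sum_div]
      apply Finset.sum_congr rfl
      intro j hj
      simp only [Finset.mem_range] at hj
      rw [if_pos (by omega)]
    rw [hL]
    exact key d N K (z+1) hK hN (by omega)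
  · rw [Fb_eq_one _ (by omega : d < z + 1)]
    have hL : (∑ j ∈ Finset.range (z + 1),
        (if j ≤ d then ((K.choose j : ℝ) * ((N - K).choose (d - j) : ℝ)) / (N.choose d : ℝ) else 0))
        = (Sh N K d (d+1) : ℝ) / (N.choose d : ℝ) := by
      rw [← Finset.sum_subset (Finset.range_subset_range.2 (by omega : d + 1 ≤ z + 1))]
      · unfold Sh
        push_cast
        rw [Finset.sum_div]
        apply Finset.sum_congr rfl
        intro j hj
        simp only [Finset.mem_range] at hj
        rw [if_pos (by omega)]
      · intro j _ hj
        simp only [Finset.mem_range, not_lt] at hj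
        rw [if_neg (by omega)]
    rw [hL, Sh_full hN, div_self]
    have h : 0 < N.choose d := Nat.choose_pos (by omega)
    have : (0:ℝ) < (N.choose d : ℝ) := by exact_mod_cast h
    exact ne_of_gt this
end

section
/- Let f : ℕ → ℕ satisfy 1 ≤ f(n) ≤ n for all n and f(n) → ∞ as n → ∞, and let 𝒫 be a probability distribution on ℕ with 𝒫({even numbers}) = 𝒫({odd numbers}) = 1/2. For each n, sample a parity game from the random model G(n, f(n)) and fix the node v = 0 ∈ Fin n. Then the probability that the owner a(v) of v has a winning strategy from v tends to 1 as n → ∞. -/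
open MeasureTheory

instance (n : ℕ) : MeasurableSpace (Finset (Fin n)) := ⊤

/-- The uniform probability measure on a finite set `s`. -/
noncomputable def uniformFinset {α : Type*} [MeasurableSpace α] (s : Finset α) :
    Measure α :=
  (s.card : ENNReal)⁻¹ • ∑ x ∈ s, Measure.dirac x

/-- A sample of the random parity game model on node set `Fin n`: the set of
successors of each node, the owner (`±1`) of each node, and the priority of each
node. -/
abbrev GameSample (n : ℕ) : Type :=
  (Fin n → Finset (Fin n)) × (Fin n → ℤ) × (Fin n → ℕ)

/-- The law of the random parity game model `G(n,d)` with priority distribution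
`P`: independently for each node, its set of successors is a uniformly random
`d`-element subset of `Fin n`; independently, each node's owner is drawn i.i.d.
uniformly from `{-1,+1}`, and each node's priority is drawn i.i.d. from `P`. -/
noncomputable def gameMeasure (n d : ℕ) (P : Measure ℕ) : Measure (GameSample n) :=
  (Measure.pi fun _ : Fin n => uniformFinset (Finset.powersetCard d Finset.univ)).prod
    ((Measure.pi fun _ : Fin n => uniformFinset ({-1, 1} : Finset ℤ)).prod
      (Measure.pi fun _ : Fin n => P))

/-- The edge relation of a sampled game: `(u, w) ∈ E` iff `w` is one of the
chosen successors of `u`. -/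
def sampleE {n : ℕ} (ω : GameSample n) : Fin n → Fin n → Prop :=
  fun u w => w ∈ ω.1 u


open Finset MeasureTheory Filter
open scoped ENNReal

namespace OW

theorem two_pow_le_two_mul_factorial (k : ℕ) : 2 ^ k ≤ 2 * Nat.factorial k := by
  induction k with
  | zero => simp
  | succ k ih =>
    rw [pow_succ, Nat.factorial_succ]
    rcases Nat.eq_zero_or_pos k with h | h
    · subst h; norm_num
    · calc 2 ^ k * 2 ≤ 2 * Nat.factorial k * 2 := Nat.mul_le_mul_right _ ih
      _ = 2 * (2 * Nat.factorial k) := by ring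
      _ ≤ 2 * ((k+1) * Nat.factorial k) :=
          Nat.mul_le_mul_left _ (Nat.mul_le_mul_right _ (by omega))

theorem sum_div_two_pow (X j : ℕ) :
    (∑ k ∈ Finset.range (j+1), X / 2 ^ k) + X / 2 ^ j ≤ 2 * X := by
  induction j with
  | zero => simp; omega
  | succ j ih =>
    rw [Finset.sum_range_succ]
    have h1 : X / 2 ^ (j+1) = (X / 2 ^ j) / 2 := by
      rw [pow_succ, Nat.div_div_eq_div_mul]
    have h2 : X / 2 ^ (j+1) + X / 2 ^ (j+1) ≤ X / 2 ^ j := by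
      rw [h1]; omega
    omega

theorem term_bound (j m : ℕ) (hm : m ≤ j) :
    j ^ m * j.choose m ≤ 2 * j ^ j / 2 ^ (j - m) := by
  rw [Nat.le_div_iff_mul_le (Nat.pow_pos (by norm_num))]
  have h1 : j.choose m * Nat.factorial (j - m) ≤ j ^ (j - m) := by
    rw [← Nat.choose_symm hm]
    calc j.choose (j-m) * Nat.factorial (j-m)
        = Nat.factorial (j-m) * j.choose (j-m) := by ring
    _ = j.descFactorial (j-m) := (Nat.descFactorial_eq_factorial_mul_choose _ _).symm
    _ ≤ j ^ (j-m) := Nat.descFactorial_le_pow _ _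
  have h2 : 2 ^ (j - m) ≤ 2 * Nat.factorial (j - m) := two_pow_le_two_mul_factorial _
  calc j ^ m * j.choose m * 2 ^ (j - m)
      ≤ j ^ m * j.choose m * (2 * Nat.factorial (j-m)) := Nat.mul_le_mul_left _ h2
  _ = 2 * (j ^ m * (j.choose m * Nat.factorial (j-m))) := by ring
  _ ≤ 2 * (j ^ m * j ^ (j - m)) := by
      have h3 := Nat.mul_le_mul_left (j ^ m) h1
      omega
  _ = 2 * j ^ j := by rw [← pow_add, Nat.add_sub_cancel' hm]

theorem succ_pow_le (j : ℕ) : (j+1)^j ≤ 4 * j^j := by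
  have hexp := add_pow (R := ℕ) j 1 j
  simp only [one_pow, mul_one, Nat.cast_id] at hexp
  rw [hexp]
  calc ∑ m ∈ Finset.range (j+1), j ^ m * j.choose m
      ≤ ∑ m ∈ Finset.range (j+1), 2 * j ^ j / 2 ^ (j - m) := by
        apply Finset.sum_le_sum
        intro m hm
        exact term_bound j m (by have := Finset.mem_range.mp hm; omega)
  _ = ∑ m ∈ Finset.range (j+1), 2 * j ^ j / 2 ^ m := by
        rw [← Finset.sum_range_reflect]
        apply Finset.sum_congr rfl
        intro m hm
        have hm' := Finset.mem_range.mp hm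
        have h : j - (j + 1 - 1 - m) = m := by omega
        rw [h]
  _ ≤ 2 * (2 * j ^ j) := le_trans (Nat.le_add_right _ _) (sum_div_two_pow (2 * j ^ j) j)
  _ = 4 * j ^ j := by ring

theorem pow_self_le (j : ℕ) : j ^ j ≤ 4 ^ j * Nat.factorial j := by
  induction j with
  | zero => simp
  | succ j ih =>
    calc (j+1)^(j+1) = (j+1) * (j+1)^j := by rw [pow_succ]; ring
    _ ≤ (j+1) * (4 * j ^ j) := Nat.mul_le_mul_left _ (succ_pow_le j)
    _ ≤ (j+1) * (4 * (4 ^ j * Nat.factorial j)) :=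
        Nat.mul_le_mul_left _ (Nat.mul_le_mul_left 4 ih)
    _ = 4 ^ (j+1) * ((j+1) * Nat.factorial j) := by rw [pow_succ]; ring
    _ = 4 ^ (j+1) * Nat.factorial (j+1) := by rw [Nat.factorial_succ]

theorem choose_mul_le (N j : ℕ) : N.choose j * j ^ j ≤ (4*N) ^ j := by
  calc N.choose j * j ^ j ≤ N.choose j * (4 ^ j * Nat.factorial j) :=
        Nat.mul_le_mul_left _ (pow_self_le j)
  _ = 4 ^ j * (Nat.factorial j * N.choose j) := by ring
  _ = 4 ^ j * N.descFactorial j := by rw [← Nat.descFactorial_eq_factorial_mul_choose]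
  _ ≤ 4 ^ j * N ^ j := Nat.mul_le_mul_left _ (Nat.descFactorial_le_pow _ _)
  _ = (4*N)^j := by rw [mul_pow]

theorem choose_le_of_le {N j c : ℕ} (hj : 1 ≤ j) (h : N ≤ c * j) :
    N.choose j ≤ (4*c)^j := by
  have h1 : N.choose j * j ^ j ≤ (4*c)^j * j ^ j := by
    calc N.choose j * j ^ j ≤ (4*N)^j := choose_mul_le N j
    _ ≤ (4*(c*j))^j := Nat.pow_le_pow_left (by omega) _
    _ = (4*c)^j * j ^ j := by rw [← mul_pow]; ring_nf
  exact Nat.le_of_mul_le_mul_right h1 (Nat.pow_pos (by omega))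

theorem choose_ratio {a b : ℕ} (d : ℕ) (hab : a ≤ b) :
    a.choose d * b ^ d ≤ b.choose d * a ^ d := by
  induction d with
  | zero => simp
  | succ d ih =>
    have key : (a.choose (d+1) * b ^ (d+1)) * (d+1) ≤ (b.choose (d+1) * a ^ (d+1)) * (d+1) := by
      have ha : a.choose (d+1) * (d+1) = a.choose d * (a - d) := Nat.choose_succ_right_eq a d
      have hb : b.choose (d+1) * (d+1) = b.choose d * (b - d) := Nat.choose_succ_right_eq b d
      have hsub : (a-d) * b ≤ (b-d) * a := by
        rw [Nat.sub_mul, Nat.sub_mul]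
        have h1 : d * a ≤ d * b := Nat.mul_le_mul_left _ hab
        calc a * b - d * b ≤ a * b - d * a := Nat.sub_le_sub_left h1 _
        _ = b * a - d * a := by rw [mul_comm]
      calc (a.choose (d+1) * b ^ (d+1)) * (d+1)
          = (a.choose (d+1) * (d+1)) * (b ^ d * b) := by rw [pow_succ]; ring
      _ = (a.choose d * (a-d)) * (b ^ d * b) := by rw [ha]
      _ = (a.choose d * b ^ d) * ((a-d) * b) := by ring
      _ ≤ (b.choose d * a ^ d) * ((b-d) * a) := Nat.mul_le_mul ih hsub
      _ = (b.choose d * (b-d)) * (a ^ d * a) := by ring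
      _ = (b.choose (d+1) * (d+1)) * (a ^ d * a) := by rw [hb]
      _ = (b.choose (d+1) * a ^ (d+1)) * (d+1) := by rw [pow_succ]; ring
    exact Nat.le_of_mul_le_mul_right key (by omega)

end OW

namespace OW

open Finset MeasureTheory Filter
open scoped ENNReal Classical

/-! ### limsup lemma -/

theorem limsup_pred (g : ℕ → ℕ) (Q : ℕ → Prop) (B : ℕ)
    (h1 : ∀ t, 1 ≤ t → g t ≤ B) (h2 : ∀ t, 1 ≤ t → Q (g t)) :
    Q (Filter.atTop.limsup g) := by
  have hlim : Filter.atTop.limsup g = sInf {a | ∀ᶠ t in Filter.atTop, g t ≤ a} :=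
    Filter.limsup_eq
  set S := {a | ∀ᶠ t in Filter.atTop, g t ≤ a} with hS
  have hB : B ∈ S := Filter.eventually_atTop.2 ⟨1, h1⟩
  have hne : S.Nonempty := ⟨B, hB⟩
  have hM : sInf S ∈ S := Nat.sInf_mem hne
  have key : ∃ t, 1 ≤ t ∧ g t = sInf S := by
    rcases h : sInf S with _ | m
    · have h0 : ∀ᶠ t in Filter.atTop, g t ≤ 0 := by rw [← h]; exact hM
      have := (h0.and (Filter.eventually_ge_atTop 1)).exists
      obtain ⟨t, ht0, ht1⟩ := this
      exact ⟨t, ht1, by omega⟩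
    · have hmS : m ∉ S := by
        intro hm
        have := Nat.sInf_le hm
        omega
      have hfreq : ∃ᶠ t in Filter.atTop, ¬ g t ≤ m := Filter.not_eventually.mp hmS
      have hev : ∀ᶠ t in Filter.atTop, g t ≤ m + 1 ∧ 1 ≤ t := by
        refine Filter.Eventually.and ?_ (Filter.eventually_ge_atTop 1)
        rw [← h]; exact hM
      obtain ⟨t, hnt, htle, ht1⟩ := (hfreq.and_eventually hev).exists
      exact ⟨t, ht1, by omega⟩
  obtain ⟨t, ht1, hgt⟩ := key
  rw [hlim, ← hgt]
  exact h2 t ht1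

/-! ### Closed sets and the core -/

variable {n : ℕ}

def Closed (S : Fin n → Finset (Fin n)) (D : Finset (Fin n)) : Prop :=
  ∀ w ∈ D, (S w ∩ D).Nonempty

noncomputable def core (S : Fin n → Finset (Fin n)) (T : Finset (Fin n)) : Finset (Fin n) :=
  T.filter fun w => ∃ D ∈ T.powerset, Closed S D ∧ w ∈ D

theorem core_subset (S : Fin n → Finset (Fin n)) (T : Finset (Fin n)) : core S T ⊆ T :=
  Finset.filter_subset _ _

theorem subset_core {S : Fin n → Finset (Fin n)} {T D : Finset (Fin n)}
    (hDT : D ⊆ T) (hD : Closed S D) : D ⊆ core S T := by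
  intro w hw
  exact Finset.mem_filter.2 ⟨hDT hw, D, Finset.mem_powerset.2 hDT, hD, hw⟩

theorem closed_core (S : Fin n → Finset (Fin n)) (T : Finset (Fin n)) :
    Closed S (core S T) := by
  intro w hw
  obtain ⟨hwT, D, hD, hcl, hwD⟩ := Finset.mem_filter.1 hw
  obtain ⟨x, hx⟩ := hcl w hwD
  obtain ⟨hx1, hx2⟩ := Finset.mem_inter.1 hx
  exact ⟨x, Finset.mem_inter.2 ⟨hx1, subset_core (Finset.mem_powerset.1 hD) hcl hx2⟩⟩

theorem core_congr {S S' : Fin n → Finset (Fin n)} {T : Finset (Fin n)}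
    (h : ∀ w ∈ T, S w = S' w) : core S T = core S' T := by
  apply Finset.filter_congr
  intro w hw
  constructor <;> rintro ⟨D, hD, hcl, hwD⟩ <;>
    refine ⟨D, hD, ?_, hwD⟩ <;> intro u hu <;>
      have hu' : u ∈ T := Finset.mem_powerset.1 hD hu
  · rw [← h u hu']; exact hcl u hu
  · rw [h u hu']; exact hcl u hu

/-- Peeling/removal lemma: if no closed subset of `T` is large, one can find a
removable set `W` of size `r` whose members have all their `T`-successors in `W`. -/
theorem removal (S : Fin n → Finset (Fin n)) (T : Finset (Fin n)) (r : ℕ)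
    (h : ∀ D ⊆ T, Closed S D → D.card + r ≤ T.card) :
    ∃ W ⊆ T, W.card = r ∧ ∀ w ∈ W, S w ∩ (T \ W) = ∅ := by
  induction r with
  | zero => exact ⟨∅, Finset.empty_subset _, Finset.card_empty, by simp⟩
  | succ r ih =>
    obtain ⟨W, hWT, hWcard, hWprop⟩ := ih (fun D hD hcl => by have := h D hD hcl; omega)
    have hnotclosed : ¬ Closed S (T \ W) := by
      intro hcl
      have := h (T \ W) (Finset.sdiff_subset) hcl
      have hcard : (T \ W).card = T.card - r := by
        rw [Finset.card_sdiff_of_subset hWT, hWcard]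
      have hrT : r + 1 ≤ T.card := by
        have := h ∅ (Finset.empty_subset _) (by intro w hw; simp at hw)
        simpa using this
      omega
    rw [Closed] at hnotclosed
    push_neg at hnotclosed
    obtain ⟨w, hwTW, hwno⟩ := hnotclosed
    refine ⟨insert w W, ?_, ?_, ?_⟩
    · intro u hu
      rcases Finset.mem_insert.1 hu with h' | h'
      · subst h'; exact (Finset.mem_sdiff.1 hwTW).1
      · exact hWT h'
    · rw [Finset.card_insert_of_notMem (fun hmem => (Finset.mem_sdiff.1 hwTW).2 hmem), hWcard]
    · intro u hu
      have hsub : T \ insert w W ⊆ T \ W := by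
        apply Finset.sdiff_subset_sdiff (le_refl _) (Finset.subset_insert _ _)
      rcases Finset.mem_insert.1 hu with h' | h'
      · subst h'
        exact Finset.subset_empty.1 (le_trans (Finset.inter_subset_inter (le_refl _) hsub)
          (by rw [hwno]))
      · exact Finset.subset_empty.1 (le_trans (Finset.inter_subset_inter (le_refl _) hsub)
          (by rw [hWprop u h']))

theorem core_large {S : Fin n → Finset (Fin n)} {T : Finset (Fin n)} {r : ℕ}
    (h : ¬ ∃ W ∈ T.powersetCard r, ∀ w ∈ W, S w ∩ (T \ W) = ∅) :
    T.card < (core S T).card + r := by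
  by_contra hc
  push_neg at hc
  obtain ⟨W, hWT, hWcard, hWprop⟩ := removal S T r (fun D hD hcl => by
    have h1 : D.card ≤ (core S T).card := Finset.card_le_card (subset_core hD hcl)
    omega)
  exact h ⟨W, Finset.mem_powersetCard.2 ⟨hWT, hWcard⟩, hWprop⟩

/-! ### The winning strategy -/

def Pred (i : ℤ) (k : ℕ) : Prop := if i = 1 then Odd k else Even k

theorem win_of_good {n : ℕ} (ω : GameSample n) (v : Fin n)
    (hne : ∀ w, (ω.1 w).Nonempty) (C : Finset (Fin n))
    (hC1 : ∀ w ∈ C, ω.2.1 w = ω.2.1 v)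
    (hC2 : ∀ w ∈ C, Pred (ω.2.1 v) (ω.2.2 w))
    (hC3 : ∀ w ∈ C, (ω.1 w ∩ C).Nonempty)
    (hC4 : (ω.1 v ∩ C).Nonempty) :
    WinningFrom (sampleE ω) ω.2.1 ω.2.2 (ω.2.1 v) v := by
  set i := ω.2.1 v with hi
  set σ : List (Fin n) → Fin n → Fin n := fun _ w =>
    if h : (ω.1 w ∩ C).Nonempty then h.choose else (hne w).choose with hσ
  have hσmem : ∀ h w, σ h w ∈ ω.1 w := by
    intro h w
    rw [hσ]
    dsimp only
    split
    · next h' => exact (Finset.mem_inter.1 h'.choose_spec).1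
    · exact (hne w).choose_spec
  have hσC : ∀ h w, (ω.1 w ∩ C).Nonempty → σ h w ∈ C := by
    intro h w hw
    rw [hσ]
    dsimp only
    rw [dif_pos hw]
    exact (Finset.mem_inter.1 hw.choose_spec).2
  refine ⟨σ, fun h w _ => hσmem h w, ?_⟩
  intro g hplay hcons
  have hmem : ∀ t, g (t+1) ∈ C := by
    intro t
    induction t with
    | zero =>
      have h0 : ω.2.1 (g 0) = i := by rw [hplay.1]
      have := hcons 0 h0
      rw [this, hplay.1]
      exact hσC (List.ofFn fun j : Fin 0 => g j) v hC4
    | succ t ih =>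
      have h0 : ω.2.1 (g (t+1)) = i := hC1 _ ih
      have := hcons (t+1) h0
      rw [this]
      exact hσC (List.ofFn fun j : Fin (t+1) => g j) _ (hC3 _ ih)
  have hwin : Pred i (playLimsup ω.2.2 g) := by
    apply limsup_pred _ _ (C.sup ω.2.2)
    · intro t ht
      obtain ⟨s, rfl⟩ := Nat.exists_eq_add_of_le ht
      rw [add_comm]
      exact Finset.le_sup (hmem s)
    · intro t ht
      obtain ⟨s, rfl⟩ := Nat.exists_eq_add_of_le ht
      rw [add_comm]
      exact hC2 _ (hmem s)
  exact hwin

end OW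

namespace OW

open Finset MeasureTheory Filter
open scoped ENNReal Classical

instance (n : ℕ) : MeasurableSingletonClass (Finset (Fin n)) :=
  ⟨fun _ => MeasurableSpace.measurableSet_top⟩

theorem measurableSet_all {α : Type*} [MeasurableSpace α] [Countable α]
    [MeasurableSingletonClass α] (s : Set α) : MeasurableSet s :=
  s.to_countable.measurableSet

/-! ### uniformFinset -/

theorem uniformFinset_apply {α : Type*} [MeasurableSpace α] [MeasurableSingletonClass α]
    [Countable α] (s : Finset α) (A : Set α) :
    uniformFinset s A = ((s.filter (fun x => x ∈ A)).card : ℝ≥0∞) / s.card := by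
  rw [uniformFinset, Measure.smul_apply, Measure.finset_sum_apply]
  have : ∀ x ∈ s, Measure.dirac x A = if x ∈ A then (1:ℝ≥0∞) else 0 := by
    intro x _
    rw [Measure.dirac_apply' x (measurableSet_all A)]
    simp [Set.indicator_apply]
  rw [Finset.sum_congr rfl this, Finset.sum_boole, smul_eq_mul, mul_comm, ← div_eq_mul_inv]

theorem uniformFinset_prob {α : Type*} [MeasurableSpace α] [MeasurableSingletonClass α]
    [Countable α] (s : Finset α) (hs : s.Nonempty) :
    IsProbabilityMeasure (uniformFinset s) := by
  constructor
  rw [uniformFinset, Measure.smul_apply, Measure.finset_sum_apply]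
  have : ∀ x ∈ s, Measure.dirac x (Set.univ : Set α) = 1 := fun x _ => by simp
  rw [Finset.sum_congr rfl this, Finset.sum_const, nsmul_eq_mul, mul_one, smul_eq_mul,
    ENNReal.inv_mul_cancel]
  · exact Nat.cast_ne_zero.2 (Finset.card_pos.2 hs).ne'
  · exact ENNReal.natCast_ne_top _

/-! ### cylinder events under pi measures -/

theorem pi_cyl {ι : Type*} [Fintype ι] {α : ι → Type*} [∀ i, MeasurableSpace (α i)]
    [∀ i, Countable (α i)] [∀ i, MeasurableSingletonClass (α i)]
    (μ : ∀ i, Measure (α i)) [∀ i, IsProbabilityMeasure (μ i)] (i₀ : ι) (A : Set (α i₀)) :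
    Measure.pi μ {x | x i₀ ∈ A} = μ i₀ A := by
  have : {x : ∀ i, α i | x i₀ ∈ A} =
      Set.pi Set.univ (fun i => if h : i = i₀ then h ▸ A else Set.univ) := by
    ext x
    simp only [Set.mem_setOf_eq, Set.mem_pi, Set.mem_univ, true_implies]
    constructor
    · intro hx i
      split
      · next h => subst h; exact hx
      · trivial
    · intro hx
      have := hx i₀
      simpa using this
  rw [this, Measure.pi_pi]
  rw [Finset.prod_eq_single i₀]
  · simp
  · intro b _ hb
    rw [dif_neg hb]
    simp [measure_univ]
  · intro h
    exact absurd (Finset.mem_univ i₀) h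

/-- Union bound over a family of cylinder events under a product measure. -/
theorem pi_union_bound {ι : Type*} [Fintype ι] [DecidableEq ι] {α : ι → Type*}
    [∀ i, MeasurableSpace (α i)] [∀ i, Countable (α i)] [∀ i, MeasurableSingletonClass (α i)]
    (μ : ∀ i, Measure (α i)) [∀ i, IsProbabilityMeasure (μ i)]
    (𝒲 : Finset (Finset ι)) (B : Finset ι → (i : ι) → Set (α i)) (k : ℕ) (q : ℝ≥0∞)
    (hk : ∀ W ∈ 𝒲, W.card = k)
    (hq : ∀ W ∈ 𝒲, ∀ w ∈ W, μ w (B W w) ≤ q) :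
    Measure.pi μ {x | ∃ W ∈ 𝒲, ∀ w ∈ W, x w ∈ B W w} ≤ 𝒲.card * q ^ k := by
  have hset : {x : ∀ i, α i | ∃ W ∈ 𝒲, ∀ w ∈ W, x w ∈ B W w} =
      ⋃ W ∈ 𝒲, {x : ∀ i, α i | ∀ w ∈ W, x w ∈ B W w} := by
    ext x; simp
  rw [hset]
  refine le_trans (measure_biUnion_finset_le 𝒲 _) ?_
  have hone : ∀ W ∈ 𝒲, Measure.pi μ {x : ∀ i, α i | ∀ w ∈ W, x w ∈ B W w} ≤ q ^ k := by
    intro W hW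
    have hpi : {x : ∀ i, α i | ∀ w ∈ W, x w ∈ B W w} =
        Set.pi Set.univ (fun i => if i ∈ W then B W i else Set.univ) := by
      ext x
      simp only [Set.mem_setOf_eq, Set.mem_pi, Set.mem_univ, true_implies]
      constructor
      · intro hx i
        split
        · next h => exact hx i h
        · trivial
      · intro hx w hw
        have := hx w
        rwa [if_pos hw] at this
    rw [hpi, Measure.pi_pi]
    have hprod : ∀ i ∈ Finset.univ, (μ i) (if i ∈ W then B W i else Set.univ)
        = if i ∈ W then (μ i) (B W i) else 1 := by
      intro i _
      split <;> simp [measure_univ]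
    rw [Finset.prod_congr rfl hprod, Finset.prod_ite_mem, Finset.univ_inter]
    calc ∏ i ∈ W, (μ i) (B W i) ≤ ∏ i ∈ W, q := Finset.prod_le_prod' (hq W hW)
    _ = q ^ W.card := Finset.prod_const q
    _ = q ^ k := by rw [hk W hW]
  calc ∑ W ∈ 𝒲, Measure.pi μ {x : ∀ i, α i | ∀ w ∈ W, x w ∈ B W w}
      ≤ ∑ W ∈ 𝒲, q ^ k := Finset.sum_le_sum hone
  _ = 𝒲.card * q ^ k := by rw [Finset.sum_const, nsmul_eq_mul]

/-! ### product measure slicing bounds -/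

theorem prod_bound_left {α β : Type*} [MeasurableSpace α] [MeasurableSpace β]
    (μ : Measure α) (ν : Measure β) [IsProbabilityMeasure μ] [IsProbabilityMeasure ν]
    (E : Set (α × β)) (hE : MeasurableSet E) (A : Set α) (hA : MeasurableSet A) (c : ℝ≥0∞)
    (h : ∀ a, a ∉ A → ν {y | (a, y) ∈ E} ≤ c) : μ.prod ν E ≤ μ A + c := by
  rw [Measure.prod_apply hE]
  have hb : ∀ a, ν (Prod.mk a ⁻¹' E) ≤ A.indicator (fun _ => 1) a + c := by
    intro a
    by_cases ha : a ∈ A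
    · rw [Set.indicator_of_mem ha]
      exact le_add_right prob_le_one
    · rw [Set.indicator_of_notMem ha, zero_add]
      exact h a ha
  calc ∫⁻ a, ν (Prod.mk a ⁻¹' E) ∂μ ≤ ∫⁻ a, (A.indicator (fun _ => 1) a + c) ∂μ :=
        lintegral_mono hb
  _ = (∫⁻ a, A.indicator (fun _ => 1) a ∂μ) + ∫⁻ _, c ∂μ :=
        lintegral_add_left ((measurable_one).indicator hA) _
  _ = μ A + c := by
        rw [lintegral_indicator_const hA, lintegral_const]
        simp [measure_univ]

theorem prod_bound_right {α β : Type*} [MeasurableSpace α] [MeasurableSpace β]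
    (μ : Measure α) (ν : Measure β) [IsProbabilityMeasure μ] [IsProbabilityMeasure ν]
    (E : Set (α × β)) (hE : MeasurableSet E) (c : ℝ≥0∞)
    (h : ∀ b, μ {x | (x, b) ∈ E} ≤ c) : μ.prod ν E ≤ c := by
  rw [Measure.prod_apply_symm hE]
  calc ∫⁻ b, μ ((fun x => (x, b)) ⁻¹' E) ∂ν ≤ ∫⁻ _, c ∂ν := lintegral_mono (fun b => h b)
  _ = c := by rw [lintegral_const]; simp [measure_univ]

end OW

namespace OW

open Finset MeasureTheory Filter
open scoped ENNReal Classical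

theorem prod_bound_fst {α β : Type*} [MeasurableSpace α] [MeasurableSpace β]
    (μ : Measure α) (ν : Measure β) [IsProbabilityMeasure μ] [IsProbabilityMeasure ν]
    (E : Set (α × β)) (hE : MeasurableSet E) (c : ℝ≥0∞)
    (h : ∀ a, ν {y | (a, y) ∈ E} ≤ c) : μ.prod ν E ≤ c := by
  have := prod_bound_left μ ν E hE ∅ MeasurableSet.empty c (fun a _ => h a)
  simpa using this

/-- Decoupling coordinate `i₀` from the rest of a product measure. -/
theorem pi_decouple {ι : Type*} [Fintype ι] [DecidableEq ι] {α : Type*} [MeasurableSpace α]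
    [Countable α] [MeasurableSingletonClass α] [Inhabited α]
    (μ : Measure α) [IsProbabilityMeasure μ] (i₀ : ι)
    (F : (ι → α) → Set α)
    (hF : ∀ x y : ι → α, (∀ j, j ≠ i₀ → x j = y j) → F x = F y)
    (c : ℝ≥0∞) (hc : ∀ x, μ (F x) ≤ c) :
    Measure.pi (fun _ : ι => μ) {x | x i₀ ∈ F x} ≤ c := by
  have mp := measurePreserving_piEquivPiSubtypeProd (fun _ : ι => μ) (fun j => j ≠ i₀)
  set e := MeasurableEquiv.piEquivPiSubtypeProd (fun _ : ι => α) (fun j => j ≠ i₀) with he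
  set E : Set (ι → α) := {x | x i₀ ∈ F x} with hE
  have hmeas : MeasurableSet (e.symm ⁻¹' E) := measurableSet_all _
  have hEeq : E = e ⁻¹' (e.symm ⁻¹' E) := by
    rw [Set.preimage_preimage]
    ext x
    simp
  have h1 : Measure.pi (fun _ : ι => μ) E =
      ((Measure.pi fun _ : {j : ι // j ≠ i₀} => μ).prod
        (Measure.pi fun _ : {j : ι // ¬ j ≠ i₀} => μ)) (e.symm ⁻¹' E) := by
    nth_rewrite 1 [hEeq]
    exact mp.measure_preimage hmeas.nullMeasurableSet
  rw [h1]
  apply prod_bound_fst _ _ _ hmeas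
  intro x
  set j₀ : {j : ι // ¬ j ≠ i₀} := ⟨i₀, by simp⟩ with hj₀
  set z : ι → α := e.symm (x, fun _ => default) with hz
  have hslice : {y : {j : ι // ¬ j ≠ i₀} → α | (x, y) ∈ e.symm ⁻¹' E} =
      {y : {j : ι // ¬ j ≠ i₀} → α | y j₀ ∈ F z} := by
    ext y
    have hcoord : ∀ (y' : {j : ι // ¬ j ≠ i₀} → α) (j : ι),
        e.symm (x, y') j = if h : j ≠ i₀ then x ⟨j, h⟩ else y' ⟨j, h⟩ := by
      intro y' j
      simp [he, MeasurableEquiv.piEquivPiSubtypeProd, Equiv.piEquivPiSubtypeProd]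
    have hFz : F (e.symm (x, y)) = F z := by
      apply hF
      intro j hj
      rw [hz, hcoord y j, hcoord (fun _ => default) j, dif_pos hj, dif_pos hj]
    simp only [Set.mem_preimage, hE, Set.mem_setOf_eq]
    rw [hcoord y i₀, dif_neg (by simp), hFz]
  rw [hslice, pi_cyl]
  exact hc z

/-! ### marginal computations -/

theorem uniformFinset_eq {α : Type*} [MeasurableSpace α] [MeasurableSingletonClass α]
    [Countable α] (s t : Finset α) (A : Set α)
    (ht : ∀ x, x ∈ t ↔ x ∈ s ∧ x ∈ A) :
    uniformFinset s A = (t.card : ℝ≥0∞) / s.card := by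
  rw [uniformFinset, Measure.smul_apply, Measure.finset_sum_apply]
  have hd : ∀ x ∈ s, Measure.dirac x A = if x ∈ t then (1:ℝ≥0∞) else 0 := by
    intro x hx
    rw [Measure.dirac_apply' x (measurableSet_all A)]
    by_cases hxA : x ∈ A
    · rw [Set.indicator_of_mem hxA, if_pos ((ht x).2 ⟨hx, hxA⟩)]
      rfl
    · rw [Set.indicator_of_notMem hxA, if_neg (fun hxt => hxA ((ht x).1 hxt).2)]
  rw [Finset.sum_congr rfl hd, Finset.sum_ite_mem]
  have hts : s ∩ t = t := Finset.inter_eq_right.2 (fun x hx => ((ht x).1 hx).1)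
  rw [hts, Finset.sum_const, nsmul_eq_mul, mul_one, smul_eq_mul, mul_comm, ← div_eq_mul_inv]

theorem marg_miss {n d : ℕ} (U : Finset (Fin n)) :
    uniformFinset (powersetCard d (univ : Finset (Fin n))) {s : Finset (Fin n) | s ∩ U = ∅}
      = (((n - U.card).choose d : ℕ) : ℝ≥0∞) / ((n.choose d : ℕ) : ℝ≥0∞) := by
  rw [uniformFinset_eq (powersetCard d (univ : Finset (Fin n))) (powersetCard d Uᶜ) _ ?_]
  · rw [Finset.card_powersetCard, Finset.card_powersetCard, Finset.card_compl,
      Finset.card_univ, Fintype.card_fin]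
  · intro x
    simp only [Finset.mem_powersetCard, Set.mem_setOf_eq]
    constructor
    · rintro ⟨hsub, hcard⟩
      refine ⟨⟨Finset.subset_univ x, hcard⟩, ?_⟩
      rw [Finset.eq_empty_iff_forall_notMem]
      intro a ha
      obtain ⟨has, haU⟩ := Finset.mem_inter.1 ha
      exact (Finset.mem_compl.1 (hsub has)) haU
    · rintro ⟨⟨-, hcard⟩, hint⟩
      refine ⟨?_, hcard⟩
      intro a ha
      rw [Finset.mem_compl]
      intro haU
      have : a ∈ x ∩ U := Finset.mem_inter.2 ⟨ha, haU⟩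
      rw [hint] at this
      exact absurd this (Finset.notMem_empty a)

theorem marg_out {n d : ℕ} :
    uniformFinset (powersetCard d (univ : Finset (Fin n)))
      {s : Finset (Fin n) | s ∉ powersetCard d univ} = 0 := by
  rw [uniformFinset_eq (powersetCard d (univ : Finset (Fin n))) ∅ _ ?_]
  · simp
  · intro x
    simp only [Finset.notMem_empty, false_iff, Set.mem_setOf_eq]
    rintro ⟨h1, h2⟩
    exact h2 h1

theorem marg_owner {ι : ℤ} (hι : ι = -1 ∨ ι = 1) :
    uniformFinset ({-1, 1} : Finset ℤ) {z : ℤ | z ≠ ι} = 2⁻¹ := by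
  rw [uniformFinset_eq ({-1, 1} : Finset ℤ) (({-1, 1} : Finset ℤ).erase ι) _ ?_]
  · have hcard : (({-1, 1} : Finset ℤ).erase ι).card = 1 := by
      rw [Finset.card_erase_of_mem]
      · decide
      · rcases hι with h | h <;> subst h <;> decide
    have hcard2 : (({-1, 1} : Finset ℤ)).card = 2 := by decide
    rw [hcard, hcard2]
    norm_num
  · intro x
    rw [Finset.mem_erase]
    simp only [Set.mem_setOf_eq]
    tauto

theorem marg_owner_out :
    uniformFinset ({-1, 1} : Finset ℤ) {z : ℤ | z ≠ -1 ∧ z ≠ 1} = 0 := by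
  rw [uniformFinset_eq ({-1, 1} : Finset ℤ) ∅ _ ?_]
  · simp
  · intro x
    simp only [Finset.notMem_empty, false_iff, Set.mem_setOf_eq]
    rintro ⟨h1, h2⟩
    simp only [Finset.mem_insert, Finset.mem_singleton] at h1
    rcases h1 with h | h
    · exact h2.1 h
    · exact h2.2 h

/-! ### ENNReal helpers -/

theorem enn_pow_bound {a b c : ℕ} (h : a * 2 ^ c ≤ 2 ^ b) :
    (a : ℝ≥0∞) * 2⁻¹ ^ b ≤ 2⁻¹ ^ c := by
  have h0 : ((2:ℝ≥0∞) ^ c) ≠ 0 := pow_ne_zero _ (by norm_num)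
  have ht : ((2:ℝ≥0∞) ^ c) ≠ ⊤ := ENNReal.pow_ne_top (by norm_num)
  have hcast : (a:ℝ≥0∞) * 2 ^ c ≤ 2 ^ b := by
    have := (Nat.cast_le (α := ℝ≥0∞)).2 h
    push_cast at this
    exact this
  rw [← ENNReal.mul_le_mul_iff_left h0 ht]
  have hy : (2:ℝ≥0∞)⁻¹ ^ c * 2 ^ c = 1 := by
    rw [← mul_pow, ENNReal.inv_mul_cancel (by norm_num) (by norm_num), one_pow]
  rw [hy]
  calc (a:ℝ≥0∞) * 2⁻¹ ^ b * 2 ^ c = ((a:ℝ≥0∞) * 2 ^ c) * 2⁻¹ ^ b := by ring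
  _ ≤ (2:ℝ≥0∞) ^ b * 2⁻¹ ^ b := mul_le_mul_left hcast _
  _ = 1 := by rw [← mul_pow, ENNReal.mul_inv_cancel (by norm_num) (by norm_num), one_pow]

theorem enn_div_le_div {a b c e : ℕ} (hb : 0 < b) (he : 0 < e) (h : a * e ≤ c * b) :
    (a : ℝ≥0∞) / b ≤ (c : ℝ≥0∞) / e := by
  have hb0 : ((b:ℕ):ℝ≥0∞) ≠ 0 := Nat.cast_ne_zero.2 hb.ne'
  have he0 : ((e:ℕ):ℝ≥0∞) ≠ 0 := Nat.cast_ne_zero.2 he.ne'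
  rw [ENNReal.div_le_iff hb0 (ENNReal.natCast_ne_top b), div_eq_mul_inv, mul_right_comm,
    ← div_eq_mul_inv, ENNReal.le_div_iff_mul_le (Or.inl he0) (Or.inl (ENNReal.natCast_ne_top e))]
  have := (Nat.cast_le (α := ℝ≥0∞)).2 h
  push_cast at this
  exact this

end OW

namespace OW

open Finset MeasureTheory Filter
open scoped ENNReal Classical

/-! ### event definitions -/

noncomputable def Tset (n : ℕ) (ι : ℤ) (ap : (Fin (n+1) → ℤ) × (Fin (n+1) → ℕ)) :
    Finset (Fin (n+1)) :=
  ((univ : Finset (Fin (n+1))).erase 0).filter fun w => ap.1 w = ι ∧ Pred ι (ap.2 w)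

noncomputable def Aset (n : ℕ) (ι : ℤ) (a : Fin (n+1) → ℤ) : Finset (Fin (n+1)) :=
  ((univ : Finset (Fin (n+1))).erase 0).filter fun w => a w = ι

theorem Tset_eq (n : ℕ) (ι : ℤ) (ap : (Fin (n+1) → ℤ) × (Fin (n+1) → ℕ)) :
    Tset n ι ap = (Aset n ι ap.1).filter fun w => Pred ι (ap.2 w) := by
  rw [Tset, Aset, Finset.filter_filter]

def WEvent (n : ℕ) (S : Fin (n+1) → Finset (Fin (n+1))) (T : Finset (Fin (n+1))) : Prop :=
  ∃ W ∈ T.powersetCard (T.card - T.card / 2), ∀ w ∈ W, S w ∩ (T \ W) = ∅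

def Gset (n : ℕ) : Set (GameSample (n+1)) :=
  {ω | (∀ w, (ω.1 w).Nonempty) ∧ ∃ C : Finset (Fin (n+1)),
    (∀ w ∈ C, ω.2.1 w = ω.2.1 0 ∧ Pred (ω.2.1 0) (ω.2.2 w)) ∧
    (∀ w ∈ C, (ω.1 w ∩ C).Nonempty) ∧ (ω.1 0 ∩ C).Nonempty}

def E1 (n d : ℕ) : Set (GameSample (n+1)) :=
  {ω | ∃ w, ω.1 w ∉ powersetCard d (univ : Finset (Fin (n+1)))}

def E2 (n : ℕ) : Set (GameSample (n+1)) := {ω | ω.2.1 0 ≠ -1 ∧ ω.2.1 0 ≠ 1}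

def E3 (n : ℕ) : Set (GameSample (n+1)) :=
  {ω | (Tset n (-1) ω.2).card < n/1000 ∨ (Tset n 1 ω.2).card < n/1000}

def E4 (n : ℕ) : Set (GameSample (n+1)) :=
  {ω | n/1000 ≤ (Tset n (ω.2.1 0) ω.2).card ∧ WEvent n ω.1 (Tset n (ω.2.1 0) ω.2)}

def E5 (n : ℕ) : Set (GameSample (n+1)) :=
  {ω | n/1000 ≤ (Tset n (ω.2.1 0) ω.2).card ∧ ¬ WEvent n ω.1 (Tset n (ω.2.1 0) ω.2) ∧
    ω.1 0 ∩ core ω.1 (Tset n (ω.2.1 0) ω.2) = ∅}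

/-! ### G implies winning -/

theorem G_subset_win (n : ℕ) :
    Gset n ⊆ {ω : GameSample (n+1) |
      WinningFrom (sampleE ω) ω.2.1 ω.2.2 (ω.2.1 0) 0} := by
  rintro ω ⟨hne, C, hC12, hC3, hC4⟩
  exact win_of_good ω 0 hne C (fun w hw => (hC12 w hw).1) (fun w hw => (hC12 w hw).2) hC3 hC4

/-! ### decomposition of the bad event -/

theorem decomp (n d : ℕ) (hd : 1 ≤ d) :
    (Gset n)ᶜ ⊆ E1 n d ∪ E2 n ∪ E3 n ∪ E4 n ∪ E5 n := by
  intro ω hω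
  by_cases h1 : ω ∈ E1 n d
  · exact Or.inl (Or.inl (Or.inl (Or.inl h1)))
  by_cases h2 : ω ∈ E2 n
  · exact Or.inl (Or.inl (Or.inl (Or.inr h2)))
  by_cases h3 : ω ∈ E3 n
  · exact Or.inl (Or.inl (Or.inr h3))
  by_cases h4 : ω ∈ E4 n
  · exact Or.inl (Or.inr h4)
  right
  -- now derive E5
  have hι : ω.2.1 0 = -1 ∨ ω.2.1 0 = 1 := by
    rw [E2, Set.mem_setOf_eq] at h2
    by_contra hc
    push_neg at hc
    exact h2 ⟨hc.1, hc.2⟩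
  have hT : n/1000 ≤ (Tset n (ω.2.1 0) ω.2).card := by
    rw [E3, Set.mem_setOf_eq] at h3
    push_neg at h3
    rcases hι with h | h <;> rw [h]
    · exact h3.1
    · exact h3.2
  have hne : ∀ w, (ω.1 w).Nonempty := by
    intro w
    rw [E1, Set.mem_setOf_eq] at h1
    push_neg at h1
    have hw := h1 w
    rw [Finset.mem_powersetCard] at hw
    rw [← Finset.card_pos, hw.2]
    omega
  have hnoW : ¬ WEvent n ω.1 (Tset n (ω.2.1 0) ω.2) := by
    intro hW
    exact h4 ⟨hT, hW⟩
  refine ⟨hT, hnoW, ?_⟩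
  by_contra hcne
  rw [← ne_eq, ← Finset.nonempty_iff_ne_empty] at hcne
  apply hω
  refine ⟨hne, core ω.1 (Tset n (ω.2.1 0) ω.2), ?_, ?_, hcne⟩
  · intro w hw
    have hwT := core_subset ω.1 (Tset n (ω.2.1 0) ω.2) hw
    rw [Tset, Finset.mem_filter] at hwT
    exact hwT.2
  · exact fun w hw => closed_core ω.1 (Tset n (ω.2.1 0) ω.2) w hw

end OW

namespace OW

open Finset MeasureTheory Filter
open scoped ENNReal Classical

noncomputable def Qfrac (n d : ℕ) : ℝ≥0∞ :=
  ((((n+1) - n/2000).choose d : ℕ) : ℝ≥0∞) / (((n+1).choose d : ℕ) : ℝ≥0∞)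

noncomputable def Qpow (n d : ℕ) : ℝ≥0∞ :=
  ((((n+1) - n/2000 : ℕ)) : ℝ≥0∞) ^ d / (((n+1 : ℕ)) : ℝ≥0∞) ^ d

theorem Qfrac_le_Qpow {n d : ℕ} (hd2 : d ≤ n+1) : Qfrac n d ≤ Qpow n d := by
  rw [Qfrac, Qpow]
  have h1 : (((n+1) - n/2000 : ℕ) : ℝ≥0∞) ^ d = ((((n+1) - n/2000)^d : ℕ) : ℝ≥0∞) := by
    push_cast; ring
  have h2 : (((n+1) : ℕ) : ℝ≥0∞) ^ d = (((n+1)^d : ℕ) : ℝ≥0∞) := by push_cast; ring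
  rw [h1, h2]
  apply enn_div_le_div (Nat.choose_pos hd2) (Nat.pow_pos (by omega))
  calc ((n+1) - n/2000).choose d * (n+1)^d
      ≤ (n+1).choose d * ((n+1) - n/2000)^d := choose_ratio d (Nat.sub_le _ _)
  _ = ((n+1) - n/2000)^d * (n+1).choose d := by ring

theorem Qpow_le_one {n d : ℕ} : Qpow n d ≤ 1 := by
  rw [Qpow, ENNReal.div_le_iff (pow_ne_zero _ (by exact_mod_cast Nat.succ_ne_zero n))
    (ENNReal.pow_ne_top (ENNReal.natCast_ne_top _)), one_mul]
  apply pow_le_pow_left₀ (zero_le)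
  exact_mod_cast Nat.sub_le _ _

theorem nat_choose_le_two_pow (m r : ℕ) : m.choose r ≤ 2^m := by
  rcases le_or_gt r m with h | h
  · have h1 : m.choose r ≤ ∑ i ∈ Finset.range (m+1), m.choose i :=
      Finset.single_le_sum (f := fun i => m.choose i) (fun _ _ => Nat.zero_le _)
        (Finset.mem_range.2 (by omega))
    rw [Nat.sum_range_choose m] at h1
    exact h1
  · rw [Nat.choose_eq_zero_of_lt h]
    exact Nat.zero_le _

theorem nat_two_pow_le (m : ℕ) : 2^m ≤ 2 * 4^(m/2) := by
  have h1 := Nat.div_add_mod m 2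
  have h2 : m % 2 < 2 := Nat.mod_lt _ (by norm_num)
  calc 2^m = 2^(2*(m/2) + m % 2) := by rw [h1]
  _ = (2^2)^(m/2) * 2^(m % 2) := by rw [pow_add, pow_mul]
  _ ≤ 4^(m/2) * 2 := by
      have : 2^(m % 2) ≤ 2 := by
        interval_cases h : m % 2 <;> norm_num
      exact Nat.mul_le_mul_left _ this
  _ = 2 * 4^(m/2) := by ring

theorem nat_bound1 {n : ℕ} (hn : 10 ≤ n) : n.choose (n/10) * 2^(n/10) ≤ 2^(n - n/10) := by
  set t1 := n/10 with ht1
  have hq := Nat.div_add_mod n 10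
  have hr : n % 10 < 10 := Nat.mod_lt _ (by norm_num)
  have ht1pos : 1 ≤ t1 := by rw [ht1]; omega
  have hC : n.choose t1 ≤ 76^t1 := by
    have : n ≤ 19 * t1 := by omega
    calc n.choose t1 ≤ (4*19)^t1 := choose_le_of_le ht1pos this
    _ = 76^t1 := by norm_num
  calc n.choose t1 * 2^t1 ≤ 76^t1 * 2^t1 := Nat.mul_le_mul_right _ hC
  _ = 152^t1 := by rw [← Nat.mul_pow]
  _ ≤ 512^t1 := Nat.pow_le_pow_left (by norm_num) _
  _ = 2^(9*t1) := by rw [pow_mul]; norm_num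
  _ ≤ 2^(n - t1) := Nat.pow_le_pow_right (by norm_num) (by omega)

theorem nat_bound2 {n : ℕ} (hn : 1000 ≤ n) :
    n.choose (n/1000) * 2^(n/1000) ≤ 2^(n/10 - n/1000) := by
  set m0 := n/1000 with hm0
  set t1 := n/10 with ht1
  have hq := Nat.div_add_mod n 1000
  have hr : n % 1000 < 1000 := Nat.mod_lt _ (by norm_num)
  have hm0pos : 1 ≤ m0 := by rw [hm0]; omega
  have hC : n.choose m0 ≤ 8000^m0 := by
    have : n ≤ 2000 * m0 := by omega
    calc n.choose m0 ≤ (4*2000)^m0 := choose_le_of_le hm0pos this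
    _ = 8000^m0 := by norm_num
  have hdd : m0 = t1 / 100 := by
    rw [hm0, ht1, Nat.div_div_eq_div_mul]
  have h15 : 15 * m0 ≤ t1 := by
    have h100 : 100 * m0 ≤ t1 := by
      rw [hdd, mul_comm]
      exact Nat.div_mul_le_self t1 100
    omega
  calc n.choose m0 * 2^m0 ≤ 8000^m0 * 2^m0 := Nat.mul_le_mul_right _ hC
  _ = 16000^m0 := by rw [← Nat.mul_pow]
  _ ≤ 16384^m0 := Nat.pow_le_pow_left (by norm_num) _
  _ = 2^(14*m0) := by rw [pow_mul]; norm_num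
  _ ≤ 2^(t1 - m0) := Nat.pow_le_pow_right (by norm_num) (by omega)

theorem P_notPred (P : Measure ℕ) (hPe : P {k | Even k} = 1/2) (hPo : P {k | Odd k} = 1/2)
    (ι : ℤ) : P {k : ℕ | ¬ Pred ι k} = 2⁻¹ := by
  by_cases h : ι = 1
  · subst h
    have : {k : ℕ | ¬ Pred 1 k} = {k | Even k} := by
      ext k
      simp [Pred, Nat.not_odd_iff_even]
    rw [this, hPe, one_div]
  · have : {k : ℕ | ¬ Pred ι k} = {k | Odd k} := by
      ext k
      simp [Pred, if_neg h, Nat.not_even_iff_odd]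
    rw [this, hPo, one_div]

end OW

namespace OW

open Finset MeasureTheory Filter
open scoped ENNReal Classical

theorem E1_bound (P : Measure ℕ) [IsProbabilityMeasure P] (n d : ℕ) (hd2 : d ≤ n+1) :
    gameMeasure (n+1) d P (E1 n d) = 0 := by
  haveI : IsProbabilityMeasure (uniformFinset (powersetCard d (univ : Finset (Fin (n+1))))) :=
    uniformFinset_prob _ (Finset.powersetCard_nonempty.2
      (by rw [Finset.card_univ, Fintype.card_fin]; exact hd2))
  haveI : IsProbabilityMeasure (uniformFinset ({-1,1} : Finset ℤ)) :=
    uniformFinset_prob _ ⟨-1, by decide⟩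
  have hE : E1 n d = {S : Fin (n+1) → Finset (Fin (n+1)) |
      ∃ w, S w ∉ powersetCard d (univ : Finset (Fin (n+1)))} ×ˢ (Set.univ) := by
    ext ω
    simp [E1, Set.mem_prod]
  rw [gameMeasure, hE, Measure.prod_prod, measure_univ, mul_one]
  have hsub : {S : Fin (n+1) → Finset (Fin (n+1)) |
      ∃ w, S w ∉ powersetCard d (univ : Finset (Fin (n+1)))} =
      ⋃ w ∈ (univ : Finset (Fin (n+1))), {S : Fin (n+1) → Finset (Fin (n+1)) |
        S w ∈ {s : Finset (Fin (n+1)) | s ∉ powersetCard d univ}} := by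
    ext S
    simp
  rw [hsub]
  refine le_antisymm (le_trans (measure_biUnion_finset_le _ _) ?_) (zero_le)
  have hzero : ∀ w ∈ (univ : Finset (Fin (n+1))),
      (Measure.pi fun _ : Fin (n+1) => uniformFinset (powersetCard d (univ : Finset (Fin (n+1)))))
        {S : Fin (n+1) → Finset (Fin (n+1)) |
          S w ∈ {s : Finset (Fin (n+1)) | s ∉ powersetCard d univ}} = 0 := by
    intro w _
    rw [pi_cyl, marg_out]
  rw [Finset.sum_congr rfl hzero]
  simp

theorem E2_bound (P : Measure ℕ) [IsProbabilityMeasure P] (n d : ℕ) (hd2 : d ≤ n+1) :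
    gameMeasure (n+1) d P (E2 n) = 0 := by
  haveI : IsProbabilityMeasure (uniformFinset (powersetCard d (univ : Finset (Fin (n+1))))) :=
    uniformFinset_prob _ (Finset.powersetCard_nonempty.2
      (by rw [Finset.card_univ, Fintype.card_fin]; exact hd2))
  haveI : IsProbabilityMeasure (uniformFinset ({-1,1} : Finset ℤ)) :=
    uniformFinset_prob _ ⟨-1, by decide⟩
  have hE : E2 n = (Set.univ : Set (Fin (n+1) → Finset (Fin (n+1)))) ×ˢ
      (({a : Fin (n+1) → ℤ | a 0 ∈ {z : ℤ | z ≠ -1 ∧ z ≠ 1}}) ×ˢ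
        (Set.univ : Set (Fin (n+1) → ℕ))) := by
    ext ω
    simp [E2, Set.mem_prod]
  rw [gameMeasure, hE, Measure.prod_prod, Measure.prod_prod, measure_univ, measure_univ,
    one_mul, mul_one, pi_cyl, marg_owner_out]

end OW

namespace OW

open Finset MeasureTheory Filter
open scoped ENNReal Classical

theorem erase_card (n : ℕ) : ((univ : Finset (Fin (n+1))).erase 0).card = n := by
  rw [Finset.card_erase_of_mem (Finset.mem_univ _), Finset.card_univ, Fintype.card_fin]
  omega

theorem Aset_bound (n : ℕ) (ι : ℤ) (hι : ι = -1 ∨ ι = 1) (hn : 10 ≤ n) :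
    Measure.pi (fun _ : Fin (n+1) => uniformFinset ({-1,1} : Finset ℤ))
      {a : Fin (n+1) → ℤ | (Aset n ι a).card < n/10} ≤ 2⁻¹ ^ (n/10) := by
  haveI : IsProbabilityMeasure (uniformFinset ({-1,1} : Finset ℤ)) :=
    uniformFinset_prob _ ⟨-1, by decide⟩
  have hsub : {a : Fin (n+1) → ℤ | (Aset n ι a).card < n/10} ⊆
      {a : Fin (n+1) → ℤ | ∃ W ∈ ((univ : Finset (Fin (n+1))).erase 0).powersetCard (n - n/10),
        ∀ w ∈ W, a w ∈ {z : ℤ | z ≠ ι}} := by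
    intro a ha
    simp only [Set.mem_setOf_eq] at ha ⊢
    have hsplit := Finset.card_filter_add_card_filter_not
      (s := (univ : Finset (Fin (n+1))).erase 0) (p := fun w => a w = ι)
    rw [erase_card] at hsplit
    have hAeq : (((univ : Finset (Fin (n+1))).erase 0).filter (fun w => a w = ι)).card
        = (Aset n ι a).card := rfl
    rw [hAeq] at hsplit
    have hbadcard : n - n/10 ≤
        ((((univ : Finset (Fin (n+1))).erase 0)).filter (fun w => ¬ (a w = ι))).card := by
      omega
    obtain ⟨W, hWsub, hWcard⟩ := Finset.exists_subset_card_eq hbadcard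
    refine ⟨W, Finset.mem_powersetCard.2
      ⟨le_trans hWsub (Finset.filter_subset _ _), hWcard⟩, ?_⟩
    intro w hw
    exact (Finset.mem_filter.1 (hWsub hw)).2
  refine le_trans (measure_mono hsub) ?_
  refine le_trans (pi_union_bound _ _ _ (n - n/10) 2⁻¹ ?_ ?_) ?_
  · intro W hW
    exact (Finset.mem_powersetCard.1 hW).2
  · intro W _ w _
    rw [marg_owner hι]
  · rw [Finset.card_powersetCard, erase_card]
    have hsymm : n.choose (n - n/10) = n.choose (n/10) :=
      Nat.choose_symm (Nat.div_le_self n 10)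
    rw [hsymm]
    exact enn_pow_bound (nat_bound1 hn)

theorem Pset_bound (P : Measure ℕ) [IsProbabilityMeasure P]
    (hPe : P {k | Even k} = 1/2) (hPo : P {k | Odd k} = 1/2)
    (n : ℕ) (ι : ℤ) (hn : 1000 ≤ n) (a : Fin (n+1) → ℤ)
    (hM : n/10 ≤ (Aset n ι a).card) :
    Measure.pi (fun _ : Fin (n+1) => P)
      {p : Fin (n+1) → ℕ | (Tset n ι (a, p)).card < n/1000} ≤ 2⁻¹ ^ (n/1000) := by
  set A := Aset n ι a with hA
  set M := A.card with hMdef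
  have hMn : M ≤ n := by
    have := Finset.card_le_card (Finset.filter_subset (fun w => a w = ι)
      ((univ : Finset (Fin (n+1))).erase 0))
    rw [erase_card] at this
    exact this
  have hm0t1 : n/1000 ≤ n/10 := Nat.div_le_div_left (by norm_num) (by norm_num)
  have hsub : {p : Fin (n+1) → ℕ | (Tset n ι (a, p)).card < n/1000} ⊆
      {p : Fin (n+1) → ℕ | ∃ W ∈ A.powersetCard (M - n/1000),
        ∀ w ∈ W, p w ∈ {k : ℕ | ¬ Pred ι k}} := by
    intro p hp
    simp only [Set.mem_setOf_eq] at hp ⊢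
    have hsplit := Finset.card_filter_add_card_filter_not
      (s := A) (p := fun w => Pred ι (p w))
    have hTeq : (A.filter (fun w => Pred ι (p w))).card = (Tset n ι (a, p)).card := by
      rw [Tset_eq]
    rw [hTeq] at hsplit
    have hbadcard : M - n/1000 ≤ (A.filter (fun w => ¬ Pred ι (p w))).card := by omega
    obtain ⟨W, hWsub, hWcard⟩ := Finset.exists_subset_card_eq hbadcard
    refine ⟨W, Finset.mem_powersetCard.2
      ⟨le_trans hWsub (Finset.filter_subset _ _), hWcard⟩, ?_⟩
    intro w hw
    exact (Finset.mem_filter.1 (hWsub hw)).2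
  refine le_trans (measure_mono hsub) ?_
  refine le_trans (pi_union_bound _ _ _ (M - n/1000) 2⁻¹ ?_ ?_) ?_
  · intro W hW
    exact (Finset.mem_powersetCard.1 hW).2
  · intro W _ w _
    rw [P_notPred P hPe hPo]
  · rw [Finset.card_powersetCard, ← hMdef]
    have hm0M : n/1000 ≤ M := le_trans hm0t1 hM
    have hsymm : M.choose (M - n/1000) = M.choose (n/1000) := Nat.choose_symm hm0M
    rw [hsymm]
    calc (M.choose (n/1000) : ℝ≥0∞) * 2⁻¹ ^ (M - n/1000)
        ≤ (n.choose (n/1000) : ℝ≥0∞) * 2⁻¹ ^ (n/10 - n/1000) := by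
          apply mul_le_mul'
          · exact_mod_cast Nat.choose_le_choose _ hMn
          · apply pow_le_pow_of_le_one (zero_le)
            · exact ENNReal.inv_le_one.2 one_le_two
            · omega
    _ ≤ 2⁻¹ ^ (n/1000) := enn_pow_bound (nat_bound2 hn)

theorem E3_bound (P : Measure ℕ) [IsProbabilityMeasure P]
    (hPe : P {k | Even k} = 1/2) (hPo : P {k | Odd k} = 1/2)
    (n d : ℕ) (hd2 : d ≤ n+1) (hn : 1000 ≤ n) :
    gameMeasure (n+1) d P (E3 n) ≤ 2 * (2⁻¹ ^ (n/10) + 2⁻¹ ^ (n/1000)) := by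
  haveI : IsProbabilityMeasure (uniformFinset (powersetCard d (univ : Finset (Fin (n+1))))) :=
    uniformFinset_prob _ (Finset.powersetCard_nonempty.2
      (by rw [Finset.card_univ, Fintype.card_fin]; exact hd2))
  haveI : IsProbabilityMeasure (uniformFinset ({-1,1} : Finset ℤ)) :=
    uniformFinset_prob _ ⟨-1, by decide⟩
  have key : ∀ ι : ℤ, ι = -1 ∨ ι = 1 →
      gameMeasure (n+1) d P ((Set.univ : Set (Fin (n+1) → Finset (Fin (n+1)))) ×ˢ
        {ap : (Fin (n+1) → ℤ) × (Fin (n+1) → ℕ) | (Tset n ι ap).card < n/1000})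
      ≤ 2⁻¹ ^ (n/10) + 2⁻¹ ^ (n/1000) := by
    intro ι hι
    rw [gameMeasure, Measure.prod_prod, measure_univ, one_mul]
    refine le_trans (prod_bound_left _ _ _ (measurableSet_all _)
      {a : Fin (n+1) → ℤ | (Aset n ι a).card < n/10} (measurableSet_all _)
      (2⁻¹ ^ (n/1000)) ?_) ?_
    · intro a ha
      simp only [Set.mem_setOf_eq, not_lt] at ha
      have hs : {y : Fin (n+1) → ℕ |
          (a, y) ∈ {ap : (Fin (n+1) → ℤ) × (Fin (n+1) → ℕ) | (Tset n ι ap).card < n/1000}}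
          = {p : Fin (n+1) → ℕ | (Tset n ι (a, p)).card < n/1000} := rfl
      rw [hs]
      exact Pset_bound P hPe hPo n ι hn a ha
    · exact add_le_add_left (Aset_bound n ι hι (by omega)) _
  have hsplit : E3 n ⊆
      ((Set.univ : Set (Fin (n+1) → Finset (Fin (n+1)))) ×ˢ
        {ap : (Fin (n+1) → ℤ) × (Fin (n+1) → ℕ) | (Tset n (-1) ap).card < n/1000}) ∪
      ((Set.univ : Set (Fin (n+1) → Finset (Fin (n+1)))) ×ˢ
        {ap : (Fin (n+1) → ℤ) × (Fin (n+1) → ℕ) | (Tset n 1 ap).card < n/1000}) := by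
    intro ω hω
    rcases hω with h | h
    · left; exact ⟨trivial, h⟩
    · right; exact ⟨trivial, h⟩
  refine le_trans (measure_mono hsplit) (le_trans (measure_union_le _ _) ?_)
  calc gameMeasure (n+1) d P _ + gameMeasure (n+1) d P _
      ≤ (2⁻¹ ^ (n/10) + 2⁻¹ ^ (n/1000)) + (2⁻¹ ^ (n/10) + 2⁻¹ ^ (n/1000)) :=
        add_le_add (key (-1) (Or.inl rfl)) (key 1 (Or.inr rfl))
  _ = 2 * (2⁻¹ ^ (n/10) + 2⁻¹ ^ (n/1000)) := (two_mul _).symm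

end OW

namespace OW

open Finset MeasureTheory Filter
open scoped ENNReal Classical

theorem u0_le_half {n m : ℕ} (hm : n/1000 ≤ m) : n/2000 ≤ m/2 := by
  have h : n/2000 = (n/1000)/2 := by
    rw [Nat.div_div_eq_div_mul]
  rw [h]
  exact Nat.div_le_div_right hm

theorem core_chain {n d m : ℕ} (hd2 : d ≤ n+1) (hm : n/1000 ≤ m) (hc : 4 * Qpow n d ≤ 1) :
    (m.choose (m - m/2) : ℝ≥0∞) * (Qfrac n d) ^ (m - m/2)
      ≤ 2 * (4 * Qpow n d) ^ (n/2000) := by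
  have hQfp := Qfrac_le_Qpow (n := n) hd2
  have hQp1 := Qpow_le_one (n := n) (d := d)
  have h2 := Nat.div_add_mod m 2
  have h2' : m % 2 < 2 := Nat.mod_lt _ (by norm_num)
  have hr : m/2 ≤ m - m/2 := by omega
  have hu0 : n/2000 ≤ m/2 := u0_le_half hm
  calc (m.choose (m - m/2) : ℝ≥0∞) * (Qfrac n d) ^ (m - m/2)
      ≤ (2:ℝ≥0∞)^m * (Qpow n d) ^ (m - m/2) := by
        apply mul_le_mul'
        · exact_mod_cast nat_choose_le_two_pow m _
        · exact pow_le_pow_left₀ (zero_le) hQfp _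
  _ ≤ (2:ℝ≥0∞)^m * (Qpow n d) ^ (m/2) :=
        mul_le_mul_right (pow_le_pow_of_le_one (zero_le) hQp1 hr) _
  _ ≤ (2 * 4^(m/2)) * (Qpow n d)^(m/2) := by
        apply mul_le_mul_left
        have hnat := nat_two_pow_le m
        calc (2:ℝ≥0∞)^m = ((2^m : ℕ) : ℝ≥0∞) := by push_cast; ring
        _ ≤ ((2*4^(m/2) : ℕ) : ℝ≥0∞) := by exact_mod_cast hnat
        _ = 2 * 4^(m/2) := by push_cast; ring
  _ = 2 * (4 * Qpow n d)^(m/2) := by rw [mul_pow]; ring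
  _ ≤ 2 * (4 * Qpow n d)^(n/2000) :=
        mul_le_mul_right (pow_le_pow_of_le_one (zero_le) hc hu0) _

theorem E4_bound (P : Measure ℕ) [IsProbabilityMeasure P] (n d : ℕ)
    (hd2 : d ≤ n+1) (hn : 1000 ≤ n) :
    gameMeasure (n+1) d P (E4 n) ≤ 2 * (4 * Qpow n d) ^ (n/2000) := by
  haveI : IsProbabilityMeasure (uniformFinset (powersetCard d (univ : Finset (Fin (n+1))))) :=
    uniformFinset_prob _ (Finset.powersetCard_nonempty.2
      (by rw [Finset.card_univ, Fintype.card_fin]; exact hd2))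
  haveI : IsProbabilityMeasure (uniformFinset ({-1,1} : Finset ℤ)) :=
    uniformFinset_prob _ ⟨-1, by decide⟩
  by_cases hc : 4 * Qpow n d ≤ 1
  · rw [gameMeasure]
    refine prod_bound_right _ _ _ (measurableSet_all _) _ ?_
    intro ap
    by_cases hm : n/1000 ≤ (Tset n (ap.1 0) ap).card
    · have hsub : {S : Fin (n+1) → Finset (Fin (n+1)) | (S, ap) ∈ E4 n} ⊆
          {S : Fin (n+1) → Finset (Fin (n+1)) |
            ∃ W ∈ (Tset n (ap.1 0) ap).powersetCard
              ((Tset n (ap.1 0) ap).card - (Tset n (ap.1 0) ap).card/2), ∀ w ∈ W,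
              S w ∈ {s : Finset (Fin (n+1)) | s ∩ (Tset n (ap.1 0) ap \ W) = ∅}} := by
        intro S hS
        obtain ⟨-, hWE⟩ := hS
        obtain ⟨W, hW, hprop⟩ := hWE
        exact ⟨W, hW, fun w hw => hprop w hw⟩
      refine le_trans (measure_mono hsub) ?_
      refine le_trans (pi_union_bound _ _ _
        ((Tset n (ap.1 0) ap).card - (Tset n (ap.1 0) ap).card/2) (Qfrac n d) ?_ ?_) ?_
      · intro W hW
        exact (Finset.mem_powersetCard.1 hW).2
      · intro W hW w _
        rw [marg_miss, Qfrac]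
        apply ENNReal.div_le_div_right
        apply Nat.cast_le.2
        apply Nat.choose_le_choose
        obtain ⟨hWT, hWcard⟩ := Finset.mem_powersetCard.1 hW
        have hcardsd : (Tset n (ap.1 0) ap \ W).card
            = (Tset n (ap.1 0) ap).card - ((Tset n (ap.1 0) ap).card
              - (Tset n (ap.1 0) ap).card/2) := by
          rw [Finset.card_sdiff_of_subset hWT, hWcard]
        have hu0 : n/2000 ≤ (Tset n (ap.1 0) ap).card/2 := u0_le_half hm
        have h2 := Nat.div_add_mod (Tset n (ap.1 0) ap).card 2
        omega
      · rw [Finset.card_powersetCard]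
        exact core_chain hd2 hm hc
    · have hempty : {S : Fin (n+1) → Finset (Fin (n+1)) | (S, ap) ∈ E4 n} = ∅ := by
        ext S
        simp only [Set.mem_setOf_eq, Set.mem_empty_iff_false, iff_false]
        intro hS
        exact hm hS.1
      rw [hempty, measure_empty]
      exact zero_le
  · haveI : IsProbabilityMeasure (gameMeasure (n+1) d P) := by
      rw [gameMeasure]; infer_instance
    have h1 : (1:ℝ≥0∞) ≤ (4 * Qpow n d) ^ (n/2000) := by
      calc (1:ℝ≥0∞) = 1 ^ (n/2000) := (one_pow _).symm
      _ ≤ (4 * Qpow n d) ^ (n/2000) := pow_le_pow_left₀ (zero_le) (le_of_not_ge hc) _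
    calc gameMeasure (n+1) d P (E4 n) ≤ 1 := prob_le_one
    _ ≤ (4 * Qpow n d) ^ (n/2000) := h1
    _ ≤ 2 * (4 * Qpow n d) ^ (n/2000) := le_mul_of_one_le_left (zero_le) one_le_two

theorem WEvent_congr {n : ℕ} {S S' : Fin (n+1) → Finset (Fin (n+1))} {T : Finset (Fin (n+1))}
    (h : ∀ w ∈ T, S w = S' w) : WEvent n S T ↔ WEvent n S' T := by
  unfold WEvent
  constructor <;> rintro ⟨W, hW, hprop⟩ <;> refine ⟨W, hW, ?_⟩ <;> intro w hw <;>
    have hwT : w ∈ T := (Finset.mem_powersetCard.1 hW).1 hw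
  · rw [← h w hwT]
    exact hprop w hw
  · rw [h w hwT]
    exact hprop w hw

theorem E5_bound (P : Measure ℕ) [IsProbabilityMeasure P] (n d : ℕ)
    (hd2 : d ≤ n+1) (hn : 1000 ≤ n) :
    gameMeasure (n+1) d P (E5 n) ≤ Qpow n d := by
  haveI : IsProbabilityMeasure (uniformFinset (powersetCard d (univ : Finset (Fin (n+1))))) :=
    uniformFinset_prob _ (Finset.powersetCard_nonempty.2
      (by rw [Finset.card_univ, Fintype.card_fin]; exact hd2))
  haveI : IsProbabilityMeasure (uniformFinset ({-1,1} : Finset ℤ)) :=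
    uniformFinset_prob _ ⟨-1, by decide⟩
  rw [gameMeasure]
  refine prod_bound_right _ _ _ (measurableSet_all _) _ ?_
  intro ap
  by_cases hm : n/1000 ≤ (Tset n (ap.1 0) ap).card
  · set F : (Fin (n+1) → Finset (Fin (n+1))) → Set (Finset (Fin (n+1))) := fun S =>
      if WEvent n S (Tset n (ap.1 0) ap) then ∅
      else {s : Finset (Fin (n+1)) | s ∩ core S (Tset n (ap.1 0) ap) = ∅} with hF
    have hslice : {S : Fin (n+1) → Finset (Fin (n+1)) | (S, ap) ∈ E5 n} =
        {S : Fin (n+1) → Finset (Fin (n+1)) | S 0 ∈ F S} := by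
      ext S
      simp only [Set.mem_setOf_eq, hF]
      constructor
      · rintro ⟨-, hW, hco⟩
        rw [if_neg hW]
        exact hco
      · intro hS
        by_cases hW : WEvent n S (Tset n (ap.1 0) ap)
        · rw [if_pos hW] at hS
          exact absurd hS (Set.notMem_empty _)
        · rw [if_neg hW] at hS
          exact ⟨hm, hW, hS⟩
    rw [hslice]
    refine le_trans (pi_decouple _ 0 F ?_ (Qfrac n d) ?_) (Qfrac_le_Qpow hd2)
    · intro x y hxy
      have hTxy : ∀ w ∈ Tset n (ap.1 0) ap, x w = y w := by
        intro w hw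
        apply hxy
        have hw' : w ∈ (univ : Finset (Fin (n+1))).erase 0 := by
          rw [Tset] at hw
          exact (Finset.filter_subset _ _) hw
        exact (Finset.mem_erase.1 hw').1
      rw [hF]
      simp only
      apply if_congr (WEvent_congr hTxy) rfl
      rw [core_congr hTxy]
    · intro S
      rw [hF]
      simp only
      split
      · rw [measure_empty]
        exact zero_le
      · next hW =>
        rw [marg_miss, Qfrac]
        apply ENNReal.div_le_div_right
        apply Nat.cast_le.2
        apply Nat.choose_le_choose
        have hcore := core_large (S := S) (T := Tset n (ap.1 0) ap)
          (r := (Tset n (ap.1 0) ap).card - (Tset n (ap.1 0) ap).card/2) hW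
        have hu0 : n/2000 ≤ (Tset n (ap.1 0) ap).card/2 := u0_le_half hm
        have h2 := Nat.div_add_mod (Tset n (ap.1 0) ap).card 2
        omega
  · have hempty : {S : Fin (n+1) → Finset (Fin (n+1)) | (S, ap) ∈ E5 n} = ∅ := by
      ext S
      simp only [Set.mem_setOf_eq, Set.mem_empty_iff_false, iff_false]
      intro hS
      exact hm hS.1
    rw [hempty, measure_empty]
    exact zero_le

theorem bad_bound (P : Measure ℕ) [IsProbabilityMeasure P]
    (hPe : P {k | Even k} = 1/2) (hPo : P {k | Odd k} = 1/2)
    (n d : ℕ) (hd1 : 1 ≤ d) (hd2 : d ≤ n+1) (hn : 1000 ≤ n) :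
    gameMeasure (n+1) d P ((Gset n)ᶜ) ≤
      2 * (2⁻¹ ^ (n/10) + 2⁻¹ ^ (n/1000)) + 2 * (4 * Qpow n d) ^ (n/2000) + Qpow n d := by
  refine le_trans (measure_mono (decomp n d hd1)) ?_
  refine le_trans (measure_union_le _ _) ?_
  refine add_le_add ?_ (E5_bound P n d hd2 hn)
  refine le_trans (measure_union_le _ _) ?_
  refine add_le_add ?_ (E4_bound P n d hd2 hn)
  refine le_trans (measure_union_le _ _) ?_
  have h12 : gameMeasure (n+1) d P (E1 n d ∪ E2 n) = 0 := by
    refine le_antisymm (le_trans (measure_union_le _ _) ?_) (zero_le)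
    rw [E1_bound P n d hd2, E2_bound P n d hd2, add_zero]
  rw [h12, zero_add]
  exact E3_bound P hPe hPo n d hd2 hn

end OW

namespace OW

open Finset MeasureTheory Filter
open scoped ENNReal Classical

theorem tendsto_div_const (c : ℕ) (hc : 0 < c) :
    Tendsto (fun n : ℕ => n / c) atTop atTop := by
  apply Filter.tendsto_atTop_atTop.2
  intro b
  refine ⟨c * b, fun n hn => ?_⟩
  have h1 : (c * b) / c ≤ n / c := Nat.div_le_div_right hn
  rwa [Nat.mul_div_cancel_left _ hc] at h1

theorem Qpow_le_beta {n d : ℕ} (hn : 6000 ≤ n) :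
    Qpow n d ≤ ((2999 : ℝ≥0∞)/3000) ^ d := by
  have hbe : ((2999 : ℝ≥0∞)/3000) ^ d
      = (((2999^d : ℕ)) : ℝ≥0∞) / (((3000^d : ℕ)) : ℝ≥0∞) := by
    rw [div_eq_mul_inv, mul_pow, ← ENNReal.inv_pow]
    push_cast
    rw [div_eq_mul_inv, mul_comm]
  have h1 : (((n+1) - n/2000 : ℕ) : ℝ≥0∞) ^ d = ((((n+1) - n/2000)^d : ℕ) : ℝ≥0∞) := by
    push_cast; ring
  have h2 : (((n+1) : ℕ) : ℝ≥0∞) ^ d = (((n+1)^d : ℕ) : ℝ≥0∞) := by push_cast; ring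
  rw [Qpow, hbe, h1, h2]
  apply enn_div_le_div (Nat.pow_pos (by omega)) (Nat.pow_pos (by norm_num))
  rw [← Nat.mul_pow, ← Nat.mul_pow]
  apply Nat.pow_le_pow_left
  have h := Nat.div_add_mod n 2000
  have h2' : n % 2000 < 2000 := Nat.mod_lt _ (by norm_num)
  have h3 : 3 ≤ n / 2000 := by omega
  omega

theorem four_mul_inv_eight : (4:ℝ≥0∞) * 8⁻¹ ≤ 2⁻¹ := by
  have h8 : (8:ℝ≥0∞) = 2 * 4 := by norm_num
  rw [h8, ENNReal.mul_inv (Or.inl (by norm_num)) (Or.inl (by norm_num)), mul_comm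
    ((2:ℝ≥0∞)⁻¹) _, ← mul_assoc, ENNReal.mul_inv_cancel (by norm_num) (by norm_num), one_mul]

end OW

/-- **non-sparse games are trivial.** Let `f` satisfy
`1 ≤ f n ≤ n` (for `n ≥ 1`) and `f n → ∞`, and let `P` be a probability
distribution on ℕ giving mass `1/2` to the even numbers and `1/2` to the odd
numbers. Sample a parity game from `G(n, f n)` (node set `Fin (n+1)`, i.e.
`n ≥ 1` nodes indexed so that the node `v = 0` exists) and fix `v = 0`. Then the
probability that the owner `a v` of `v` has a winning strategy from `v` tends to
`1` as the number of nodes tends to infinity. -/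
theorem owner_wins_whp_nonsparse (P : Measure ℕ) [IsProbabilityMeasure P]
    (hPeven : P {k | Even k} = 1 / 2) (hPodd : P {k | Odd k} = 1 / 2)
    (f : ℕ → ℕ) (hf1 : ∀ n : ℕ, 1 ≤ n → 1 ≤ f n) (hf2 : ∀ n : ℕ, 1 ≤ n → f n ≤ n)
    (hf3 : Filter.Tendsto f Filter.atTop Filter.atTop) :
    Filter.Tendsto
      (fun n : ℕ => gameMeasure (n + 1) (f (n + 1)) P
        {ω : GameSample (n + 1) |
          WinningFrom (sampleE ω) ω.2.1 ω.2.2 (ω.2.1 0) 0})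
      Filter.atTop (nhds 1) := by
  classical
  open OW Filter MeasureTheory Finset in
  set β : ℝ≥0∞ := (2999 : ℝ≥0∞)/3000 with hβdef
  have hβ : β < 1 := by
    rw [hβdef, ENNReal.div_lt_iff (by norm_num) (by norm_num)]
    norm_num
  have hhalf : (2:ℝ≥0∞)⁻¹ < 1 := by simp
  set C : ℕ → ℝ≥0∞ := fun n =>
    2 * (2⁻¹ ^ (n/10) + 2⁻¹ ^ (n/1000)) + 2 * (2⁻¹ ^ (n/2000)) + β ^ (f (n+1)) with hC
  have hfshift : Filter.Tendsto (fun n : ℕ => f (n+1)) Filter.atTop Filter.atTop :=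
    hf3.comp (Filter.tendsto_add_atTop_nat 1)
  have hCtend : Filter.Tendsto C Filter.atTop (nhds 0) := by
    have t1 : Filter.Tendsto (fun n : ℕ => (2:ℝ≥0∞)⁻¹ ^ (n/10)) Filter.atTop (nhds 0) :=
      (ENNReal.tendsto_pow_atTop_nhds_zero_of_lt_one hhalf).comp
        (OW.tendsto_div_const 10 (by norm_num))
    have t2 : Filter.Tendsto (fun n : ℕ => (2:ℝ≥0∞)⁻¹ ^ (n/1000)) Filter.atTop (nhds 0) :=
      (ENNReal.tendsto_pow_atTop_nhds_zero_of_lt_one hhalf).comp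
        (OW.tendsto_div_const 1000 (by norm_num))
    have t3 : Filter.Tendsto (fun n : ℕ => (2:ℝ≥0∞)⁻¹ ^ (n/2000)) Filter.atTop (nhds 0) :=
      (ENNReal.tendsto_pow_atTop_nhds_zero_of_lt_one hhalf).comp
        (OW.tendsto_div_const 2000 (by norm_num))
    have t4 : Filter.Tendsto (fun n : ℕ => β ^ (f (n+1))) Filter.atTop (nhds 0) :=
      (ENNReal.tendsto_pow_atTop_nhds_zero_of_lt_one hβ).comp hfshift
    have t12 : Filter.Tendsto (fun n : ℕ => (2:ℝ≥0∞) * (2⁻¹ ^ (n/10) + 2⁻¹ ^ (n/1000)))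
        Filter.atTop (nhds 0) := by
      have := ENNReal.Tendsto.const_mul (a := (2:ℝ≥0∞)) (t1.add t2) (Or.inr (by norm_num))
      simpa using this
    have t3' : Filter.Tendsto (fun n : ℕ => (2:ℝ≥0∞) * (2⁻¹ ^ (n/2000)))
        Filter.atTop (nhds 0) := by
      have := ENNReal.Tendsto.const_mul (a := (2:ℝ≥0∞)) t3 (Or.inr (by norm_num))
      simpa using this
    have hfin := (t12.add t3').add t4
    simpa using hfin
  have hK : ∃ K, β ^ K ≤ 8⁻¹ := by
    have h := (ENNReal.tendsto_pow_atTop_nhds_zero_of_lt_one hβ).eventually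
      (gt_mem_nhds (show (0:ℝ≥0∞) < 8⁻¹ by simp))
    obtain ⟨K, hKlt⟩ := h.exists
    exact ⟨K, hKlt.le⟩
  obtain ⟨K, hKle⟩ := hK
  have hfK : ∀ᶠ n in Filter.atTop, K ≤ f (n+1) :=
    hfshift.eventually (Filter.eventually_ge_atTop K)
  have hbound : ∀ᶠ n in Filter.atTop,
      gameMeasure (n+1) (f (n+1)) P ((OW.Gset n)ᶜ) ≤ C n := by
    filter_upwards [hfK, Filter.eventually_ge_atTop 6000] with n hfKn hn
    have hd1 : 1 ≤ f (n+1) := hf1 (n+1) (by omega)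
    have hd2 : f (n+1) ≤ n+1 := hf2 (n+1) (by omega)
    have hqb : OW.Qpow n (f (n+1)) ≤ β ^ (f (n+1)) := OW.Qpow_le_beta (by omega)
    have hβK : β ^ (f (n+1)) ≤ β ^ K := pow_le_pow_of_le_one (zero_le) hβ.le hfKn
    have h4q : 4 * OW.Qpow n (f (n+1)) ≤ 2⁻¹ := by
      calc 4 * OW.Qpow n (f (n+1)) ≤ 4 * (8:ℝ≥0∞)⁻¹ := by
            apply mul_le_mul_right
            exact le_trans hqb (le_trans hβK hKle)
      _ ≤ 2⁻¹ := OW.four_mul_inv_eight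
    refine le_trans (OW.bad_bound P hPeven hPodd n (f (n+1)) hd1 hd2 (by omega)) ?_
    refine add_le_add (add_le_add le_rfl ?_) (le_trans hqb (le_refl _))
    apply mul_le_mul_right
    exact pow_le_pow_left₀ (zero_le) h4q _
  rw [ENNReal.tendsto_nhds (by norm_num : (1:ℝ≥0∞) ≠ ⊤)]
  intro ε hε
  have hCε : ∀ᶠ n in Filter.atTop, C n < ε := hCtend.eventually (gt_mem_nhds hε)
  filter_upwards [hbound, hCε] with n hb hc'
  have hd1 : 1 ≤ f (n+1) := hf1 (n+1) (by omega)
  have hd2 : f (n+1) ≤ n+1 := hf2 (n+1) (by omega)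
  haveI : IsProbabilityMeasure
      (uniformFinset (Finset.powersetCard (f (n+1)) (Finset.univ : Finset (Fin (n+1))))) :=
    OW.uniformFinset_prob _ (Finset.powersetCard_nonempty.2
      (by rw [Finset.card_univ, Fintype.card_fin]; exact hd2))
  haveI : IsProbabilityMeasure (uniformFinset ({-1,1} : Finset ℤ)) :=
    OW.uniformFinset_prob _ ⟨-1, by decide⟩
  haveI hprob : IsProbabilityMeasure (gameMeasure (n+1) (f (n+1)) P) := by
    rw [gameMeasure]; infer_instance
  set μn := gameMeasure (n+1) (f (n+1)) P with hμn
  set Win : Set (GameSample (n+1)) :=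
    {ω : GameSample (n + 1) | WinningFrom (sampleE ω) ω.2.1 ω.2.2 (ω.2.1 0) 0} with hWin
  have hlow : 1 - ε ≤ μn Win := by
    rw [tsub_le_iff_right]
    have huniv : (1:ℝ≥0∞) = μn Set.univ := measure_univ.symm
    have hsplit : μn Set.univ ≤ μn (OW.Gset n) + μn ((OW.Gset n)ᶜ) := by
      conv_lhs => rw [← Set.union_compl_self (OW.Gset n)]
      exact measure_union_le _ _
    calc (1:ℝ≥0∞) = μn Set.univ := huniv
    _ ≤ μn (OW.Gset n) + μn ((OW.Gset n)ᶜ) := hsplit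
    _ ≤ μn Win + ε := add_le_add (measure_mono (OW.G_subset_win n)) (le_trans hb hc'.le)
  refine Set.mem_Icc.2 ⟨hlow, ?_⟩
  calc μn Win ≤ 1 := prob_le_one
  _ ≤ 1 + ε := le_self_add
end

section
/- Let 𝒫 be a probability distribution on ℕ with 𝒫({even numbers}) = 𝒫({odd numbers}) = 1/2. For each n ≥ 2, sample a parity game from the random model G(n, 2) and fix the node v = 0 ∈ Fin n. Then the probability that v is self-winning tends to 0 as n → ∞. -/
/-- A cycle `w 0, w 1, …, w k` (with `k ≥ 1`, `w k = w 0`, following edges) is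
self-winning for player `i` if all its nodes are owned by `i` and the maximal
priority on it is odd when `i = +1` and even when `i = -1`. The node `v` is
required to lie on the cycle. -/
def OnSelfWinningCycle {V : Type*} (E : V → V → Prop) (a : V → ℤ) (p : V → ℕ)
    (i : ℤ) (v : V) : Prop :=
  ∃ (k : ℕ) (w : ℕ → V), 1 ≤ k ∧ w k = w 0 ∧
    (∀ j < k, E (w j) (w (j + 1))) ∧
    (∃ j < k, w j = v) ∧
    (∀ j < k, a (w j) = i) ∧
    (if i = 1 then Odd ((Finset.range k).sup fun j => p (w j))
     else Even ((Finset.range k).sup fun j => p (w j)))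

/-- A node is self-winning if it lies on a cycle that is self-winning for its
owner. -/
def SelfWinningNode {V : Type*} (E : V → V → Prop) (a : V → ℤ) (p : V → ℕ)
    (v : V) : Prop :=
  OnSelfWinningCycle E a p (a v) v

open MeasureTheory

/-- From any monochromatic closed walk through `v` extract a simple one
starting at `v`. -/
theorem exists_simple_cycle {V : Type*} {E : V → V → Prop} {a : V → ℤ}
    {p : V → ℕ} {i : ℤ} {v : V} (h : OnSelfWinningCycle E a p i v) :
    ∃ k, 1 ≤ k ∧ ∃ w : ℕ → V, w 0 = v ∧ w k = w 0 ∧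
      (∀ j < k, E (w j) (w (j + 1))) ∧ (∀ j < k, a (w j) = i) ∧
      (∀ j1 < k, ∀ j2 < k, w j1 = w j2 → j1 = j2) := by
  obtain ⟨k, w, hk, hcl, hedge, ⟨j0, hj0, hj0v⟩, hown, -⟩ := h
  -- rotate so that the walk starts at v
  have key : ∀ k, 1 ≤ k → ∀ w : ℕ → V, w 0 = v → w k = w 0 →
      (∀ j < k, E (w j) (w (j + 1))) → (∀ j < k, a (w j) = i) →
      ∃ k', 1 ≤ k' ∧ ∃ w' : ℕ → V, w' 0 = v ∧ w' k' = w' 0 ∧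
        (∀ j < k', E (w' j) (w' (j + 1))) ∧ (∀ j < k', a (w' j) = i) ∧
        (∀ j1 < k', ∀ j2 < k', w' j1 = w' j2 → j1 = j2) := by
    intro k
    induction k using Nat.strong_induction_on with
    | _ k IH =>
      intro hk w h0 hcl hedge hown
      by_cases hinj : ∀ j1 < k, ∀ j2 < k, w j1 = w j2 → j1 = j2
      · exact ⟨k, hk, w, h0, hcl, hedge, hown, hinj⟩
      · push_neg at hinj
        obtain ⟨j1, hj1, j2, hj2, heq, hne⟩ := hinj
        -- wlog j1 < j2
        rcases Nat.lt_or_ge j1 j2 with hlt | hge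
        case _ =>
          clear hne
          set d := j2 - j1 with hd
          have hd1 : 1 ≤ d := by omega
          set k' := k - d with hk'
          have hk'lt : k' < k := by omega
          have hk'1 : 1 ≤ k' := by omega
          have hj1k' : j1 < k' := by omega
          set w' : ℕ → V := fun t => if t ≤ j1 then w t else w (t + d) with hw'
          have hval : ∀ t, t ≤ j1 → w' t = w t := by
            intro t ht; simp [hw', ht]
          have hval2 : ∀ t, j1 < t → w' t = w (t + d) := by
            intro t ht; simp [hw', Nat.not_le.mpr ht]
          refine IH k' hk'lt hk'1 w' ?_ ?_ ?_ ?_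
          · rw [hval 0 (Nat.zero_le _)]; exact h0
          · rw [hval2 k' (by omega)]
            have : k' + d = k := by omega
            rw [this, hcl, hval 0 (Nat.zero_le _)]
          · intro t ht
            rcases Nat.lt_or_ge t j1 with h1 | h1
            · rw [hval t (by omega), hval (t+1) (by omega)]
              exact hedge t (by omega)
            rcases Nat.eq_or_lt_of_le h1 with h2 | h2
            · have h4 : t + 1 + d = j2 + 1 := by omega
              rw [hval t (by omega), hval2 (t+1) (by omega), h4, ← h2, heq]
              exact hedge j2 hj2
            · have h5 : t + 1 + d = t + d + 1 := by omega
              rw [hval2 t h2, hval2 (t+1) (by omega), h5]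
              exact hedge (t + d) (by omega)
          · intro t ht
            rcases le_or_gt t j1 with h1 | h1
            · rw [hval t h1]; exact hown t (by omega)
            · rw [hval2 t h1]; exact hown (t + d) (by omega)
        case _ =>
          have hlt : j2 < j1 := by omega
          clear hne hge
          set d := j1 - j2 with hd
          have hd1 : 1 ≤ d := by omega
          set k' := k - d with hk'
          have hk'lt : k' < k := by omega
          have hk'1 : 1 ≤ k' := by omega
          set w' : ℕ → V := fun t => if t ≤ j2 then w t else w (t + d) with hw'
          have hval : ∀ t, t ≤ j2 → w' t = w t := by
            intro t ht; simp [hw', ht]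
          have hval2 : ∀ t, j2 < t → w' t = w (t + d) := by
            intro t ht; simp [hw', Nat.not_le.mpr ht]
          refine IH k' hk'lt hk'1 w' ?_ ?_ ?_ ?_
          · rw [hval 0 (Nat.zero_le _)]; exact h0
          · rw [hval2 k' (by omega)]
            have : k' + d = k := by omega
            rw [this, hcl, hval 0 (Nat.zero_le _)]
          · intro t ht
            rcases Nat.lt_or_ge t j2 with h1 | h1
            · rw [hval t (by omega), hval (t+1) (by omega)]
              exact hedge t (by omega)
            rcases Nat.eq_or_lt_of_le h1 with h2 | h2
            · have h4 : t + 1 + d = j1 + 1 := by omega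
              rw [hval t (by omega), hval2 (t+1) (by omega), h4, ← h2, ← heq]
              exact hedge j1 hj1
            · have h5 : t + 1 + d = t + d + 1 := by omega
              rw [hval2 t h2, hval2 (t+1) (by omega), h5]
              exact hedge (t + d) (by omega)
          · intro t ht
            rcases le_or_gt t j2 with h1 | h1
            · rw [hval t h1]; exact hown t (by omega)
            · rw [hval2 t h1]; exact hown (t + d) (by omega)
  -- rotation
  set w1 : ℕ → V := fun t => w ((j0 + t) % k) with hw1
  have hmod : ∀ t, (j0 + t) % k < k := fun t => Nat.mod_lt _ (by omega)
  refine key k hk w1 ?_ ?_ ?_ ?_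
  · show w ((j0 + 0) % k) = v
    rw [Nat.add_zero, Nat.mod_eq_of_lt hj0]; exact hj0v
  · show w ((j0 + k) % k) = w ((j0 + 0) % k)
    rw [Nat.add_zero, Nat.add_mod_right, Nat.mod_eq_of_lt hj0]
  · intro t ht
    show E (w ((j0 + t) % k)) (w ((j0 + (t+1)) % k))
    have h1 : (j0 + (t + 1)) % k = ((j0 + t) % k + 1) % k := by
      rw [Nat.mod_add_mod, ← Nat.add_assoc]
    set m := (j0 + t) % k with hm
    have hmk := hmod t
    rcases Nat.lt_or_ge (m + 1) k with h2 | h2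
    · rw [h1, Nat.mod_eq_of_lt h2]; exact hedge m hmk
    · have h3 : m + 1 = k := by omega
      rw [h1, h3, Nat.mod_self, ← hcl, ← h3]
      exact hedge m hmk
  · intro t ht
    exact hown _ (hmod t)

theorem uniformFinset_le_card {α : Type*} [MeasurableSpace α] (s u : Finset α)
    (t : Set α) (ht : MeasurableSet t) (hu : ∀ x ∈ s, x ∈ t → x ∈ u) :
    uniformFinset s t ≤ (s.card : ENNReal)⁻¹ * u.card := by
  classical
  rw [uniformFinset, Measure.smul_apply, Measure.finset_sum_apply, smul_eq_mul]
  gcongr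
  calc ∑ x ∈ s, Measure.dirac x t
      = ∑ x ∈ s, t.indicator (fun _ => (1 : ENNReal)) x :=
        Finset.sum_congr rfl fun x _ => Measure.dirac_apply' x ht
    _ ≤ ∑ x ∈ s, (if x ∈ u then (1 : ENNReal) else 0) := by
        refine Finset.sum_le_sum fun x hx => ?_
        rw [Set.indicator_apply]
        split_ifs with h1 h2 h2
        · exact le_refl 1
        · exact absurd (hu x hx h1) h2
        · exact zero_le
        · exact le_refl 0
    _ = (s.filter (· ∈ u)).card := by
        rw [Finset.card_filter]
        push_cast
        rfl
    _ ≤ u.card := by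
        have : s.filter (· ∈ u) ⊆ u := fun x hx => (Finset.mem_filter.mp hx).2
        exact_mod_cast Finset.card_le_card this

theorem uniformFinset_univ {α : Type*} [MeasurableSpace α] (s : Finset α) :
    uniformFinset s Set.univ = (s.card : ENNReal)⁻¹ * s.card := by
  rw [uniformFinset, Measure.smul_apply, Measure.finset_sum_apply, smul_eq_mul]
  congr 1
  rw [Finset.sum_congr rfl fun x _ => measure_univ (μ := Measure.dirac x)]
  simp

theorem uniformFinset_isProb {α : Type*} [MeasurableSpace α] {s : Finset α}
    (hs : s.Nonempty) : IsProbabilityMeasure (uniformFinset s) := by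
  constructor
  rw [uniformFinset_univ, ENNReal.inv_mul_cancel]
  · exact_mod_cast (Finset.card_pos.mpr hs).ne'
  · exact ENNReal.natCast_ne_top _

theorem choose_two_mul (n : ℕ) : 2 * n.choose 2 = n * (n - 1) := by
  rw [Nat.choose_two_right, Nat.mul_div_cancel' (Nat.even_mul_pred_self n).two_dvd]

/-- probability that a fixed node is in a uniform 2-subset is at most `2 / n`. -/
theorem uniform_pc2_mem_le {n : ℕ} (hn : 2 ≤ n) (x : Fin n) :
    uniformFinset (Finset.powersetCard 2 (Finset.univ : Finset (Fin n)))
      {s | x ∈ s} ≤ 2 / n := by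
  classical
  have hcover : ∀ s ∈ Finset.powersetCard 2 (Finset.univ : Finset (Fin n)),
      s ∈ {s : Finset (Fin n) | x ∈ s} →
      s ∈ (Finset.univ.erase x).image (fun y => ({x, y} : Finset (Fin n))) := by
    intro s hs hxs
    rw [Finset.mem_powersetCard] at hs
    obtain ⟨a, b, hab, rfl⟩ := Finset.card_eq_two.mp hs.2
    rw [Finset.mem_image]
    rcases Finset.mem_insert.mp (show x ∈ insert a {b} from hxs) with rfl | hb
    · exact ⟨b, Finset.mem_erase.mpr ⟨fun h => hab h.symm, Finset.mem_univ b⟩, rfl⟩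
    · rcases Finset.mem_singleton.mp hb with rfl
      exact ⟨a, Finset.mem_erase.mpr ⟨fun h => hab h, Finset.mem_univ a⟩,
        by rw [Finset.pair_comm]⟩
  refine le_trans (uniformFinset_le_card _ _ _ MeasurableSpace.measurableSet_top hcover) ?_
  have hcard : (((Finset.univ.erase x).image (fun y => ({x, y} : Finset (Fin n)))).card
      : ENNReal) ≤ (n - 1 : ℕ) := by
    exact_mod_cast le_trans Finset.card_image_le (le_of_eq (by
      rw [Finset.card_erase_of_mem (Finset.mem_univ x), Finset.card_univ, Fintype.card_fin]))
  refine le_trans (mul_le_mul_right hcard _) ?_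
  rw [Finset.card_powersetCard, Finset.card_univ, Fintype.card_fin]
  have hC0 : (n.choose 2 : ENNReal) ≠ 0 := by
    exact_mod_cast (Nat.choose_pos hn).ne'
  have hCt : (n.choose 2 : ENNReal) ≠ ⊤ := ENNReal.natCast_ne_top _
  have hn0 : (n : ENNReal) ≠ 0 := by exact_mod_cast (by omega : n ≠ 0)
  have hnt : (n : ENNReal) ≠ ⊤ := ENNReal.natCast_ne_top _
  rw [ENNReal.le_div_iff_mul_le (Or.inl hn0) (Or.inl hnt), mul_assoc,
    ENNReal.inv_mul_le_iff hC0 hCt]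
  have hnat : (n - 1) * n = n.choose 2 * 2 := by
    rw [Nat.mul_comm (n.choose 2) 2, choose_two_mul, Nat.mul_comm]
  have : ((n - 1 : ℕ) : ENNReal) * n = (n.choose 2 : ENNReal) * 2 := by
    exact_mod_cast congrArg (Nat.cast : ℕ → ENNReal) hnat
  rw [this]

/-- probability that the owner takes a fixed value is at most `1/2`. -/
theorem uniform_pm_le (c : ℤ) :
    uniformFinset ({-1, 1} : Finset ℤ) {z | z = c} ≤ 2⁻¹ := by
  have hcover : ∀ z ∈ ({-1, 1} : Finset ℤ), z ∈ {z : ℤ | z = c} →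
      z ∈ ({c} : Finset ℤ) := by
    intro z _ hz; simpa using hz
  refine le_trans (uniformFinset_le_card _ _ _ (by trivial) hcover) ?_
  simp

/-- if `c` is neither `1` nor `-1`, the owner never equals `c`. -/
theorem uniform_pm_zero {c : ℤ} (hc : c ≠ -1) (hc' : c ≠ 1) :
    uniformFinset ({-1, 1} : Finset ℤ) {z | z = c} = 0 := by
  have hcover : ∀ z ∈ ({-1, 1} : Finset ℤ), z ∈ {z : ℤ | z = c} →
      z ∈ (∅ : Finset ℤ) := by
    intro z hz hzc
    simp only [Set.mem_setOf_eq] at hzc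
    subst hzc
    simp only [Finset.mem_insert, Finset.mem_singleton] at hz
    tauto
  refine le_antisymm ?_ zero_le
  have h1 := uniformFinset_le_card ({-1, 1} : Finset ℤ) ∅ {z | z = c} trivial hcover
  simpa using h1

theorem uniform_pm_zero' :
    uniformFinset ({-1, 1} : Finset ℤ) {z | z ≠ -1 ∧ z ≠ 1} = 0 := by
  have hcover : ∀ z ∈ ({-1, 1} : Finset ℤ), z ∈ {z : ℤ | z ≠ -1 ∧ z ≠ 1} →
      z ∈ (∅ : Finset ℤ) := by
    intro z hz hzc
    simp only [Set.mem_setOf_eq] at hzc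
    simp only [Finset.mem_insert, Finset.mem_singleton] at hz
    tauto
  refine le_antisymm ?_ zero_le
  have h1 := uniformFinset_le_card ({-1, 1} : Finset ℤ) ∅ {z | z ≠ -1 ∧ z ≠ 1} trivial hcover
  simpa using h1

/-- product bound for cylinders of pi measures. -/
theorem pi_prob_le {n : ℕ} {α : Type*} [MeasurableSpace α] (μ0 : Measure α)
    [IsProbabilityMeasure μ0] (T : Fin n → Set α) (F : Finset (Fin n))
    (q : ENNReal) (hq : ∀ x ∈ F, μ0 (T x) ≤ q) :
    Measure.pi (fun _ : Fin n => μ0) (Set.pi Set.univ T) ≤ q ^ F.card := by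
  classical
  rw [Measure.pi_pi]
  calc ∏ x, μ0 (T x) = (∏ x ∈ F, μ0 (T x)) * ∏ x ∈ Fᶜ, μ0 (T x) :=
        (Finset.prod_mul_prod_compl F _).symm
    _ ≤ (∏ x ∈ F, q) * 1 := by
        refine mul_le_mul' (Finset.prod_le_prod' hq) (Finset.prod_le_one' ?_)
        exact fun x _ => prob_le_one
    _ = q ^ F.card := by rw [mul_one, Finset.prod_const]

theorem pi_coord_le {n : ℕ} {α : Type*} [MeasurableSpace α] (μ0 : Measure α)
    [IsProbabilityMeasure μ0] (v : Fin n) (B : Set α) :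
    Measure.pi (fun _ : Fin n => μ0) {g | g v ∈ B} ≤ μ0 B := by
  classical
  have hset : {g : Fin n → α | g v ∈ B} =
      Set.pi Set.univ (fun x => {z | x = v → z ∈ B}) := by
    ext g
    simp only [Set.mem_setOf_eq, Set.mem_univ_pi]
    constructor
    · intro h x hx; rwa [hx]
    · intro h; exact h v rfl
  rw [hset, Measure.pi_pi]
  calc ∏ x, μ0 {z | x = v → z ∈ B}
      = μ0 {z | v = v → z ∈ B} * ∏ x ∈ Finset.univ \ {v}, μ0 {z | x = v → z ∈ B} :=
        Finset.prod_eq_mul_prod_sdiff_singleton_of_mem (Finset.mem_univ v) _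
    _ ≤ μ0 B * 1 := by
        refine mul_le_mul' (le_of_eq ?_) (Finset.prod_le_one' fun x _ => prob_le_one)
        congr 1
        ext z; simp
    _ = μ0 B := mul_one _

def edgeCyl (n k : ℕ) (u : Fin n → Fin n) : Set (Fin n → Finset (Fin n)) :=
  Set.pi Set.univ (fun x => {s | ∀ j j' : Fin n, (j : ℕ) < k →
    ((j' : ℕ) = ((j : ℕ) + 1) % k) → u j = x → u j' ∈ s})

def ownCyl (n k : ℕ) (u : Fin n → Fin n) (c : ℤ) : Set (Fin n → ℤ) :=
  Set.pi Set.univ (fun x => {z | ∀ j : Fin n, (j : ℕ) < k → u j = x → z = c})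

def cycEvent (n k : ℕ) (u : Fin n → Fin n) (c : ℤ) : Set (GameSample n) :=
  edgeCyl n k u ×ˢ (ownCyl n k u c ×ˢ Set.univ)

theorem mem_edgeCyl {n k : ℕ} {u : Fin n → Fin n} {f : Fin n → Finset (Fin n)} :
    f ∈ edgeCyl n k u ↔ ∀ j j' : Fin n, (j : ℕ) < k →
      ((j' : ℕ) = ((j : ℕ) + 1) % k) → u j' ∈ f (u j) := by
  simp only [edgeCyl, Set.mem_univ_pi, Set.mem_setOf_eq]
  constructor
  · intro h j j' hj hj'; exact h (u j) j j' hj hj' rfl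
  · rintro h x j j' hj hj' rfl; exact h j j' hj hj'

theorem mem_ownCyl {n k : ℕ} {u : Fin n → Fin n} {c : ℤ} {g : Fin n → ℤ} :
    g ∈ ownCyl n k u c ↔ ∀ j : Fin n, (j : ℕ) < k → g (u j) = c := by
  simp only [ownCyl, Set.mem_univ_pi, Set.mem_setOf_eq]
  constructor
  · intro h j hj; exact h (u j) j hj rfl
  · rintro h x j hj rfl; exact h j hj

theorem edgeCyl_le {n k : ℕ} (hn : 2 ≤ n) (hk1 : 1 ≤ k) (hkn : k ≤ n)
    {u : Fin n → Fin n}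
    (hinj : ∀ j1 j2 : Fin n, (j1 : ℕ) < k → (j2 : ℕ) < k → u j1 = u j2 → j1 = j2) :
    Measure.pi (fun _ : Fin n => uniformFinset (Finset.powersetCard 2 Finset.univ))
      (edgeCyl n k u) ≤ (2 / n) ^ k := by
  classical
  haveI : IsProbabilityMeasure
      (uniformFinset (Finset.powersetCard 2 (Finset.univ : Finset (Fin n)))) := by
    refine uniformFinset_isProb ?_
    obtain ⟨t, -, ht⟩ := Finset.exists_subset_card_eq
      (s := (Finset.univ : Finset (Fin n))) (n := 2) (by simpa using hn)
    exact ⟨t, Finset.mem_powersetCard.mpr ⟨Finset.subset_univ t, ht⟩⟩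
  set F : Finset (Fin n) :=
    Finset.image (fun j : Fin k => u (Fin.castLE hkn j)) Finset.univ with hF
  have hcard : F.card = k := by
    rw [hF, Finset.card_image_of_injective _ ?_, Finset.card_univ, Fintype.card_fin]
    intro j1 j2 h
    have := hinj (Fin.castLE hkn j1) (Fin.castLE hkn j2)
      (by simpa using j1.isLt) (by simpa using j2.isLt) h
    exact Fin.ext (by simpa using congrArg Fin.val this)
  refine le_trans (pi_prob_le _ _ F (2 / n) ?_) (le_of_eq (by rw [hcard]))
  intro x hx
  rw [hF, Finset.mem_image] at hx
  obtain ⟨j, -, rfl⟩ := hx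
  have hjk : ((Fin.castLE hkn j : Fin n) : ℕ) < k := by simpa using j.isLt
  have hj'lt : ((j : ℕ) + 1) % k < n := lt_of_lt_of_le (Nat.mod_lt _ (by omega)) hkn
  set j' : Fin n := ⟨((j : ℕ) + 1) % k, hj'lt⟩ with hj'
  refine le_trans (measure_mono ?_) (uniform_pc2_mem_le hn (u j'))
  intro s hs
  exact hs (Fin.castLE hkn j) j' hjk (by simp [hj']) rfl

theorem ownCyl_le {n k : ℕ} (hk1 : 1 ≤ k) (hkn : k ≤ n) {u : Fin n → Fin n} (c : ℤ)
    (hinj : ∀ j1 j2 : Fin n, (j1 : ℕ) < k → (j2 : ℕ) < k → u j1 = u j2 → j1 = j2) :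
    Measure.pi (fun _ : Fin n => uniformFinset ({-1, 1} : Finset ℤ))
      (ownCyl n k u c) ≤ 2⁻¹ ^ k := by
  classical
  haveI : IsProbabilityMeasure (uniformFinset ({-1, 1} : Finset ℤ)) :=
    uniformFinset_isProb ⟨-1, by simp⟩
  set F : Finset (Fin n) :=
    Finset.image (fun j : Fin k => u (Fin.castLE hkn j)) Finset.univ with hF
  have hcard : F.card = k := by
    rw [hF, Finset.card_image_of_injective _ ?_, Finset.card_univ, Fintype.card_fin]
    intro j1 j2 h
    have := hinj (Fin.castLE hkn j1) (Fin.castLE hkn j2)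
      (by simpa using j1.isLt) (by simpa using j2.isLt) h
    exact Fin.ext (by simpa using congrArg Fin.val this)
  refine le_trans (pi_prob_le _ _ F 2⁻¹ ?_) (le_of_eq (by rw [hcard]))
  intro x hx
  rw [hF, Finset.mem_image] at hx
  obtain ⟨j, -, rfl⟩ := hx
  have hjk : ((Fin.castLE hkn j : Fin n) : ℕ) < k := by simpa using j.isLt
  refine le_trans (measure_mono ?_) (uniform_pm_le c)
  intro z hz
  exact hz (Fin.castLE hkn j) hjk rfl

theorem cycEvent_le {n k : ℕ} (hn : 2 ≤ n) (hk1 : 1 ≤ k) (hkn : k ≤ n)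
    {u : Fin n → Fin n} (c : ℤ) (P : Measure ℕ) [IsProbabilityMeasure P]
    (hinj : ∀ j1 j2 : Fin n, (j1 : ℕ) < k → (j2 : ℕ) < k → u j1 = u j2 → j1 = j2) :
    gameMeasure n 2 P (cycEvent n k u c) ≤ (2 / n) ^ k * 2⁻¹ ^ k := by
  classical
  haveI h1 : IsProbabilityMeasure
      (uniformFinset (Finset.powersetCard 2 (Finset.univ : Finset (Fin n)))) := by
    refine uniformFinset_isProb ?_
    obtain ⟨t, -, ht⟩ := Finset.exists_subset_card_eq
      (s := (Finset.univ : Finset (Fin n))) (n := 2) (by simpa using hn)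
    exact ⟨t, Finset.mem_powersetCard.mpr ⟨Finset.subset_univ t, ht⟩⟩
  haveI h2 : IsProbabilityMeasure (uniformFinset ({-1, 1} : Finset ℤ)) :=
    uniformFinset_isProb ⟨-1, by simp⟩
  rw [gameMeasure, cycEvent, Measure.prod_prod, Measure.prod_prod, measure_univ, mul_one]
  exact mul_le_mul' (edgeCyl_le hn hk1 hkn hinj) (ownCyl_le hk1 hkn c hinj)

def badOwner (n : ℕ) (v : Fin n) : Set (GameSample n) :=
  Set.univ ×ˢ ({g : Fin n → ℤ | g v ∈ {z : ℤ | z ≠ -1 ∧ z ≠ 1}} ×ˢ Set.univ)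

theorem badOwner_zero {n : ℕ} (hn : 2 ≤ n) (v : Fin n) (P : Measure ℕ)
    [IsProbabilityMeasure P] : gameMeasure n 2 P (badOwner n v) = 0 := by
  classical
  haveI h1 : IsProbabilityMeasure
      (uniformFinset (Finset.powersetCard 2 (Finset.univ : Finset (Fin n)))) := by
    refine uniformFinset_isProb ?_
    obtain ⟨t, -, ht⟩ := Finset.exists_subset_card_eq
      (s := (Finset.univ : Finset (Fin n))) (n := 2) (by simpa using hn)
    exact ⟨t, Finset.mem_powersetCard.mpr ⟨Finset.subset_univ t, ht⟩⟩
  haveI h2 : IsProbabilityMeasure (uniformFinset ({-1, 1} : Finset ℤ)) :=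
    uniformFinset_isProb ⟨-1, by simp⟩
  rw [gameMeasure, badOwner, Measure.prod_prod, Measure.prod_prod]
  refine le_antisymm ?_ zero_le
  have hz : (Measure.pi fun _ : Fin n => uniformFinset ({-1, 1} : Finset ℤ))
      {g | g v ∈ {z : ℤ | z ≠ -1 ∧ z ≠ 1}} = 0 := by
    refine le_antisymm (le_trans (pi_coord_le _ v _) (le_of_eq uniform_pm_zero')) zero_le
  rw [hz, zero_mul, mul_zero]

open scoped Classical in
noncomputable def goodU (n k : ℕ) (v : Fin n) : Finset (Fin n → Fin n) :=
  Finset.univ.filter (fun u =>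
    (∀ j1 j2 : Fin n, (j1 : ℕ) < k → (j2 : ℕ) < k → u j1 = u j2 → j1 = j2) ∧
    (∀ j : Fin n, k ≤ (j : ℕ) → u j = v) ∧
    (∀ j : Fin n, (j : ℕ) = 0 → u j = v))

theorem mem_goodU {n k : ℕ} {v : Fin n} {u : Fin n → Fin n} :
    u ∈ goodU n k v ↔
    (∀ j1 j2 : Fin n, (j1 : ℕ) < k → (j2 : ℕ) < k → u j1 = u j2 → j1 = j2) ∧
    (∀ j : Fin n, k ≤ (j : ℕ) → u j = v) ∧
    (∀ j : Fin n, (j : ℕ) = 0 → u j = v) := by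
  classical
  simp [goodU]

theorem goodU_card_one {n : ℕ} (v : Fin n) : (goodU n 1 v).card ≤ 1 := by
  refine Finset.card_le_one.mpr fun a ha b hb => ?_
  rw [mem_goodU] at ha hb
  funext j
  rcases Nat.eq_zero_or_pos (j : ℕ) with h | h
  · rw [ha.2.2 j h, hb.2.2 j h]
  · rw [ha.2.1 j h, hb.2.1 j h]

theorem goodU_card_succ {n k : ℕ} {v : Fin n} (hk1 : 1 ≤ k) (hkn : k < n) :
    (goodU n (k + 1) v).card ≤ (n - k) * (goodU n k v).card := by
  classical
  set Φ : (Fin n → Fin n) → (Fin n → Fin n) :=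
    fun u j => if (j : ℕ) < k then u j else v with hΦ
  have hmaps : ∀ u ∈ goodU n (k + 1) v, Φ u ∈ goodU n k v := by
    intro u hu
    rw [mem_goodU] at hu ⊢
    refine ⟨?_, ?_, ?_⟩
    · intro j1 j2 h1 h2 he
      rw [hΦ] at he
      simp only [h1, h2, if_pos] at he
      exact hu.1 j1 j2 (by omega) (by omega) he
    · intro j hj
      rw [hΦ]; simp [Nat.not_lt.mpr hj]
    · intro j hj
      rw [hΦ]; simp only [hj, if_pos (by omega : (0:ℕ) < k)]
      exact hu.2.2 j hj
  refine Finset.card_le_mul_card_image_of_maps_to hmaps (n - k) ?_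
  intro b hb
  rw [mem_goodU] at hb
  set T : Finset (Fin n) := Finset.univ \
    Finset.image (fun j : Fin k => b (Fin.castLE hkn.le j)) Finset.univ with hT
  have hTcard : T.card = n - k := by
    rw [hT, Finset.card_sdiff_of_subset (Finset.subset_univ _), Finset.card_univ, Fintype.card_fin,
      Finset.card_image_of_injective _ ?_, Finset.card_univ, Fintype.card_fin]
    intro j1 j2 h
    have := hb.1 (Fin.castLE hkn.le j1) (Fin.castLE hkn.le j2)
      (by simpa using j1.isLt) (by simpa using j2.isLt) h
    exact Fin.ext (by simpa using congrArg Fin.val this)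
  rw [← hTcard]
  refine Finset.card_le_card_of_injOn (fun u => u ⟨k, hkn⟩) ?_ ?_
  · intro u hu
    simp only [Finset.mem_coe, Finset.mem_filter] at hu ⊢
    obtain ⟨hu1, hu2⟩ := hu
    rw [mem_goodU] at hu1
    rw [hT, Finset.mem_sdiff]
    refine ⟨Finset.mem_univ _, ?_⟩
    rw [Finset.mem_image]
    rintro ⟨j, -, hj⟩
    have hbj : b (Fin.castLE hkn.le j) = Φ u (Fin.castLE hkn.le j) := by rw [hu2]
    have hlt : ((Fin.castLE hkn.le j : Fin n) : ℕ) < k := by simpa using j.isLt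
    rw [hbj, hΦ] at hj
    simp only [hlt, if_pos] at hj
    have := hu1.1 ⟨k, hkn⟩ (Fin.castLE hkn.le j)
      (by simp)
      (by simp only [Fin.coe_castLE]; exact Nat.lt_succ_of_lt j.isLt) hj.symm
    have h2 := congrArg Fin.val this
    have h3 := j.isLt
    simp at h2
    omega
  · intro u1 hu1 u2 hu2 he
    simp only [Finset.mem_coe, Finset.mem_filter] at hu1 hu2
    obtain ⟨hm1, hf1⟩ := hu1
    obtain ⟨hm2, hf2⟩ := hu2
    rw [mem_goodU] at hm1 hm2
    funext j
    rcases Nat.lt_trichotomy (j : ℕ) k with h | h | h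
    · have := congrFun (hf1.trans hf2.symm) j
      rw [hΦ] at this
      simpa only [h, if_pos] using this
    · have hjk : j = ⟨k, hkn⟩ := Fin.ext (by simpa using h)
      rw [hjk]; exact he
    · have e1 := hm1.2.1 j h
      have e2 := hm2.2.1 j h
      rw [e1, e2]

theorem goodU_card_le_pow {n : ℕ} (v : Fin n) :
    ∀ k, 1 ≤ k → k ≤ n → (goodU n k v).card ≤ n ^ (k - 1) := by
  intro k hk1
  induction k, hk1 using Nat.le_induction with
  | base => intro _; simpa using goodU_card_one v
  | succ k hk ih =>
    intro hk1n
    have hkn : k < n := by omega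
    calc (goodU n (k + 1) v).card ≤ (n - k) * (goodU n k v).card :=
          goodU_card_succ hk hkn
      _ ≤ n * n ^ (k - 1) := Nat.mul_le_mul (by omega) (ih (by omega))
      _ = n ^ (k - 1 + 1) := (pow_succ' n (k - 1)).symm
      _ = n ^ (k + 1 - 1) := by congr 1; omega

theorem goodU_card_le {n K : ℕ} (v : Fin n) (hK : 1 ≤ K) :
    ∀ k, K ≤ k → k ≤ n → (goodU n k v).card ≤ n ^ (K - 1) * (n - K) ^ (k - K) := by
  intro k hKk
  induction k, hKk using Nat.le_induction with
  | base =>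
    intro hKn
    simpa using goodU_card_le_pow v K hK hKn
  | succ k hKk ih =>
    intro hk1n
    have hkn : k < n := by omega
    calc (goodU n (k + 1) v).card ≤ (n - k) * (goodU n k v).card :=
          goodU_card_succ (le_trans hK hKk) hkn
      _ ≤ (n - K) * (n ^ (K - 1) * (n - K) ^ (k - K)) :=
          Nat.mul_le_mul (by omega) (ih (by omega))
      _ = n ^ (K - 1) * ((n - K) ^ (k - K) * (n - K)) := by ring
      _ = n ^ (K - 1) * (n - K) ^ (k - K + 1) := by rw [pow_succ]
      _ = n ^ (K - 1) * (n - K) ^ (k + 1 - K) := by rw [Nat.sub_add_comm hKk]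

theorem event_subset {n : ℕ} (hn : 2 ≤ n) (v : Fin n) :
    {ω : GameSample n | SelfWinningNode (sampleE ω) ω.2.1 ω.2.2 v} ⊆
      badOwner n v ∪ ⋃ k ∈ Finset.Icc 1 n, ⋃ u ∈ goodU n k v,
        ⋃ c ∈ ({-1, 1} : Finset ℤ), cycEvent n k u c := by
  intro ω hω
  by_cases hbad : ω.2.1 v = -1 ∨ ω.2.1 v = 1
  · right
    obtain ⟨k, hk1, w, hw0, hcl, hedge, hown, hinj⟩ := exists_simple_cycle hω
    have hkn : k ≤ n := by
      have hwinj : Function.Injective (fun j : Fin k => w j) := fun j1 j2 h =>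
        Fin.ext (hinj _ j1.isLt _ j2.isLt h)
      simpa using Fintype.card_le_of_injective _ hwinj
    set u : Fin n → Fin n := fun j => if (j : ℕ) < k then w (j : ℕ) else v with hu
    have huval : ∀ j : Fin n, (j : ℕ) < k → u j = w (j : ℕ) := by
      intro j hj; rw [hu]; simp [hj]
    refine Set.mem_iUnion₂.mpr ⟨k, Finset.mem_Icc.mpr ⟨hk1, hkn⟩, ?_⟩
    refine Set.mem_iUnion₂.mpr ⟨u, ?_, ?_⟩
    · rw [mem_goodU]
      refine ⟨?_, ?_, ?_⟩
      · intro j1 j2 h1 h2 he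
        rw [huval j1 h1, huval j2 h2] at he
        exact Fin.ext (hinj _ h1 _ h2 he)
      · intro j hj; rw [hu]; simp [Nat.not_lt.mpr hj]
      · intro j hj
        rw [huval j (by omega)]
        rw [hj, hw0]
    refine Set.mem_iUnion₂.mpr ⟨ω.2.1 v, by simpa using hbad, ?_⟩
    refine ⟨mem_edgeCyl.mpr ?_, mem_ownCyl.mpr ?_, Set.mem_univ _⟩
    · intro j j' hj hj'
      have hj'k : (j' : ℕ) < k := by rw [hj']; exact Nat.mod_lt _ (by omega)
      rw [huval j hj, huval j' hj'k, hj']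
      rcases Nat.lt_or_ge ((j : ℕ) + 1) k with h | h
      · rw [Nat.mod_eq_of_lt h]
        exact hedge _ hj
      · have hjk : (j : ℕ) + 1 = k := by omega
        rw [hjk, Nat.mod_self, ← hcl, ← hjk]
        exact hedge _ hj
    · intro j hj
      rw [huval j hj]
      exact hown _ hj
  · left
    push_neg at hbad
    exact ⟨Set.mem_univ _, hbad, Set.mem_univ _⟩

theorem measure_le_sum {n : ℕ} (hn : 2 ≤ n) (v : Fin n) (P : Measure ℕ)
    [IsProbabilityMeasure P] :
    gameMeasure n 2 P {ω | SelfWinningNode (sampleE ω) ω.2.1 ω.2.2 v} ≤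
      ∑ k ∈ Finset.Icc 1 n,
        ((goodU n k v).card : ENNReal) * (2 * ((2 / n) ^ k * 2⁻¹ ^ k)) := by
  refine le_trans (measure_mono (event_subset hn v)) ?_
  refine le_trans (measure_union_le _ _) ?_
  rw [badOwner_zero hn v P, zero_add]
  refine le_trans (measure_biUnion_finset_le _ _) (Finset.sum_le_sum fun k hk => ?_)
  rw [Finset.mem_Icc] at hk
  refine le_trans (measure_biUnion_finset_le _ _) ?_
  have hbnd : ∀ u ∈ goodU n k v,
      gameMeasure n 2 P (⋃ c ∈ ({-1, 1} : Finset ℤ), cycEvent n k u c) ≤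
        2 * ((2 / n) ^ k * 2⁻¹ ^ k) := by
    intro u hu
    refine le_trans (measure_biUnion_finset_le _ _) ?_
    have : ∀ c ∈ ({-1, 1} : Finset ℤ), gameMeasure n 2 P (cycEvent n k u c) ≤
        (2 / n) ^ k * 2⁻¹ ^ k := by
      intro c _
      exact cycEvent_le hn hk.1 hk.2 c P (mem_goodU.mp hu).1
    refine le_trans (Finset.sum_le_sum this) ?_
    rw [Finset.sum_const]
    have : ({-1, 1} : Finset ℤ).card = 2 := by decide
    rw [this, nsmul_eq_mul]
    norm_num
  refine le_trans (Finset.sum_le_sum hbnd) ?_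
  rw [Finset.sum_const, nsmul_eq_mul]

theorem sum_bound {n : ℕ} (hn : 2 ≤ n) (v : Fin n) :
    ∑ k ∈ Finset.Icc 1 n,
        ((goodU n k v).card : ENNReal) * (2 * ((2 / n) ^ k * 2⁻¹ ^ k)) ≤
      2 * (Nat.sqrt n) * (n : ENNReal)⁻¹ + 2 * ((Nat.sqrt n : ENNReal))⁻¹ := by
  set K := Nat.sqrt n with hKdef
  have hK1 : 1 ≤ K := by
    rw [hKdef]
    exact Nat.one_le_iff_ne_zero.mpr fun h => by
      have := Nat.sqrt_eq_zero.mp h ; omega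
  have hKn : K ≤ n := Nat.sqrt_le_self n
  have hn0 : (n : ENNReal) ≠ 0 := by exact_mod_cast (by omega : n ≠ 0)
  have hnt : (n : ENNReal) ≠ ⊤ := ENNReal.natCast_ne_top n
  -- simplify the per-k factor
  have hfac : ∀ k : ℕ, (2 / (n : ENNReal)) ^ k * 2⁻¹ ^ k = ((n : ENNReal)⁻¹) ^ k := by
    intro k
    rw [← mul_pow]
    congr 1
    rw [div_eq_mul_inv, mul_comm (2 : ENNReal), mul_assoc,
      ENNReal.mul_inv_cancel (by norm_num) (by norm_num), mul_one]
  -- split the sum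
  have hsplit : Finset.Icc 1 n = Finset.Icc 1 K ∪ Finset.Ioc K n := by
    rw [show (1 : ℕ) = 0 + 1 from rfl, Finset.Icc_add_one_left_eq_Ioc, Finset.Icc_add_one_left_eq_Ioc, Finset.Ioc_union_Ioc_eq_Ioc (by omega) hKn]
  have hdisj : Disjoint (Finset.Icc 1 K) (Finset.Ioc K n) := by
    rw [Finset.disjoint_left]
    intro x hx hx'
    rw [Finset.mem_Icc] at hx
    rw [Finset.mem_Ioc] at hx'
    omega
  rw [hsplit, Finset.sum_union hdisj]
  have hmulpow : ((n : ENNReal)) * (n : ENNReal)⁻¹ = 1 :=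
    ENNReal.mul_inv_cancel hn0 hnt
  refine add_le_add ?_ ?_
  · -- small k
    have hterm : ∀ k ∈ Finset.Icc 1 K,
        ((goodU n k v).card : ENNReal) * (2 * ((2 / n) ^ k * 2⁻¹ ^ k)) ≤
          2 * (n : ENNReal)⁻¹ := by
      intro k hk
      rw [Finset.mem_Icc] at hk
      have hcard : ((goodU n k v).card : ENNReal) ≤ (n : ENNReal) ^ (k - 1) := by
        exact_mod_cast goodU_card_le_pow v k hk.1 (le_trans hk.2 hKn)
      rw [hfac k]
      calc ((goodU n k v).card : ENNReal) * (2 * ((n : ENNReal)⁻¹) ^ k)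
          ≤ (n : ENNReal) ^ (k - 1) * (2 * ((n : ENNReal)⁻¹) ^ k) :=
            mul_le_mul_left hcard _
        _ = 2 * ((n : ENNReal) ^ (k - 1) * ((n : ENNReal)⁻¹) ^ k) := by ring
        _ = 2 * (n : ENNReal)⁻¹ := by
            congr 1
            have hk' : k = (k - 1) + 1 := by omega
            rw [hk', pow_succ]
            simp only [Nat.add_sub_cancel]
            rw [← mul_assoc, ← mul_pow, hmulpow, one_pow, one_mul]
    refine le_trans (Finset.sum_le_sum hterm) ?_
    rw [Finset.sum_const, Nat.card_Icc, nsmul_eq_mul]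
    have hKK : (K + 1 - 1 : ℕ) = K := by omega
    rw [hKK]
    exact le_of_eq (by ring)
  · -- large k
    set r : ENNReal := ((n - K : ℕ) : ENNReal) * (n : ENNReal)⁻¹ with hr
    have hterm : ∀ k ∈ Finset.Ioc K n,
        ((goodU n k v).card : ENNReal) * (2 * ((2 / n) ^ k * 2⁻¹ ^ k)) ≤
          2 * (n : ENNReal)⁻¹ * r ^ (k - K) := by
      intro k hk
      rw [Finset.mem_Ioc] at hk
      have hcard : ((goodU n k v).card : ENNReal) ≤
          (n : ENNReal) ^ (K - 1) * ((n - K : ℕ) : ENNReal) ^ (k - K) := by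
        exact_mod_cast goodU_card_le v hK1 k (le_of_lt hk.1) hk.2
      rw [hfac k]
      calc ((goodU n k v).card : ENNReal) * (2 * ((n : ENNReal)⁻¹) ^ k)
          ≤ ((n : ENNReal) ^ (K - 1) * ((n - K : ℕ) : ENNReal) ^ (k - K)) *
              (2 * ((n : ENNReal)⁻¹) ^ k) := mul_le_mul_left hcard _
        _ = 2 * (n : ENNReal)⁻¹ *
              (((n : ENNReal) * (n : ENNReal)⁻¹) ^ (K - 1) * r ^ (k - K)) := by
            have h1 : ((n : ENNReal))⁻¹ ^ k =
                (n : ENNReal)⁻¹ ^ (K - 1) * (n : ENNReal)⁻¹ *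
                  (n : ENNReal)⁻¹ ^ (k - K) := by
              rw [mul_assoc, ← pow_succ']
              rw [← pow_add]
              congr 1
              omega
            rw [h1, hr, mul_pow, mul_pow]
            ring
        _ = 2 * (n : ENNReal)⁻¹ * r ^ (k - K) := by
            rw [hmulpow, one_pow, one_mul]
    refine le_trans (Finset.sum_le_sum hterm) ?_
    rw [← Finset.mul_sum]
    -- geometric bound
    have hgeo : ∑ k ∈ Finset.Ioc K n, r ^ (k - K) ≤ (1 - r)⁻¹ := by
      have himg : ∑ k ∈ Finset.Ioc K n, r ^ (k - K) =
          ∑ m ∈ (Finset.Ioc K n).image (· - K), r ^ m := by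
        rw [Finset.sum_image]
        intro x hx y hy hxy
        rw [Finset.mem_coe, Finset.mem_Ioc] at hx hy
        simp only at hxy
        omega
      rw [himg, ← ENNReal.tsum_geometric r]
      exact ENNReal.sum_le_tsum _
    have hone : 1 - r = (K : ENNReal) * (n : ENNReal)⁻¹ := by
      refine ENNReal.sub_eq_of_eq_add ?_ ?_
      · rw [hr]
        exact ENNReal.mul_ne_top (ENNReal.natCast_ne_top _) (ENNReal.inv_ne_top.mpr hn0)
      · rw [hr, ← add_mul, ← Nat.cast_add]
        have : (K + (n - K) : ℕ) = n := by omega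
        rw [this]
        exact hmulpow.symm
    have hKne0 : (K : ENNReal) ≠ 0 := by exact_mod_cast (by omega : K ≠ 0)
    have hinv : (1 - r)⁻¹ = (n : ENNReal) * (K : ENNReal)⁻¹ := by
      rw [hone, ENNReal.mul_inv (Or.inl hKne0) (Or.inl (ENNReal.natCast_ne_top K)),
        inv_inv, mul_comm]
    calc 2 * (n : ENNReal)⁻¹ * ∑ k ∈ Finset.Ioc K n, r ^ (k - K)
        ≤ 2 * (n : ENNReal)⁻¹ * ((n : ENNReal) * (K : ENNReal)⁻¹) := by
          rw [← hinv]; exact mul_le_mul_right hgeo _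
      _ = 2 * (K : ENNReal)⁻¹ * ((n : ENNReal)⁻¹ * (n : ENNReal)) := by ring
      _ = 2 * (K : ENNReal)⁻¹ := by rw [mul_comm ((n : ENNReal)⁻¹), hmulpow, mul_one]

theorem main_bound {n : ℕ} (hn : 2 ≤ n) (v : Fin n) (P : Measure ℕ)
    [IsProbabilityMeasure P] :
    gameMeasure n 2 P {ω | SelfWinningNode (sampleE ω) ω.2.1 ω.2.2 v} ≤
      4 * ((Nat.sqrt n : ENNReal))⁻¹ := by
  refine le_trans (le_trans (measure_le_sum hn v P) (sum_bound hn v)) ?_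
  set K := Nat.sqrt n with hKdef
  have hK1 : 1 ≤ K := by
    rw [hKdef]
    exact Nat.one_le_iff_ne_zero.mpr fun h => by
      have := Nat.sqrt_eq_zero.mp h; omega
  have hKne0 : (K : ENNReal) ≠ 0 := by exact_mod_cast (by omega : K ≠ 0)
  have hKnet : (K : ENNReal) ≠ ⊤ := ENNReal.natCast_ne_top K
  have hsq : ((K * K : ℕ) : ENNReal) ≤ (n : ENNReal) := by
    exact_mod_cast Nat.sqrt_le n
  have hfirst : 2 * (K : ENNReal) * (n : ENNReal)⁻¹ ≤ 2 * ((K : ENNReal))⁻¹ := by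
    have hmono : (n : ENNReal)⁻¹ ≤ ((K * K : ℕ) : ENNReal)⁻¹ :=
      ENNReal.inv_le_inv' hsq
    calc 2 * (K : ENNReal) * (n : ENNReal)⁻¹
        ≤ 2 * (K : ENNReal) * ((K * K : ℕ) : ENNReal)⁻¹ := mul_le_mul_right hmono _
      _ = 2 * ((K : ENNReal) * ((K : ENNReal) * (K : ENNReal))⁻¹) := by
          rw [Nat.cast_mul, mul_assoc]
      _ = 2 * ((K : ENNReal) * ((K : ENNReal)⁻¹ * (K : ENNReal)⁻¹)) := by
          rw [ENNReal.mul_inv (Or.inl hKne0) (Or.inl hKnet)]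
      _ = 2 * (((K : ENNReal) * (K : ENNReal)⁻¹) * (K : ENNReal)⁻¹) := by ring
      _ = 2 * ((K : ENNReal))⁻¹ := by
          rw [ENNReal.mul_inv_cancel hKne0 hKnet, one_mul]
  calc 2 * (K : ENNReal) * (n : ENNReal)⁻¹ + 2 * ((K : ENNReal))⁻¹
      ≤ 2 * ((K : ENNReal))⁻¹ + 2 * ((K : ENNReal))⁻¹ := add_le_add_left hfirst _
    _ = 4 * ((K : ENNReal))⁻¹ := by ring

/-- **self-winning nodes are rare for `d = 2`.** Let `P` be a
probability distribution on ℕ giving mass `1/2` to the even numbers and `1/2` to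
the odd numbers. Sample a parity game from `G(n, 2)` (node set `Fin (n+2)`, so
`n ≥ 2` nodes) and fix the node `v = 0`. Then the probability that `v` is
self-winning tends to `0` as the number of nodes tends to infinity. -/
theorem selfWinning_probability_tendsto_zero (P : Measure ℕ) [IsProbabilityMeasure P]
    (hPeven : P {k | Even k} = 1 / 2) (hPodd : P {k | Odd k} = 1 / 2) :
    Filter.Tendsto
      (fun n : ℕ => gameMeasure (n + 2) 2 P
        {ω : GameSample (n + 2) |
          SelfWinningNode (sampleE ω) ω.2.1 ω.2.2 0})
      Filter.atTop (nhds 0) := by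
  have hb : ∀ n : ℕ, gameMeasure (n + 2) 2 P
      {ω : GameSample (n + 2) | SelfWinningNode (sampleE ω) ω.2.1 ω.2.2 0} ≤
      4 * ((Nat.sqrt (n + 2) : ℕ) : ENNReal)⁻¹ :=
    fun n => main_bound (by omega) 0 P
  have h2 : Filter.Tendsto (fun n : ℕ => Nat.sqrt (n + 2)) Filter.atTop Filter.atTop :=
    Filter.tendsto_atTop_atTop.mpr fun b =>
      ⟨b * b, fun a ha => Nat.le_sqrt.mpr (by omega)⟩
  have h3 : Filter.Tendsto (fun n : ℕ => ((Nat.sqrt (n + 2) : ℕ) : ENNReal)⁻¹)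
      Filter.atTop (nhds 0) := ENNReal.tendsto_inv_nat_nhds_zero.comp h2
  have h4 : Filter.Tendsto (fun n : ℕ => 4 * ((Nat.sqrt (n + 2) : ℕ) : ENNReal)⁻¹)
      Filter.atTop (nhds 0) := by
    have := ENNReal.Tendsto.const_mul h3 (Or.inr (by norm_num : (4 : ENNReal) ≠ ⊤))
    simpa using this
  exact tendsto_of_tendsto_of_tendsto_of_le_of_le tendsto_const_nhds h4
    (fun n => zero_le) (fun n => hb n)
end
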